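/- arXiv:1908.10491 — 2 statements merged into one kernel-verified Lean document; each statement's English description precedes it below -/
import Mathlib

section
/- The graph G₇ is not an IP-SEG* graph, i.e., G₇ admits no IP-SEG* model. -/
/-- A segment between the horizontal lines `L₁ = {y = 1}` and `L₂ = {y = 2}`,
given by its two endpoints, each of which lies on `L₁` or `L₂`. -/
structure IPSeg where
  p : ℝ × ℝ
  q : ℝ × ℝ
  hp : p.2 = 1 ∨ p.2 = 2
  hq : q.2 = 1 ∨ q.2 = 2

namespace IPSeg

/-- The closed line segment in `ℝ²` determined by the two endpoints. -/
def carrier (s : IPSeg) : Set (ℝ × ℝ) := segment ℝ s.p s.q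

/-- An interval segment: both endpoints on the same horizontal line. -/
def IsInterval (s : IPSeg) : Prop := s.p.2 = s.q.2

/-- A permutation segment: one endpoint on each horizontal line. -/
def IsPermutation (s : IPSeg) : Prop := s.p.2 ≠ s.q.2

/-- The (set of) endpoints of the segment. -/
def endpoints (s : IPSeg) : Set (ℝ × ℝ) := {s.p, s.q}

end IPSeg

/-- An IP-SEG model of a graph: distinct vertices are adjacent iff their segments meet. -/
def IsIPSEGModel {V : Type*} (G : SimpleGraph V) (s : V → IPSeg) : Prop :=
  ∀ u v : V, u ≠ v → (G.Adj u v ↔ ((s u).carrier ∩ (s v).carrier).Nonempty)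

/-- An IP-SEG* model: an IP-SEG model in which all interval segments lie on one line. -/
def IsIPSEGStarModel {V : Type*} (G : SimpleGraph V) (s : V → IPSeg) : Prop :=
  IsIPSEGModel G s ∧
    ∃ c : ℝ, (c = 1 ∨ c = 2) ∧ ∀ v : V, (s v).IsInterval → (s v).p.2 = c

/-- The graph `Gₙ` on `3n` vertices: a chordless cycle on the vertices `(i, 0)`
(`i ∈ ZMod n`), together with a pendant vertex `(i, 1)` attached to `(i, 0)` and a
pendant vertex `(i, 2)` attached to `(i, 1)`, for each `i`. -/
def GGraph (n : ℕ) : SimpleGraph (ZMod n × Fin 3) :=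
  SimpleGraph.fromRel (fun x y =>
    (x.2 = 0 ∧ y.2 = 0 ∧ y.1 = x.1 + 1) ∨
    (x.2 = 0 ∧ y.2 = 1 ∧ y.1 = x.1) ∨
    (x.2 = 1 ∧ y.2 = 2 ∧ y.1 = x.1))


namespace G7aux

instance : DecidableRel (GGraph 7).Adj := fun x y =>
  decidable_of_iff' _ (SimpleGraph.fromRel_adj _ x y)

abbrev V7 := ZMod 7 × Fin 3

def Cv (i : ZMod 7) : V7 := (i, 0)
def Wv (i : ZMod 7) : V7 := (i, 1)
def Zv (i : ZMod 7) : V7 := (i, 2)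

/-- Abstract combinatorial data extracted from an IP-SEG* model. -/
structure AModel where
  P : V7 → Prop
  a : V7 → ℝ
  b : V7 → ℝ
  h : V7 → ℝ
  hab : ∀ v, a v ≤ b v
  hpt : ∀ v, P v → a v = b v
  hadj : ∀ u v, u ≠ v → ((GGraph 7).Adj u v ↔
    ((a u ≤ b v ∧ a v ≤ b u) ∨ (P u ∧ P v ∧ (a u - a v) * (h u - h v) ≤ 0)))

def ovl (M : AModel) (u v : V7) : Prop := M.a u ≤ M.b v ∧ M.a v ≤ M.b u

variable (M : AModel)

lemma ovl_of_mem {u v : V7} {x : ℝ} (hu : M.a u ≤ x ∧ x ≤ M.b u)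
    (hv : M.a v ≤ x ∧ x ≤ M.b v) : ovl M u v :=
  ⟨hu.1.trans hv.2, hv.1.trans hu.2⟩

lemma mem_of_ovl {u v : V7} (h : ovl M u v) :
    (M.a u ≤ max (M.a u) (M.a v) ∧ max (M.a u) (M.a v) ≤ M.b u) ∧
    (M.a v ≤ max (M.a u) (M.a v) ∧ max (M.a u) (M.a v) ≤ M.b v) :=
  ⟨⟨le_max_left _ _, max_le (M.hab u) h.2⟩, ⟨le_max_right _ _, max_le h.1 (M.hab v)⟩⟩

lemma adj_of_ovl {u v : V7} (hne : u ≠ v) (h : ovl M u v) : (GGraph 7).Adj u v :=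
  (M.hadj u v hne).2 (Or.inl h)

lemma novl_of_nonadj {u v : V7} (hne : u ≠ v) (h : ¬ (GGraph 7).Adj u v) : ¬ ovl M u v :=
  fun ho => h (adj_of_ovl M hne ho)

lemma ovl_of_adj {u v : V7} (hne : u ≠ v) (hint : ¬ M.P u ∨ ¬ M.P v)
    (h : (GGraph 7).Adj u v) : ovl M u v := by
  rcases (M.hadj u v hne).1 h with h' | h'
  · exact h'
  · rcases hint with hi | hi
    · exact absurd h'.1 hi
    · exact absurd h'.2.1 hi

lemma adj_pp {u v : V7} (hne : u ≠ v) (hu : M.P u) (hv : M.P v) :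
    (GGraph 7).Adj u v ↔ (M.a u - M.a v) * (M.h u - M.h v) ≤ 0 := by
  constructor
  · intro h
    rcases (M.hadj u v hne).1 h with h' | h'
    · have h1 := M.hpt u hu; have h2 := M.hpt v hv
      have : M.a u = M.a v := le_antisymm (by linarith [h'.1]) (by linarith [h'.2])
      rw [this]; ring_nf; rfl
    · exact h'.2.2
  · intro h
    exact (M.hadj u v hne).2 (Or.inr ⟨hu, hv, h⟩)

lemma nonadj_prod_pos {u v : V7} (hne : u ≠ v) (hu : M.P u) (hv : M.P v)
    (h : ¬ (GGraph 7).Adj u v) : 0 < (M.a u - M.a v) * (M.h u - M.h v) := by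
  by_contra h'
  exact h ((adj_pp M hne hu hv).2 (by linarith))

lemma align_ne {u v : V7} (hne : u ≠ v) (hu : M.P u) (hv : M.P v)
    (h : ¬ (GGraph 7).Adj u v) : M.a u ≠ M.a v := by
  intro he
  have := nonadj_prod_pos M hne hu hv h
  rw [he] at this; nlinarith

lemma align_lt {u v : V7} (hne : u ≠ v) (hu : M.P u) (hv : M.P v)
    (h : ¬ (GGraph 7).Adj u v) (hlt : M.a u < M.a v) : M.h u < M.h v := by
  have := nonadj_prod_pos M hne hu hv h
  nlinarith

lemma cross_heads {u v : V7} (hne : u ≠ v) (hu : M.P u) (hv : M.P v)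
    (hadj : (GGraph 7).Adj u v) (hlt : M.a u < M.a v) : M.h v ≤ M.h u := by
  have := (adj_pp M hne hu hv).1 hadj
  nlinarith

lemma trap {p q x : V7} (hnepq : p ≠ q) (hnexp : x ≠ p) (hnexq : x ≠ q)
    (hp : M.P p) (hq : M.P q) (hx : M.P x)
    (hadj : (GGraph 7).Adj p q) (hnp : ¬ (GGraph 7).Adj x p) (hnq : ¬ (GGraph 7).Adj x q)
    (hpq : M.a p < M.a q) : ¬ (M.a p < M.a x ∧ M.a x < M.a q) := by
  rintro ⟨h1, h2⟩
  have hh1 := align_lt M hnexp.symm hp hx (fun hh => hnp (hh.symm)) h1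
  have hh2 := align_lt M hnexq hx hq hnq h2
  have := (adj_pp M hnepq hp hq).1 hadj
  nlinarith

/-- A cross edge (adjacent, traces disjoint) has two permutation endpoints. -/
lemma cross_perm {u v : V7} (hne : u ≠ v) (hadj : (GGraph 7).Adj u v)
    (hno : ¬ ovl M u v) : M.P u ∧ M.P v := by
  rcases (M.hadj u v hne).1 hadj with h' | h'
  · exact absurd h' hno
  · exact ⟨h'.1, h'.2.1⟩


/-- The squeeze lemma: three consecutive interval cycle vertices, the middle one with
trace strictly inside the span of a crossing pair, is impossible (its pendant path
has nowhere to go). -/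
lemma squeeze (p q v1 v2 v3 w1 w2 w3 z2 : V7)
    (hPp : M.P p) (hPq : M.P q)
    (hadjpq : (GGraph 7).Adj p q) (hfpq : M.a p < M.a q)
    (hv1 : ¬ M.P v1) (hv2 : ¬ M.P v2) (hv3 : ¬ M.P v3)
    (hmid1 : M.a p < M.a v2) (hmid2 : M.b v2 < M.a q)
    (ha12 : (GGraph 7).Adj v1 v2) (ha23 : (GGraph 7).Adj v2 v3)
    (hn13 : ¬ (GGraph 7).Adj v1 v3) (hne13 : v1 ≠ v3)
    (haw1 : (GGraph 7).Adj w1 v1) (haw2 : (GGraph 7).Adj w2 v2) (haw3 : (GGraph 7).Adj w3 v3)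
    (hnw1v2 : ¬ (GGraph 7).Adj w1 v2) (hnew1v2 : w1 ≠ v2)
    (hnw2v1 : ¬ (GGraph 7).Adj w2 v1) (hnew2v1 : w2 ≠ v1)
    (hnw2v3 : ¬ (GGraph 7).Adj w2 v3) (hnew2v3 : w2 ≠ v3)
    (hnw3v2 : ¬ (GGraph 7).Adj w3 v2) (hnew3v2 : w3 ≠ v2)
    (haz : (GGraph 7).Adj w2 z2)
    (hnz1 : ¬ (GGraph 7).Adj z2 v1) (hnez1 : z2 ≠ v1)
    (hnz2 : ¬ (GGraph 7).Adj z2 v2) (hnez2 : z2 ≠ v2)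
    (hnz3 : ¬ (GGraph 7).Adj z2 v3) (hnez3 : z2 ≠ v3)
    (hnw2p : ¬ (GGraph 7).Adj w2 p) (hnew2p : w2 ≠ p)
    (hnw2q : ¬ (GGraph 7).Adj w2 q) (hnew2q : w2 ≠ q)
    (hnz2p : ¬ (GGraph 7).Adj z2 p) (hnez2p : z2 ≠ p)
    (hnz2q : ¬ (GGraph 7).Adj z2 q) (hnez2q : z2 ≠ q) : False := by
  have hnepq : p ≠ q := hadjpq.ne
  have hap : M.a p = M.b p := M.hpt p hPp
  have haq : M.a q = M.b q := M.hpt q hPq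
  -- w2 is an interval
  have hPw2 : ¬ M.P w2 := by
    intro hPw2
    have hov : ovl M w2 v2 := ovl_of_adj M haw2.ne (Or.inr hv2) haw2
    have hw2ab : M.a w2 = M.b w2 := M.hpt w2 hPw2
    have hfin : M.a v2 ≤ M.a w2 ∧ M.a w2 ≤ M.b v2 := ⟨by linarith [hov.2], by linarith [hov.1]⟩
    exact trap M hnepq hnew2p hnew2q hPp hPq hPw2 hadjpq hnw2p hnw2q hfpq
      ⟨by linarith, by linarith⟩
  -- common point of w2 and v2
  have hov2 : ovl M w2 v2 := ovl_of_adj M haw2.ne (Or.inl hPw2) haw2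
  set u := max (M.a w2) (M.a v2) with hu
  have hu2 := mem_of_ovl M hov2
  have huw2 : M.a w2 ≤ u ∧ u ≤ M.b w2 := hu2.1
  have huv2 : M.a v2 ≤ u ∧ u ≤ M.b v2 := hu2.2
  -- trace of w2 inside (a p, a q)
  have hw2l : M.a p < M.a w2 := by
    by_contra hle
    exact hnw2p (adj_of_ovl M hnew2p ⟨by linarith, by linarith⟩)
  have hw2r : M.b w2 < M.a q := by
    by_contra hle
    exact hnw2q (adj_of_ovl M hnew2q ⟨by linarith, by linarith⟩)
  -- z2 is an interval
  have hPz2 : ¬ M.P z2 := by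
    intro hPz2
    have hov : ovl M z2 w2 := ovl_of_adj M (fun e => haz.ne e.symm) (Or.inr hPw2) haz.symm
    have hz2ab : M.a z2 = M.b z2 := M.hpt z2 hPz2
    exact trap M hnepq hnez2p hnez2q hPp hPq hPz2 hadjpq hnz2p hnz2q hfpq
      ⟨by linarith [hov.2], by linarith [hov.1]⟩
  -- common point t of z2 and w2
  have hovz : ovl M w2 z2 := ovl_of_adj M haz.ne (Or.inl hPw2) haz
  set t := max (M.a w2) (M.a z2) with ht
  have ht2 := mem_of_ovl M hovz
  have htw2 : M.a w2 ≤ t ∧ t ≤ M.b w2 := ht2.1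
  have htz2 : M.a z2 ≤ t ∧ t ≤ M.b z2 := ht2.2
  -- t avoids the three interval traces
  have htv1 : ¬ (M.a v1 ≤ t ∧ t ≤ M.b v1) := fun hh => hnz1 (adj_of_ovl M hnez1 (ovl_of_mem M htz2 hh))
  have htv2 : ¬ (M.a v2 ≤ t ∧ t ≤ M.b v2) := fun hh => hnz2 (adj_of_ovl M hnez2 (ovl_of_mem M htz2 hh))
  have htv3 : ¬ (M.a v3 ≤ t ∧ t ≤ M.b v3) := fun hh => hnz3 (adj_of_ovl M hnez3 (ovl_of_mem M htz2 hh))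
  -- u avoids v1 and v3
  have huv1 : ¬ (M.a v1 ≤ u ∧ u ≤ M.b v1) := fun hh => hnw2v1 (adj_of_ovl M hnew2v1 (ovl_of_mem M huw2 hh))
  have huv3 : ¬ (M.a v3 ≤ u ∧ u ≤ M.b v3) := fun hh => hnw2v3 (adj_of_ovl M hnew2v3 (ovl_of_mem M huw2 hh))
  -- witness point of v1 outside v2, and of v3 outside v2
  have hovw1 : ovl M w1 v1 := ovl_of_adj M haw1.ne (Or.inr hv1) haw1
  set c1 := max (M.a w1) (M.a v1) with hc1
  have hc12 := mem_of_ovl M hovw1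
  have hc1v1 : M.a v1 ≤ c1 ∧ c1 ≤ M.b v1 := hc12.2
  have hc1v2 : ¬ (M.a v2 ≤ c1 ∧ c1 ≤ M.b v2) := fun hh => hnw1v2 (adj_of_ovl M hnew1v2 (ovl_of_mem M hc12.1 hh))
  have hovw3 : ovl M w3 v3 := ovl_of_adj M haw3.ne (Or.inr hv3) haw3
  set c3 := max (M.a w3) (M.a v3) with hc3
  have hc32 := mem_of_ovl M hovw3
  have hc3v3 : M.a v3 ≤ c3 ∧ c3 ≤ M.b v3 := hc32.2
  have hc3v2 : ¬ (M.a v2 ≤ c3 ∧ c3 ≤ M.b v2) := fun hh => hnw3v2 (adj_of_ovl M hnew3v2 (ovl_of_mem M hc32.1 hh))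
  -- overlaps
  have o12 : ovl M v1 v2 := ovl_of_adj M ha12.ne (Or.inl hv1) ha12
  have o23 : ovl M v2 v3 := ovl_of_adj M ha23.ne (Or.inr hv3) ha23
  have hd13 : ¬ ovl M v1 v3 := novl_of_nonadj M hne13 hn13
  -- side configurations
  have side1 : (c1 < M.a v2 ∧ M.b v1 < u) ∨ (u < M.a v1 ∧ M.b v2 < c1) := by
    rcases not_and_or.1 hc1v2 with hA | hA <;> rcases not_and_or.1 huv1 with hB | hB <;>
      [skip; skip; skip; skip]
    · exfalso; linarith [hc1v1.1, huv2.1, not_le.1 hA, not_le.1 hB]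
    · exact Or.inl ⟨not_le.1 hA, not_le.1 hB⟩
    · exact Or.inr ⟨not_le.1 hB, not_le.1 hA⟩
    · exfalso; linarith [hc1v1.2, huv2.2, not_le.1 hA, not_le.1 hB]
  have side3 : (c3 < M.a v2 ∧ M.b v3 < u) ∨ (u < M.a v3 ∧ M.b v2 < c3) := by
    rcases not_and_or.1 hc3v2 with hA | hA <;> rcases not_and_or.1 huv3 with hB | hB <;>
      [skip; skip; skip; skip]
    · exfalso; linarith [hc3v3.1, huv2.1, not_le.1 hA, not_le.1 hB]
    · exact Or.inl ⟨not_le.1 hA, not_le.1 hB⟩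
    · exact Or.inr ⟨not_le.1 hB, not_le.1 hA⟩
    · exfalso; linarith [hc3v3.2, huv2.2, not_le.1 hA, not_le.1 hB]
  -- the two sides cannot agree
  rcases side1 with ⟨hL1a, hL1b⟩ | ⟨hR1a, hR1b⟩ <;> rcases side3 with ⟨hL3a, hL3b⟩ | ⟨hR3a, hR3b⟩ <;>
    [skip; skip; skip; skip]
  · -- both left: a v2 in both traces
    exact hd13 (ovl_of_mem M (x := M.a v2) ⟨by linarith [hc1v1.1], by linarith [o12.2]⟩
      ⟨by linarith [hc3v3.1], by linarith [o23.1]⟩)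
  · -- v1 left, v3 right
    rcases not_and_or.1 htv2 with hT | hT
    · -- t < a v2 : a v2 lies in w2's trace and in v1
      have hT' := not_le.1 hT
      have h1 : M.a w2 ≤ M.a v2 ∧ M.a v2 ≤ M.b w2 := ⟨by linarith [htw2.1], by linarith [huw2.2, huv2.1]⟩
      have h2 : M.a v1 ≤ M.a v2 ∧ M.a v2 ≤ M.b v1 := ⟨by linarith [hc1v1.1], by linarith [o12.2]⟩
      exact hnw2v1 (adj_of_ovl M hnew2v1 (ovl_of_mem M h1 h2))
    · -- t > b v2 : a v3 lies in w2's trace and in v3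
      have hT' := not_le.1 hT
      have hu3 : u < M.a v3 := by
        rcases not_and_or.1 huv3 with hB | hB
        · exact not_le.1 hB
        · exact absurd (not_le.1 hB) (by intro hh; linarith [huv2.2, hR3b, hc3v3.2])
      have h1 : M.a w2 ≤ M.a v3 ∧ M.a v3 ≤ M.b w2 := ⟨by linarith [huw2.1], by linarith [htw2.2, o23.2]⟩
      have h2 : M.a v3 ≤ M.a v3 ∧ M.a v3 ≤ M.b v3 := ⟨le_refl _, M.hab v3⟩
      exact hnw2v3 (adj_of_ovl M hnew2v3 (ovl_of_mem M h1 h2))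
  · -- v1 right, v3 left (mirror of previous)
    rcases not_and_or.1 htv2 with hT | hT
    · have hT' := not_le.1 hT
      have h1 : M.a w2 ≤ M.a v2 ∧ M.a v2 ≤ M.b w2 := ⟨by linarith [htw2.1], by linarith [huw2.2, huv2.1]⟩
      have h2 : M.a v3 ≤ M.a v2 ∧ M.a v2 ≤ M.b v3 := ⟨by linarith [hc3v3.1], by linarith [o23.1]⟩
      exact hnw2v3 (adj_of_ovl M hnew2v3 (ovl_of_mem M h1 h2))
    · have hT' := not_le.1 hT
      have hu1 : u < M.a v1 := by
        rcases not_and_or.1 huv1 with hB | hB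
        · exact not_le.1 hB
        · exact absurd (not_le.1 hB) (by intro hh; linarith [huv2.2, hR1b, hc1v1.2])
      have h1 : M.a w2 ≤ M.a v1 ∧ M.a v1 ≤ M.b w2 := ⟨by linarith [huw2.1], by linarith [htw2.2, o12.1]⟩
      have h2 : M.a v1 ≤ M.a v1 ∧ M.a v1 ≤ M.b v1 := ⟨le_refl _, M.hab v1⟩
      exact hnw2v1 (adj_of_ovl M hnew2v1 (ovl_of_mem M h1 h2))
  · -- both right: b v2 in both traces
    exact hd13 (ovl_of_mem M (x := M.b v2) ⟨by linarith [o12.1], by linarith [hc1v1.2]⟩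
      ⟨by linarith [o23.2], by linarith [hc3v3.2]⟩)

/-! ### Decidable graph facts -/

abbrev DD (d : ZMod 7) : Prop := d = 1 ∨ d = -1

lemma neWC : ∀ i j : ZMod 7, Wv i ≠ Cv j := by decide
lemma neZC : ∀ i j : ZMod 7, Zv i ≠ Cv j := by decide
lemma adjSymmN {u v : V7} (h : ¬ (GGraph 7).Adj u v) : ¬ (GGraph 7).Adj v u :=
  fun hh => h hh.symm

lemma D1 : ∀ i d : ZMod 7, DD d → (GGraph 7).Adj (Cv i) (Cv (i+d)) := by decide
lemma D6 : ∀ i d : ZMod 7, DD d → (GGraph 7).Adj (Cv i) (Cv (i+6*d)) := by decide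
lemma D12 : ∀ i d : ZMod 7, DD d → (GGraph 7).Adj (Cv (i+d)) (Cv (i+2*d)) := by decide
lemma D23 : ∀ i d : ZMod 7, DD d → (GGraph 7).Adj (Cv (i+2*d)) (Cv (i+3*d)) := by decide
lemma D34 : ∀ i d : ZMod 7, DD d → (GGraph 7).Adj (Cv (i+3*d)) (Cv (i+4*d)) := by decide
lemma D45 : ∀ i d : ZMod 7, DD d → (GGraph 7).Adj (Cv (i+4*d)) (Cv (i+5*d)) := by decide
lemma D56 : ∀ i d : ZMod 7, DD d → (GGraph 7).Adj (Cv (i+5*d)) (Cv (i+6*d)) := by decide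
lemma N16 : ∀ i d : ZMod 7, DD d → ¬ (GGraph 7).Adj (Cv (i+d)) (Cv (i+6*d)) := by decide
lemma N02 : ∀ i d : ZMod 7, DD d → ¬ (GGraph 7).Adj (Cv i) (Cv (i+2*d)) := by decide
lemma N03 : ∀ i d : ZMod 7, DD d → ¬ (GGraph 7).Adj (Cv i) (Cv (i+3*d)) := by decide
lemma N04 : ∀ i d : ZMod 7, DD d → ¬ (GGraph 7).Adj (Cv i) (Cv (i+4*d)) := by decide
lemma N05 : ∀ i d : ZMod 7, DD d → ¬ (GGraph 7).Adj (Cv i) (Cv (i+5*d)) := by decide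
lemma N26 : ∀ i d : ZMod 7, DD d → ¬ (GGraph 7).Adj (Cv (i+2*d)) (Cv (i+6*d)) := by decide
lemma N36 : ∀ i d : ZMod 7, DD d → ¬ (GGraph 7).Adj (Cv (i+3*d)) (Cv (i+6*d)) := by decide
lemma N46 : ∀ i d : ZMod 7, DD d → ¬ (GGraph 7).Adj (Cv (i+4*d)) (Cv (i+6*d)) := by decide
lemma N24 : ∀ i d : ZMod 7, DD d → ¬ (GGraph 7).Adj (Cv (i+2*d)) (Cv (i+4*d)) := by decide
lemma DW2 : ∀ i d : ZMod 7, DD d → (GGraph 7).Adj (Wv (i+2*d)) (Cv (i+2*d)) := by decide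
lemma DW3 : ∀ i d : ZMod 7, DD d → (GGraph 7).Adj (Wv (i+3*d)) (Cv (i+3*d)) := by decide
lemma DW4 : ∀ i d : ZMod 7, DD d → (GGraph 7).Adj (Wv (i+4*d)) (Cv (i+4*d)) := by decide
lemma NW23 : ∀ i d : ZMod 7, DD d → ¬ (GGraph 7).Adj (Wv (i+2*d)) (Cv (i+3*d)) := by decide
lemma NW32 : ∀ i d : ZMod 7, DD d → ¬ (GGraph 7).Adj (Wv (i+3*d)) (Cv (i+2*d)) := by decide
lemma NW34 : ∀ i d : ZMod 7, DD d → ¬ (GGraph 7).Adj (Wv (i+3*d)) (Cv (i+4*d)) := by decide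
lemma NW43 : ∀ i d : ZMod 7, DD d → ¬ (GGraph 7).Adj (Wv (i+4*d)) (Cv (i+3*d)) := by decide
lemma DWZ3 : ∀ i d : ZMod 7, DD d → (GGraph 7).Adj (Wv (i+3*d)) (Zv (i+3*d)) := by decide
lemma NZ32 : ∀ i d : ZMod 7, DD d → ¬ (GGraph 7).Adj (Zv (i+3*d)) (Cv (i+2*d)) := by decide
lemma NZ33 : ∀ i d : ZMod 7, DD d → ¬ (GGraph 7).Adj (Zv (i+3*d)) (Cv (i+3*d)) := by decide
lemma NZ34 : ∀ i d : ZMod 7, DD d → ¬ (GGraph 7).Adj (Zv (i+3*d)) (Cv (i+4*d)) := by decide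
lemma NW30 : ∀ i d : ZMod 7, DD d → ¬ (GGraph 7).Adj (Wv (i+3*d)) (Cv i) := by decide
lemma NW36 : ∀ i d : ZMod 7, DD d → ¬ (GGraph 7).Adj (Wv (i+3*d)) (Cv (i+6*d)) := by decide
lemma NZ30 : ∀ i d : ZMod 7, DD d → ¬ (GGraph 7).Adj (Zv (i+3*d)) (Cv i) := by decide
lemma NZ36 : ∀ i d : ZMod 7, DD d → ¬ (GGraph 7).Adj (Zv (i+3*d)) (Cv (i+6*d)) := by decide
lemma E16 : ∀ i d : ZMod 7, DD d → Cv (i+d) ≠ Cv (i+6*d) := by decide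
lemma E02 : ∀ i d : ZMod 7, DD d → Cv i ≠ Cv (i+2*d) := by decide
lemma E03 : ∀ i d : ZMod 7, DD d → Cv i ≠ Cv (i+3*d) := by decide
lemma E04 : ∀ i d : ZMod 7, DD d → Cv i ≠ Cv (i+4*d) := by decide
lemma E05 : ∀ i d : ZMod 7, DD d → Cv i ≠ Cv (i+5*d) := by decide
lemma E26 : ∀ i d : ZMod 7, DD d → Cv (i+2*d) ≠ Cv (i+6*d) := by decide
lemma E36 : ∀ i d : ZMod 7, DD d → Cv (i+3*d) ≠ Cv (i+6*d) := by decide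
lemma E46 : ∀ i d : ZMod 7, DD d → Cv (i+4*d) ≠ Cv (i+6*d) := by decide
lemma E24 : ∀ i d : ZMod 7, DD d → Cv (i+2*d) ≠ Cv (i+4*d) := by decide
lemma Nm11 : ∀ i : ZMod 7, ¬ (GGraph 7).Adj (Cv (i-1)) (Cv (i+1)) := by decide
lemma Em11 : ∀ i : ZMod 7, Cv (i-1) ≠ Cv (i+1) := by decide

/-! ### All cycle edges flat is impossible -/

lemma allflat (hall : ∀ i : ZMod 7, ovl M (Cv i) (Cv (i+1))) : False := by
  obtain ⟨i₀, -, hmax⟩ := Finset.exists_max_image Finset.univ (fun i => M.a (Cv i))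
    ⟨0, Finset.mem_univ 0⟩
  have h1 := hall i₀
  have h2 := hall (i₀ - 1)
  have e : i₀ - 1 + 1 = i₀ := by ring
  rw [e] at h2
  have hov : ovl M (Cv (i₀ - 1)) (Cv (i₀ + 1)) :=
    ⟨by have := hmax (i₀-1) (Finset.mem_univ _); linarith [h1.1],
     by have := hmax (i₀+1) (Finset.mem_univ _); linarith [h2.2]⟩
  exact Nm11 i₀ (adj_of_ovl M (Em11 i₀) hov)

/-! ### The "leftmost singleton" configuration is impossible -/

lemma singleton (i₀ d : ZMod 7) (hd : DD d)
    (hc1 : ¬ ovl M (Cv i₀) (Cv (i₀ + d)))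
    (hc2 : ¬ ovl M (Cv i₀) (Cv (i₀ + 6*d)))
    (hmin : ∀ i : ZMod 7, M.P (Cv i) → M.a (Cv i₀) ≤ M.a (Cv i))
    (horient : M.a (Cv (i₀ + d)) < M.a (Cv (i₀ + 6*d))) : False := by
  have hPe1 := cross_perm M (D1 i₀ d hd).ne (D1 i₀ d hd) hc1
  have hPe2 := cross_perm M (D6 i₀ d hd).ne (D6 i₀ d hd) hc2
  have hPe : M.P (Cv i₀) := hPe1.1
  have hPx1 : M.P (Cv (i₀ + d)) := hPe1.2
  have hPx2 : M.P (Cv (i₀ + 6*d)) := hPe2.2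
  have hbe : M.a (Cv i₀) = M.b (Cv i₀) := M.hpt _ hPe
  have hbx1 : M.a (Cv (i₀ + d)) = M.b (Cv (i₀ + d)) := M.hpt _ hPx1
  have hbx2 : M.a (Cv (i₀ + 6*d)) = M.b (Cv (i₀ + 6*d)) := M.hpt _ hPx2
  -- strict foot inequalities
  have hex1 : M.a (Cv i₀) < M.a (Cv (i₀ + d)) := by
    rcases lt_or_eq_of_le (hmin (i₀ + d) hPx1) with h | h
    · exact h
    · exact absurd ⟨by linarith [M.hab (Cv (i₀ + d))], by linarith⟩ hc1
  have hex2 : M.a (Cv i₀) < M.a (Cv (i₀ + 6*d)) := by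
    rcases lt_or_eq_of_le (hmin (i₀ + 6*d) hPx2) with h | h
    · exact h
    · exact absurd ⟨by linarith [M.hab (Cv (i₀ + 6*d))], by linarith⟩ hc2
  -- case on the edge x1–m2
  by_cases hov12 : ovl M (Cv (i₀ + d)) (Cv (i₀ + 2*d))
  case neg =>
    -- cross edge x1–m2 : head contradiction
    have hPm2 : M.P (Cv (i₀ + 2*d)) := (cross_perm M (D12 i₀ d hd).ne (D12 i₀ d hd) hov12).2
    have hnem2 : M.a (Cv i₀) ≠ M.a (Cv (i₀ + 2*d)) :=
      align_ne M (E02 i₀ d hd) hPe hPm2 (N02 i₀ d hd)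
    have hem2 : M.a (Cv i₀) < M.a (Cv (i₀ + 2*d)) := lt_of_le_of_ne (hmin (i₀ + 2*d) hPm2) hnem2
    have htrap := trap M (D6 i₀ d hd).ne (E02 i₀ d hd).symm (E26 i₀ d hd)
      hPe hPx2 hPm2 (D6 i₀ d hd) (adjSymmN (N02 i₀ d hd)) (N26 i₀ d hd) hex2
    have hm2x2 : M.a (Cv (i₀ + 6*d)) ≤ M.a (Cv (i₀ + 2*d)) := by
      by_contra hh
      exact htrap ⟨hem2, not_le.1 hh⟩
    have h1 : M.h (Cv i₀) < M.h (Cv (i₀ + 2*d)) :=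
      align_lt M (E02 i₀ d hd) hPe hPm2 (N02 i₀ d hd) hem2
    have h2 : M.h (Cv (i₀ + 2*d)) ≤ M.h (Cv (i₀ + d)) :=
      cross_heads M (D12 i₀ d hd).ne hPx1 hPm2 (D12 i₀ d hd) (by linarith)
    have h3 : M.h (Cv (i₀ + d)) ≤ M.h (Cv i₀) :=
      cross_heads M (D1 i₀ d hd).ne hPe hPx1 (D1 i₀ d hd) hex1
    linarith
  case pos =>
  -- flat edge x1–m2
  have hPm2 : ¬ M.P (Cv (i₀ + 2*d)) := by
    intro hPm2
    have hbm2 : M.a (Cv (i₀ + 2*d)) = M.b (Cv (i₀ + 2*d)) := M.hpt _ hPm2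
    exact trap M (D6 i₀ d hd).ne (E02 i₀ d hd).symm (E26 i₀ d hd)
      hPe hPx2 hPm2 (D6 i₀ d hd) (adjSymmN (N02 i₀ d hd)) (N26 i₀ d hd) hex2
      ⟨by linarith [hov12.1, hov12.2], by linarith [hov12.1, hov12.2]⟩
  -- trace of m2 inside (a e, a x2)
  have hm2l : M.a (Cv i₀) < M.a (Cv (i₀ + 2*d)) := by
    by_contra hh
    exact (novl_of_nonadj M (E02 i₀ d hd) (N02 i₀ d hd))
      ⟨by linarith [hov12.1], by linarith [not_lt.1 hh]⟩
  have hm2r : M.b (Cv (i₀ + 2*d)) < M.a (Cv (i₀ + 6*d)) := by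
    by_contra hh
    exact (novl_of_nonadj M (E26 i₀ d hd).symm (adjSymmN (N26 i₀ d hd)))
      ⟨not_lt.1 hh, by linarith [hov12.2]⟩
  -- m3 is an interval with trace inside (a e, a x2)
  have hov23 : ovl M (Cv (i₀ + 2*d)) (Cv (i₀ + 3*d)) :=
    ovl_of_adj M (D23 i₀ d hd).ne (Or.inl hPm2) (D23 i₀ d hd)
  have hPm3 : ¬ M.P (Cv (i₀ + 3*d)) := by
    intro hPm3
    have hbm3 : M.a (Cv (i₀ + 3*d)) = M.b (Cv (i₀ + 3*d)) := M.hpt _ hPm3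
    exact trap M (D6 i₀ d hd).ne (E03 i₀ d hd).symm (E36 i₀ d hd)
      hPe hPx2 hPm3 (D6 i₀ d hd) (adjSymmN (N03 i₀ d hd)) (N36 i₀ d hd) hex2
      ⟨by linarith [hov23.1, hov23.2], by linarith [hov23.1, hov23.2]⟩
  have hw23 := mem_of_ovl M hov23
  have hm3l : M.a (Cv i₀) < M.a (Cv (i₀ + 3*d)) := by
    by_contra hh
    exact (novl_of_nonadj M (E03 i₀ d hd) (N03 i₀ d hd))
      ⟨by linarith [hw23.2.2, hw23.1.1], by linarith [not_lt.1 hh]⟩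
  have hm3r : M.b (Cv (i₀ + 3*d)) < M.a (Cv (i₀ + 6*d)) := by
    by_contra hh
    exact (novl_of_nonadj M (E36 i₀ d hd).symm (adjSymmN (N36 i₀ d hd)))
      ⟨not_lt.1 hh, by linarith [hw23.2.1, hw23.1.2]⟩
  -- m4 is an interval
  have hov34 : ovl M (Cv (i₀ + 3*d)) (Cv (i₀ + 4*d)) :=
    ovl_of_adj M (D34 i₀ d hd).ne (Or.inl hPm3) (D34 i₀ d hd)
  have hPm4 : ¬ M.P (Cv (i₀ + 4*d)) := by
    intro hPm4
    have hbm4 : M.a (Cv (i₀ + 4*d)) = M.b (Cv (i₀ + 4*d)) := M.hpt _ hPm4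
    exact trap M (D6 i₀ d hd).ne (E04 i₀ d hd).symm (E46 i₀ d hd)
      hPe hPx2 hPm4 (D6 i₀ d hd) (adjSymmN (N04 i₀ d hd)) (N46 i₀ d hd) hex2
      ⟨by linarith [hov34.1, hov34.2], by linarith [hov34.1, hov34.2]⟩
  -- apply the squeeze
  exact squeeze M (Cv i₀) (Cv (i₀ + 6*d)) (Cv (i₀ + 2*d)) (Cv (i₀ + 3*d)) (Cv (i₀ + 4*d))
    (Wv (i₀+2*d)) (Wv (i₀+3*d)) (Wv (i₀+4*d)) (Zv (i₀+3*d))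
    hPe hPx2 (D6 i₀ d hd) hex2 hPm2 hPm3 hPm4 hm3l hm3r
    (D23 i₀ d hd) (D34 i₀ d hd) (N24 i₀ d hd) (E24 i₀ d hd)
    (DW2 i₀ d hd) (DW3 i₀ d hd) (DW4 i₀ d hd)
    (NW23 i₀ d hd) (neWC _ _) (NW32 i₀ d hd) (neWC _ _) (NW34 i₀ d hd) (neWC _ _)
    (NW43 i₀ d hd) (neWC _ _)
    (DWZ3 i₀ d hd) (NZ32 i₀ d hd) (neZC _ _) (NZ33 i₀ d hd) (neZC _ _) (NZ34 i₀ d hd) (neZC _ _)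
    (NW30 i₀ d hd) (neWC _ _) (NW36 i₀ d hd) (neWC _ _)
    (NZ30 i₀ d hd) (neZC _ _) (NZ36 i₀ d hd) (neZC _ _)

/-! ### The single-cross-edge configuration is impossible -/

lemma kOne (i₀ d : ZMod 7) (hd : DD d)
    (hcross : ¬ ovl M (Cv i₀) (Cv (i₀ + 6*d)))
    (hf0 : ovl M (Cv i₀) (Cv (i₀ + d)))
    (hf1 : ovl M (Cv (i₀ + d)) (Cv (i₀ + 2*d)))
    (hf2 : ovl M (Cv (i₀ + 2*d)) (Cv (i₀ + 3*d)))
    (hf3 : ovl M (Cv (i₀ + 3*d)) (Cv (i₀ + 4*d)))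
    (hf4 : ovl M (Cv (i₀ + 4*d)) (Cv (i₀ + 5*d)))
    (hf5 : ovl M (Cv (i₀ + 5*d)) (Cv (i₀ + 6*d)))
    (horient : M.a (Cv i₀) < M.a (Cv (i₀ + 6*d))) : False := by
  have hP := cross_perm M (D6 i₀ d hd).ne (D6 i₀ d hd) hcross
  have hPe : M.P (Cv i₀) := hP.1
  have hPs : M.P (Cv (i₀ + 6*d)) := hP.2
  have hbe : M.a (Cv i₀) = M.b (Cv i₀) := M.hpt _ hPe
  have hbs : M.a (Cv (i₀ + 6*d)) = M.b (Cv (i₀ + 6*d)) := M.hpt _ hPs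
  have hw2 := mem_of_ovl M hf1
  have hw3 := mem_of_ovl M hf2
  have hw4 := mem_of_ovl M hf3
  have hw5 := mem_of_ovl M hf4
  -- b m1 < a s
  have h1r : M.b (Cv (i₀ + d)) < M.a (Cv (i₀ + 6*d)) := by
    by_contra hh
    exact (novl_of_nonadj M (E16 i₀ d hd) (N16 i₀ d hd))
      ⟨by linarith [hf0.2], not_lt.1 hh⟩
  -- a e < a m5
  have h5l : M.a (Cv i₀) < M.a (Cv (i₀ + 5*d)) := by
    by_contra hh
    exact (novl_of_nonadj M (E05 i₀ d hd) (N05 i₀ d hd))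
      ⟨by linarith [hf5.2], by linarith [not_lt.1 hh]⟩
  -- b m2 < a s
  have h2r : M.b (Cv (i₀ + 2*d)) < M.a (Cv (i₀ + 6*d)) := by
    by_contra hh
    exact (novl_of_nonadj M (E26 i₀ d hd) (N26 i₀ d hd))
      ⟨by linarith [hw2.2.1, hw2.1.2, h1r], not_lt.1 hh⟩
  -- a e < a m4
  have h4l : M.a (Cv i₀) < M.a (Cv (i₀ + 4*d)) := by
    by_contra hh
    exact (novl_of_nonadj M (E04 i₀ d hd) (N04 i₀ d hd))
      ⟨by linarith [h5l, hw5.2.1, hw5.1.2], by linarith [not_lt.1 hh]⟩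
  -- trace of m3 inside (a e, a s)
  have h3l : M.a (Cv i₀) < M.a (Cv (i₀ + 3*d)) := by
    rcases not_and_or.1 (novl_of_nonadj M (E03 i₀ d hd) (N03 i₀ d hd)) with hA | hA
    · exfalso; linarith [not_le.1 hA, hw4.1.2, hw4.2.1, h4l, M.hab (Cv (i₀ + 3*d))]
    · linarith [not_le.1 hA]
  have h3r : M.b (Cv (i₀ + 3*d)) < M.a (Cv (i₀ + 6*d)) := by
    rcases not_and_or.1 (novl_of_nonadj M (E36 i₀ d hd) (N36 i₀ d hd)) with hA | hA
    · exfalso; linarith [not_le.1 hA, hw3.2.1, hw3.1.2, h2r, M.hab (Cv (i₀ + 3*d))]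
    · linarith [not_le.1 hA]
  -- left bound for m2
  have h2l : M.a (Cv i₀) < M.a (Cv (i₀ + 2*d)) := by
    by_contra hh
    exact (novl_of_nonadj M (E02 i₀ d hd) (N02 i₀ d hd))
      ⟨by linarith [h3l, hw3.2.1, hw3.1.2], by linarith [not_lt.1 hh]⟩
  -- right bound for m4
  have h4r : M.b (Cv (i₀ + 4*d)) < M.a (Cv (i₀ + 6*d)) := by
    by_contra hh
    exact (novl_of_nonadj M (E46 i₀ d hd) (N46 i₀ d hd))
      ⟨by linarith [hw4.2.1, hw4.1.2, h3r], not_lt.1 hh⟩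
  -- the middle vertices are intervals
  have hPm2 : ¬ M.P (Cv (i₀ + 2*d)) := by
    intro hPm
    have hb := M.hpt _ hPm
    exact trap M (D6 i₀ d hd).ne (E02 i₀ d hd).symm (E26 i₀ d hd)
      hPe hPs hPm (D6 i₀ d hd) (adjSymmN (N02 i₀ d hd)) (N26 i₀ d hd) horient
      ⟨h2l, by linarith [h2r]⟩
  have hPm3 : ¬ M.P (Cv (i₀ + 3*d)) := by
    intro hPm
    have hb := M.hpt _ hPm
    exact trap M (D6 i₀ d hd).ne (E03 i₀ d hd).symm (E36 i₀ d hd)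
      hPe hPs hPm (D6 i₀ d hd) (adjSymmN (N03 i₀ d hd)) (N36 i₀ d hd) horient
      ⟨h3l, by linarith [h3r]⟩
  have hPm4 : ¬ M.P (Cv (i₀ + 4*d)) := by
    intro hPm
    have hb := M.hpt _ hPm
    exact trap M (D6 i₀ d hd).ne (E04 i₀ d hd).symm (E46 i₀ d hd)
      hPe hPs hPm (D6 i₀ d hd) (adjSymmN (N04 i₀ d hd)) (N46 i₀ d hd) horient
      ⟨h4l, by linarith [h4r]⟩
  exact squeeze M (Cv i₀) (Cv (i₀ + 6*d)) (Cv (i₀ + 2*d)) (Cv (i₀ + 3*d)) (Cv (i₀ + 4*d))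
    (Wv (i₀+2*d)) (Wv (i₀+3*d)) (Wv (i₀+4*d)) (Zv (i₀+3*d))
    hPe hPs (D6 i₀ d hd) horient hPm2 hPm3 hPm4 h3l h3r
    (D23 i₀ d hd) (D34 i₀ d hd) (N24 i₀ d hd) (E24 i₀ d hd)
    (DW2 i₀ d hd) (DW3 i₀ d hd) (DW4 i₀ d hd)
    (NW23 i₀ d hd) (neWC _ _) (NW32 i₀ d hd) (neWC _ _) (NW34 i₀ d hd) (neWC _ _)
    (NW43 i₀ d hd) (neWC _ _)
    (DWZ3 i₀ d hd) (NZ32 i₀ d hd) (neZC _ _) (NZ33 i₀ d hd) (neZC _ _) (NZ34 i₀ d hd) (neZC _ _)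
    (NW30 i₀ d hd) (neWC _ _) (NW36 i₀ d hd) (neWC _ _)
    (NZ30 i₀ d hd) (neZC _ _) (NZ36 i₀ d hd) (neZC _ _)

/-! ### Chain-walk helpers and further graph facts -/

lemma chain_base {x α β pt : ℝ} (h1 : α ≤ pt) (h2 : pt ≤ x) (hx : ¬ (α ≤ x ∧ x ≤ β)) : β < x := by
  rcases not_and_or.1 hx with h | h
  · exact absurd (h1.trans h2) h
  · exact not_le.1 h

lemma chain_step {x β₁ α₂ β₂ w : ℝ} (hβ : β₁ < x) (hw1 : w ≤ β₁) (hw2 : α₂ ≤ w)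
    (hx : ¬ (α₂ ≤ x ∧ x ≤ β₂)) : β₂ < x := by
  rcases not_and_or.1 hx with h | h
  · exact absurd (hw2.trans (hw1.trans hβ.le)) h
  · exact not_le.1 h

lemma pt_not_mem {u v : V7} (hb : M.a u = M.b u) (h : ¬ ovl M u v) :
    ¬ (M.a v ≤ M.a u ∧ M.a u ≤ M.b v) := fun hm => h ⟨by linarith [hm.2], by linarith [hm.1]⟩

lemma novl_symm {u v : V7} (h : ¬ ovl M u v) : ¬ ovl M v u := fun hh => h ⟨hh.2, hh.1⟩

lemma Radj0 : ∀ s : ZMod 7, (GGraph 7).Adj (Cv (s)) (Cv (s+1)) := by decide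
lemma Radj1 : ∀ s : ZMod 7, (GGraph 7).Adj (Cv (s+1)) (Cv (s+2)) := by decide
lemma Radj2 : ∀ s : ZMod 7, (GGraph 7).Adj (Cv (s+2)) (Cv (s+3)) := by decide
lemma Radj3 : ∀ s : ZMod 7, (GGraph 7).Adj (Cv (s+3)) (Cv (s+4)) := by decide
lemma Radj4 : ∀ s : ZMod 7, (GGraph 7).Adj (Cv (s+4)) (Cv (s+5)) := by decide
lemma Radj5 : ∀ s : ZMod 7, (GGraph 7).Adj (Cv (s+5)) (Cv (s+6)) := by decide
lemma R60 : ∀ s : ZMod 7, (GGraph 7).Adj (Cv (s+6)) (Cv s) := by decide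
lemma E60 : ∀ s : ZMod 7, Cv (s+6) ≠ Cv s := by decide
lemma NN61 : ∀ s : ZMod 7, ¬ (GGraph 7).Adj (Cv (s+6)) (Cv (s+1)) := by decide
lemma EE61 : ∀ s : ZMod 7, Cv (s+6) ≠ Cv (s+1) := by decide
lemma NN62 : ∀ s : ZMod 7, ¬ (GGraph 7).Adj (Cv (s+6)) (Cv (s+2)) := by decide
lemma EE62 : ∀ s : ZMod 7, Cv (s+6) ≠ Cv (s+2) := by decide
lemma NN63 : ∀ s : ZMod 7, ¬ (GGraph 7).Adj (Cv (s+6)) (Cv (s+3)) := by decide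
lemma EE63 : ∀ s : ZMod 7, Cv (s+6) ≠ Cv (s+3) := by decide
lemma NN64 : ∀ s : ZMod 7, ¬ (GGraph 7).Adj (Cv (s+6)) (Cv (s+4)) := by decide
lemma EE64 : ∀ s : ZMod 7, Cv (s+6) ≠ Cv (s+4) := by decide
lemma NN20 : ∀ s : ZMod 7, ¬ (GGraph 7).Adj (Cv (s+2)) (Cv (s)) := by decide
lemma EE20 : ∀ s : ZMod 7, Cv (s+2) ≠ Cv (s) := by decide
lemma NN30 : ∀ s : ZMod 7, ¬ (GGraph 7).Adj (Cv (s+3)) (Cv (s)) := by decide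
lemma EE30 : ∀ s : ZMod 7, Cv (s+3) ≠ Cv (s) := by decide
lemma NN31 : ∀ s : ZMod 7, ¬ (GGraph 7).Adj (Cv (s+3)) (Cv (s+1)) := by decide
lemma EE31 : ∀ s : ZMod 7, Cv (s+3) ≠ Cv (s+1) := by decide
lemma NN40 : ∀ s : ZMod 7, ¬ (GGraph 7).Adj (Cv (s+4)) (Cv (s)) := by decide
lemma EE40 : ∀ s : ZMod 7, Cv (s+4) ≠ Cv (s) := by decide
lemma NN41 : ∀ s : ZMod 7, ¬ (GGraph 7).Adj (Cv (s+4)) (Cv (s+1)) := by decide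
lemma EE41 : ∀ s : ZMod 7, Cv (s+4) ≠ Cv (s+1) := by decide
lemma NN42 : ∀ s : ZMod 7, ¬ (GGraph 7).Adj (Cv (s+4)) (Cv (s+2)) := by decide
lemma EE42 : ∀ s : ZMod 7, Cv (s+4) ≠ Cv (s+2) := by decide
lemma NN50 : ∀ s : ZMod 7, ¬ (GGraph 7).Adj (Cv (s+5)) (Cv (s)) := by decide
lemma EE50 : ∀ s : ZMod 7, Cv (s+5) ≠ Cv (s) := by decide
lemma NN51 : ∀ s : ZMod 7, ¬ (GGraph 7).Adj (Cv (s+5)) (Cv (s+1)) := by decide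
lemma EE51 : ∀ s : ZMod 7, Cv (s+5) ≠ Cv (s+1) := by decide
lemma NN52 : ∀ s : ZMod 7, ¬ (GGraph 7).Adj (Cv (s+5)) (Cv (s+2)) := by decide
lemma EE52 : ∀ s : ZMod 7, Cv (s+5) ≠ Cv (s+2) := by decide
lemma NN53 : ∀ s : ZMod 7, ¬ (GGraph 7).Adj (Cv (s+5)) (Cv (s+3)) := by decide
lemma EE53 : ∀ s : ZMod 7, Cv (s+5) ≠ Cv (s+3) := by decide

lemma runT5_2 (s j : ZMod 7)
    (hcL : ¬ ovl M (Cv (s+6)) (Cv s))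
    (hcR : ¬ ovl M (Cv (s+1)) (Cv (s+2)))
    (hf0 : ovl M (Cv (s)) (Cv (s+1)))
    (hj : j = 0 ∨ j = 1)
    (hPj : M.P (Cv (s+j)))
    (hmin : ∀ i : ZMod 7, M.P (Cv i) → M.a (Cv (s+j)) ≤ M.a (Cv i)) : False := by
  have hPL := cross_perm M (R60 s).ne (R60 s) hcL
  have hPR := cross_perm M (Radj1 s).ne (Radj1 s) hcR
  have hbX1 : M.a (Cv (s+6)) = M.b (Cv (s+6)) := M.hpt _ hPL.1
  have hbX2 : M.a (Cv (s+2)) = M.b (Cv (s+2)) := M.hpt _ hPR.2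
  have hwc0 := mem_of_ovl M hf0
  have hnm0 : ¬ (M.a (Cv s) ≤ M.a (Cv (s+6)) ∧ M.a (Cv (s+6)) ≤ M.b (Cv s)) := pt_not_mem M hbX1 hcL
  have hnm1 : ¬ (M.a (Cv (s+1)) ≤ M.a (Cv (s+6)) ∧ M.a (Cv (s+6)) ≤ M.b (Cv (s+1))) := pt_not_mem M hbX1 (novl_of_nonadj M (EE61 s) (NN61 s))
  have hpm1 : ¬ (M.a (Cv (s+1)) ≤ M.a (Cv (s+2)) ∧ M.a (Cv (s+2)) ≤ M.b (Cv (s+1))) := pt_not_mem M hbX2 (novl_symm M hcR)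
  have hpm0 : ¬ (M.a (Cv (s)) ≤ M.a (Cv (s+2)) ∧ M.a (Cv (s+2)) ≤ M.b (Cv (s))) := pt_not_mem M hbX2 (novl_of_nonadj M (EE20 s) (NN20 s))
  have hanc1 : M.a (Cv (s+j)) ≤ M.a (Cv (s+6)) := hmin _ hPL.1
  have hanc2 : M.a (Cv (s+j)) ≤ M.a (Cv (s+2)) := hmin _ hPR.2
  have key : (M.b (Cv s) < M.a (Cv (s+6)) ∧ M.b (Cv (s+1)) < M.a (Cv (s+6))) ∧ (M.b (Cv s) < M.a (Cv (s+2)) ∧ M.b (Cv (s+1)) < M.a (Cv (s+2))) := by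
    rcases hj with hj|hj <;> subst hj
    · rw [add_zero] at hanc1 hanc2
      have hbU0 := chain_base (by linarith [M.hab (Cv (s))]) hanc1 (hnm0)
      have hbU1 := chain_step hbU0 hwc0.1.2 hwc0.2.1 (hnm1)
      have hbV0 := chain_base (by linarith [M.hab (Cv (s))]) hanc2 (hpm0)
      have hbV1 := chain_step hbV0 hwc0.1.2 hwc0.2.1 (hpm1)
      exact ⟨⟨hbU0, hbU1⟩, ⟨hbV0, hbV1⟩⟩
    · have hbU1 := chain_base (by linarith [M.hab (Cv (s+1))]) hanc1 (hnm1)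
      have hbU0 := chain_step hbU1 hwc0.2.2 hwc0.1.1 (hnm0)
      have hbV1 := chain_base (by linarith [M.hab (Cv (s+1))]) hanc2 (hpm1)
      have hbV0 := chain_step hbV1 hwc0.2.2 hwc0.1.1 (hpm0)
      exact ⟨⟨hbU0, hbU1⟩, ⟨hbV0, hbV1⟩⟩
  have c1 : M.h (Cv (s+6)) ≤ M.h (Cv s) :=
    cross_heads M (fun h => E60 s h.symm) hPL.2 hPL.1 (R60 s).symm (by linarith [M.hab (Cv s), key.1.1])
  have c2 : M.h (Cv s) < M.h (Cv (s+2)) :=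
    align_lt M (fun h => EE20 s h.symm) hPL.2 hPR.2 (adjSymmN (NN20 s)) (by linarith [M.hab (Cv s), key.2.1])
  have c3 : M.h (Cv (s+2)) ≤ M.h (Cv (s+1)) :=
    cross_heads M (Radj1 s).ne hPR.1 hPR.2 (Radj1 s) (by linarith [M.hab (Cv (s+1)), key.2.2])
  have c4 : M.h (Cv (s+1)) < M.h (Cv (s+6)) :=
    align_lt M (fun h => EE61 s h.symm) hPR.1 hPL.1 (adjSymmN (NN61 s)) (by linarith [M.hab (Cv (s+1)), key.1.2])
  linarith

lemma runT5_3 (s j : ZMod 7)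
    (hcL : ¬ ovl M (Cv (s+6)) (Cv s))
    (hcR : ¬ ovl M (Cv (s+2)) (Cv (s+3)))
    (hf0 : ovl M (Cv (s)) (Cv (s+1)))
    (hf1 : ovl M (Cv (s+1)) (Cv (s+2)))
    (hj : j = 0 ∨ j = 1 ∨ j = 2)
    (hPj : M.P (Cv (s+j)))
    (hmin : ∀ i : ZMod 7, M.P (Cv i) → M.a (Cv (s+j)) ≤ M.a (Cv i)) : False := by
  have hPL := cross_perm M (R60 s).ne (R60 s) hcL
  have hPR := cross_perm M (Radj2 s).ne (Radj2 s) hcR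
  have hbX1 : M.a (Cv (s+6)) = M.b (Cv (s+6)) := M.hpt _ hPL.1
  have hbX2 : M.a (Cv (s+3)) = M.b (Cv (s+3)) := M.hpt _ hPR.2
  have hwc0 := mem_of_ovl M hf0
  have hwc1 := mem_of_ovl M hf1
  have hnm0 : ¬ (M.a (Cv s) ≤ M.a (Cv (s+6)) ∧ M.a (Cv (s+6)) ≤ M.b (Cv s)) := pt_not_mem M hbX1 hcL
  have hnm1 : ¬ (M.a (Cv (s+1)) ≤ M.a (Cv (s+6)) ∧ M.a (Cv (s+6)) ≤ M.b (Cv (s+1))) := pt_not_mem M hbX1 (novl_of_nonadj M (EE61 s) (NN61 s))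
  have hnm2 : ¬ (M.a (Cv (s+2)) ≤ M.a (Cv (s+6)) ∧ M.a (Cv (s+6)) ≤ M.b (Cv (s+2))) := pt_not_mem M hbX1 (novl_of_nonadj M (EE62 s) (NN62 s))
  have hpm2 : ¬ (M.a (Cv (s+2)) ≤ M.a (Cv (s+3)) ∧ M.a (Cv (s+3)) ≤ M.b (Cv (s+2))) := pt_not_mem M hbX2 (novl_symm M hcR)
  have hpm0 : ¬ (M.a (Cv (s)) ≤ M.a (Cv (s+3)) ∧ M.a (Cv (s+3)) ≤ M.b (Cv (s))) := pt_not_mem M hbX2 (novl_of_nonadj M (EE30 s) (NN30 s))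
  have hpm1 : ¬ (M.a (Cv (s+1)) ≤ M.a (Cv (s+3)) ∧ M.a (Cv (s+3)) ≤ M.b (Cv (s+1))) := pt_not_mem M hbX2 (novl_of_nonadj M (EE31 s) (NN31 s))
  have hanc1 : M.a (Cv (s+j)) ≤ M.a (Cv (s+6)) := hmin _ hPL.1
  have hanc2 : M.a (Cv (s+j)) ≤ M.a (Cv (s+3)) := hmin _ hPR.2
  have key : (M.b (Cv s) < M.a (Cv (s+6)) ∧ M.b (Cv (s+2)) < M.a (Cv (s+6))) ∧ (M.b (Cv s) < M.a (Cv (s+3)) ∧ M.b (Cv (s+2)) < M.a (Cv (s+3))) := by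
    rcases hj with hj|hj|hj <;> subst hj
    · rw [add_zero] at hanc1 hanc2
      have hbU0 := chain_base (by linarith [M.hab (Cv (s))]) hanc1 (hnm0)
      have hbU1 := chain_step hbU0 hwc0.1.2 hwc0.2.1 (hnm1)
      have hbU2 := chain_step hbU1 hwc1.1.2 hwc1.2.1 (hnm2)
      have hbV0 := chain_base (by linarith [M.hab (Cv (s))]) hanc2 (hpm0)
      have hbV1 := chain_step hbV0 hwc0.1.2 hwc0.2.1 (hpm1)
      have hbV2 := chain_step hbV1 hwc1.1.2 hwc1.2.1 (hpm2)
      exact ⟨⟨hbU0, hbU2⟩, ⟨hbV0, hbV2⟩⟩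
    · have hbU1 := chain_base (by linarith [M.hab (Cv (s+1))]) hanc1 (hnm1)
      have hbU0 := chain_step hbU1 hwc0.2.2 hwc0.1.1 (hnm0)
      have hbU2 := chain_step hbU1 hwc1.1.2 hwc1.2.1 (hnm2)
      have hbV1 := chain_base (by linarith [M.hab (Cv (s+1))]) hanc2 (hpm1)
      have hbV0 := chain_step hbV1 hwc0.2.2 hwc0.1.1 (hpm0)
      have hbV2 := chain_step hbV1 hwc1.1.2 hwc1.2.1 (hpm2)
      exact ⟨⟨hbU0, hbU2⟩, ⟨hbV0, hbV2⟩⟩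
    · have hbU2 := chain_base (by linarith [M.hab (Cv (s+2))]) hanc1 (hnm2)
      have hbU1 := chain_step hbU2 hwc1.2.2 hwc1.1.1 (hnm1)
      have hbU0 := chain_step hbU1 hwc0.2.2 hwc0.1.1 (hnm0)
      have hbV2 := chain_base (by linarith [M.hab (Cv (s+2))]) hanc2 (hpm2)
      have hbV1 := chain_step hbV2 hwc1.2.2 hwc1.1.1 (hpm1)
      have hbV0 := chain_step hbV1 hwc0.2.2 hwc0.1.1 (hpm0)
      exact ⟨⟨hbU0, hbU2⟩, ⟨hbV0, hbV2⟩⟩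
  have c1 : M.h (Cv (s+6)) ≤ M.h (Cv s) :=
    cross_heads M (fun h => E60 s h.symm) hPL.2 hPL.1 (R60 s).symm (by linarith [M.hab (Cv s), key.1.1])
  have c2 : M.h (Cv s) < M.h (Cv (s+3)) :=
    align_lt M (fun h => EE30 s h.symm) hPL.2 hPR.2 (adjSymmN (NN30 s)) (by linarith [M.hab (Cv s), key.2.1])
  have c3 : M.h (Cv (s+3)) ≤ M.h (Cv (s+2)) :=
    cross_heads M (Radj2 s).ne hPR.1 hPR.2 (Radj2 s) (by linarith [M.hab (Cv (s+2)), key.2.2])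
  have c4 : M.h (Cv (s+2)) < M.h (Cv (s+6)) :=
    align_lt M (fun h => EE62 s h.symm) hPR.1 hPL.1 (adjSymmN (NN62 s)) (by linarith [M.hab (Cv (s+2)), key.1.2])
  linarith

lemma runT5_4 (s j : ZMod 7)
    (hcL : ¬ ovl M (Cv (s+6)) (Cv s))
    (hcR : ¬ ovl M (Cv (s+3)) (Cv (s+4)))
    (hf0 : ovl M (Cv (s)) (Cv (s+1)))
    (hf1 : ovl M (Cv (s+1)) (Cv (s+2)))
    (hf2 : ovl M (Cv (s+2)) (Cv (s+3)))
    (hj : j = 0 ∨ j = 1 ∨ j = 2 ∨ j = 3)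
    (hPj : M.P (Cv (s+j)))
    (hmin : ∀ i : ZMod 7, M.P (Cv i) → M.a (Cv (s+j)) ≤ M.a (Cv i)) : False := by
  have hPL := cross_perm M (R60 s).ne (R60 s) hcL
  have hPR := cross_perm M (Radj3 s).ne (Radj3 s) hcR
  have hbX1 : M.a (Cv (s+6)) = M.b (Cv (s+6)) := M.hpt _ hPL.1
  have hbX2 : M.a (Cv (s+4)) = M.b (Cv (s+4)) := M.hpt _ hPR.2
  have hwc0 := mem_of_ovl M hf0
  have hwc1 := mem_of_ovl M hf1
  have hwc2 := mem_of_ovl M hf2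
  have hnm0 : ¬ (M.a (Cv s) ≤ M.a (Cv (s+6)) ∧ M.a (Cv (s+6)) ≤ M.b (Cv s)) := pt_not_mem M hbX1 hcL
  have hnm1 : ¬ (M.a (Cv (s+1)) ≤ M.a (Cv (s+6)) ∧ M.a (Cv (s+6)) ≤ M.b (Cv (s+1))) := pt_not_mem M hbX1 (novl_of_nonadj M (EE61 s) (NN61 s))
  have hnm2 : ¬ (M.a (Cv (s+2)) ≤ M.a (Cv (s+6)) ∧ M.a (Cv (s+6)) ≤ M.b (Cv (s+2))) := pt_not_mem M hbX1 (novl_of_nonadj M (EE62 s) (NN62 s))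
  have hnm3 : ¬ (M.a (Cv (s+3)) ≤ M.a (Cv (s+6)) ∧ M.a (Cv (s+6)) ≤ M.b (Cv (s+3))) := pt_not_mem M hbX1 (novl_of_nonadj M (EE63 s) (NN63 s))
  have hpm3 : ¬ (M.a (Cv (s+3)) ≤ M.a (Cv (s+4)) ∧ M.a (Cv (s+4)) ≤ M.b (Cv (s+3))) := pt_not_mem M hbX2 (novl_symm M hcR)
  have hpm0 : ¬ (M.a (Cv (s)) ≤ M.a (Cv (s+4)) ∧ M.a (Cv (s+4)) ≤ M.b (Cv (s))) := pt_not_mem M hbX2 (novl_of_nonadj M (EE40 s) (NN40 s))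
  have hpm1 : ¬ (M.a (Cv (s+1)) ≤ M.a (Cv (s+4)) ∧ M.a (Cv (s+4)) ≤ M.b (Cv (s+1))) := pt_not_mem M hbX2 (novl_of_nonadj M (EE41 s) (NN41 s))
  have hpm2 : ¬ (M.a (Cv (s+2)) ≤ M.a (Cv (s+4)) ∧ M.a (Cv (s+4)) ≤ M.b (Cv (s+2))) := pt_not_mem M hbX2 (novl_of_nonadj M (EE42 s) (NN42 s))
  have hanc1 : M.a (Cv (s+j)) ≤ M.a (Cv (s+6)) := hmin _ hPL.1
  have hanc2 : M.a (Cv (s+j)) ≤ M.a (Cv (s+4)) := hmin _ hPR.2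
  have key : (M.b (Cv s) < M.a (Cv (s+6)) ∧ M.b (Cv (s+3)) < M.a (Cv (s+6))) ∧ (M.b (Cv s) < M.a (Cv (s+4)) ∧ M.b (Cv (s+3)) < M.a (Cv (s+4))) := by
    rcases hj with hj|hj|hj|hj <;> subst hj
    · rw [add_zero] at hanc1 hanc2
      have hbU0 := chain_base (by linarith [M.hab (Cv (s))]) hanc1 (hnm0)
      have hbU1 := chain_step hbU0 hwc0.1.2 hwc0.2.1 (hnm1)
      have hbU2 := chain_step hbU1 hwc1.1.2 hwc1.2.1 (hnm2)
      have hbU3 := chain_step hbU2 hwc2.1.2 hwc2.2.1 (hnm3)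
      have hbV0 := chain_base (by linarith [M.hab (Cv (s))]) hanc2 (hpm0)
      have hbV1 := chain_step hbV0 hwc0.1.2 hwc0.2.1 (hpm1)
      have hbV2 := chain_step hbV1 hwc1.1.2 hwc1.2.1 (hpm2)
      have hbV3 := chain_step hbV2 hwc2.1.2 hwc2.2.1 (hpm3)
      exact ⟨⟨hbU0, hbU3⟩, ⟨hbV0, hbV3⟩⟩
    · have hbU1 := chain_base (by linarith [M.hab (Cv (s+1))]) hanc1 (hnm1)
      have hbU0 := chain_step hbU1 hwc0.2.2 hwc0.1.1 (hnm0)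
      have hbU2 := chain_step hbU1 hwc1.1.2 hwc1.2.1 (hnm2)
      have hbU3 := chain_step hbU2 hwc2.1.2 hwc2.2.1 (hnm3)
      have hbV1 := chain_base (by linarith [M.hab (Cv (s+1))]) hanc2 (hpm1)
      have hbV0 := chain_step hbV1 hwc0.2.2 hwc0.1.1 (hpm0)
      have hbV2 := chain_step hbV1 hwc1.1.2 hwc1.2.1 (hpm2)
      have hbV3 := chain_step hbV2 hwc2.1.2 hwc2.2.1 (hpm3)
      exact ⟨⟨hbU0, hbU3⟩, ⟨hbV0, hbV3⟩⟩
    · have hbU2 := chain_base (by linarith [M.hab (Cv (s+2))]) hanc1 (hnm2)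
      have hbU1 := chain_step hbU2 hwc1.2.2 hwc1.1.1 (hnm1)
      have hbU0 := chain_step hbU1 hwc0.2.2 hwc0.1.1 (hnm0)
      have hbU3 := chain_step hbU2 hwc2.1.2 hwc2.2.1 (hnm3)
      have hbV2 := chain_base (by linarith [M.hab (Cv (s+2))]) hanc2 (hpm2)
      have hbV1 := chain_step hbV2 hwc1.2.2 hwc1.1.1 (hpm1)
      have hbV0 := chain_step hbV1 hwc0.2.2 hwc0.1.1 (hpm0)
      have hbV3 := chain_step hbV2 hwc2.1.2 hwc2.2.1 (hpm3)
      exact ⟨⟨hbU0, hbU3⟩, ⟨hbV0, hbV3⟩⟩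
    · have hbU3 := chain_base (by linarith [M.hab (Cv (s+3))]) hanc1 (hnm3)
      have hbU2 := chain_step hbU3 hwc2.2.2 hwc2.1.1 (hnm2)
      have hbU1 := chain_step hbU2 hwc1.2.2 hwc1.1.1 (hnm1)
      have hbU0 := chain_step hbU1 hwc0.2.2 hwc0.1.1 (hnm0)
      have hbV3 := chain_base (by linarith [M.hab (Cv (s+3))]) hanc2 (hpm3)
      have hbV2 := chain_step hbV3 hwc2.2.2 hwc2.1.1 (hpm2)
      have hbV1 := chain_step hbV2 hwc1.2.2 hwc1.1.1 (hpm1)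
      have hbV0 := chain_step hbV1 hwc0.2.2 hwc0.1.1 (hpm0)
      exact ⟨⟨hbU0, hbU3⟩, ⟨hbV0, hbV3⟩⟩
  have c1 : M.h (Cv (s+6)) ≤ M.h (Cv s) :=
    cross_heads M (fun h => E60 s h.symm) hPL.2 hPL.1 (R60 s).symm (by linarith [M.hab (Cv s), key.1.1])
  have c2 : M.h (Cv s) < M.h (Cv (s+4)) :=
    align_lt M (fun h => EE40 s h.symm) hPL.2 hPR.2 (adjSymmN (NN40 s)) (by linarith [M.hab (Cv s), key.2.1])
  have c3 : M.h (Cv (s+4)) ≤ M.h (Cv (s+3)) :=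
    cross_heads M (Radj3 s).ne hPR.1 hPR.2 (Radj3 s) (by linarith [M.hab (Cv (s+3)), key.2.2])
  have c4 : M.h (Cv (s+3)) < M.h (Cv (s+6)) :=
    align_lt M (fun h => EE63 s h.symm) hPR.1 hPL.1 (adjSymmN (NN63 s)) (by linarith [M.hab (Cv (s+3)), key.1.2])
  linarith

lemma runT5_5 (s j : ZMod 7)
    (hcL : ¬ ovl M (Cv (s+6)) (Cv s))
    (hcR : ¬ ovl M (Cv (s+4)) (Cv (s+5)))
    (hf0 : ovl M (Cv (s)) (Cv (s+1)))
    (hf1 : ovl M (Cv (s+1)) (Cv (s+2)))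
    (hf2 : ovl M (Cv (s+2)) (Cv (s+3)))
    (hf3 : ovl M (Cv (s+3)) (Cv (s+4)))
    (hj : j = 0 ∨ j = 1 ∨ j = 2 ∨ j = 3 ∨ j = 4)
    (hPj : M.P (Cv (s+j)))
    (hmin : ∀ i : ZMod 7, M.P (Cv i) → M.a (Cv (s+j)) ≤ M.a (Cv i)) : False := by
  have hPL := cross_perm M (R60 s).ne (R60 s) hcL
  have hPR := cross_perm M (Radj4 s).ne (Radj4 s) hcR
  have hbX1 : M.a (Cv (s+6)) = M.b (Cv (s+6)) := M.hpt _ hPL.1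
  have hbX2 : M.a (Cv (s+5)) = M.b (Cv (s+5)) := M.hpt _ hPR.2
  have hwc0 := mem_of_ovl M hf0
  have hwc1 := mem_of_ovl M hf1
  have hwc2 := mem_of_ovl M hf2
  have hwc3 := mem_of_ovl M hf3
  have hnm0 : ¬ (M.a (Cv s) ≤ M.a (Cv (s+6)) ∧ M.a (Cv (s+6)) ≤ M.b (Cv s)) := pt_not_mem M hbX1 hcL
  have hnm1 : ¬ (M.a (Cv (s+1)) ≤ M.a (Cv (s+6)) ∧ M.a (Cv (s+6)) ≤ M.b (Cv (s+1))) := pt_not_mem M hbX1 (novl_of_nonadj M (EE61 s) (NN61 s))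
  have hnm2 : ¬ (M.a (Cv (s+2)) ≤ M.a (Cv (s+6)) ∧ M.a (Cv (s+6)) ≤ M.b (Cv (s+2))) := pt_not_mem M hbX1 (novl_of_nonadj M (EE62 s) (NN62 s))
  have hnm3 : ¬ (M.a (Cv (s+3)) ≤ M.a (Cv (s+6)) ∧ M.a (Cv (s+6)) ≤ M.b (Cv (s+3))) := pt_not_mem M hbX1 (novl_of_nonadj M (EE63 s) (NN63 s))
  have hnm4 : ¬ (M.a (Cv (s+4)) ≤ M.a (Cv (s+6)) ∧ M.a (Cv (s+6)) ≤ M.b (Cv (s+4))) := pt_not_mem M hbX1 (novl_of_nonadj M (EE64 s) (NN64 s))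
  have hpm4 : ¬ (M.a (Cv (s+4)) ≤ M.a (Cv (s+5)) ∧ M.a (Cv (s+5)) ≤ M.b (Cv (s+4))) := pt_not_mem M hbX2 (novl_symm M hcR)
  have hpm0 : ¬ (M.a (Cv (s)) ≤ M.a (Cv (s+5)) ∧ M.a (Cv (s+5)) ≤ M.b (Cv (s))) := pt_not_mem M hbX2 (novl_of_nonadj M (EE50 s) (NN50 s))
  have hpm1 : ¬ (M.a (Cv (s+1)) ≤ M.a (Cv (s+5)) ∧ M.a (Cv (s+5)) ≤ M.b (Cv (s+1))) := pt_not_mem M hbX2 (novl_of_nonadj M (EE51 s) (NN51 s))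
  have hpm2 : ¬ (M.a (Cv (s+2)) ≤ M.a (Cv (s+5)) ∧ M.a (Cv (s+5)) ≤ M.b (Cv (s+2))) := pt_not_mem M hbX2 (novl_of_nonadj M (EE52 s) (NN52 s))
  have hpm3 : ¬ (M.a (Cv (s+3)) ≤ M.a (Cv (s+5)) ∧ M.a (Cv (s+5)) ≤ M.b (Cv (s+3))) := pt_not_mem M hbX2 (novl_of_nonadj M (EE53 s) (NN53 s))
  have hanc1 : M.a (Cv (s+j)) ≤ M.a (Cv (s+6)) := hmin _ hPL.1
  have hanc2 : M.a (Cv (s+j)) ≤ M.a (Cv (s+5)) := hmin _ hPR.2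
  have key : (M.b (Cv s) < M.a (Cv (s+6)) ∧ M.b (Cv (s+4)) < M.a (Cv (s+6))) ∧ (M.b (Cv s) < M.a (Cv (s+5)) ∧ M.b (Cv (s+4)) < M.a (Cv (s+5))) := by
    rcases hj with hj|hj|hj|hj|hj <;> subst hj
    · rw [add_zero] at hanc1 hanc2
      have hbU0 := chain_base (by linarith [M.hab (Cv (s))]) hanc1 (hnm0)
      have hbU1 := chain_step hbU0 hwc0.1.2 hwc0.2.1 (hnm1)
      have hbU2 := chain_step hbU1 hwc1.1.2 hwc1.2.1 (hnm2)
      have hbU3 := chain_step hbU2 hwc2.1.2 hwc2.2.1 (hnm3)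
      have hbU4 := chain_step hbU3 hwc3.1.2 hwc3.2.1 (hnm4)
      have hbV0 := chain_base (by linarith [M.hab (Cv (s))]) hanc2 (hpm0)
      have hbV1 := chain_step hbV0 hwc0.1.2 hwc0.2.1 (hpm1)
      have hbV2 := chain_step hbV1 hwc1.1.2 hwc1.2.1 (hpm2)
      have hbV3 := chain_step hbV2 hwc2.1.2 hwc2.2.1 (hpm3)
      have hbV4 := chain_step hbV3 hwc3.1.2 hwc3.2.1 (hpm4)
      exact ⟨⟨hbU0, hbU4⟩, ⟨hbV0, hbV4⟩⟩
    · have hbU1 := chain_base (by linarith [M.hab (Cv (s+1))]) hanc1 (hnm1)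
      have hbU0 := chain_step hbU1 hwc0.2.2 hwc0.1.1 (hnm0)
      have hbU2 := chain_step hbU1 hwc1.1.2 hwc1.2.1 (hnm2)
      have hbU3 := chain_step hbU2 hwc2.1.2 hwc2.2.1 (hnm3)
      have hbU4 := chain_step hbU3 hwc3.1.2 hwc3.2.1 (hnm4)
      have hbV1 := chain_base (by linarith [M.hab (Cv (s+1))]) hanc2 (hpm1)
      have hbV0 := chain_step hbV1 hwc0.2.2 hwc0.1.1 (hpm0)
      have hbV2 := chain_step hbV1 hwc1.1.2 hwc1.2.1 (hpm2)
      have hbV3 := chain_step hbV2 hwc2.1.2 hwc2.2.1 (hpm3)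
      have hbV4 := chain_step hbV3 hwc3.1.2 hwc3.2.1 (hpm4)
      exact ⟨⟨hbU0, hbU4⟩, ⟨hbV0, hbV4⟩⟩
    · have hbU2 := chain_base (by linarith [M.hab (Cv (s+2))]) hanc1 (hnm2)
      have hbU1 := chain_step hbU2 hwc1.2.2 hwc1.1.1 (hnm1)
      have hbU0 := chain_step hbU1 hwc0.2.2 hwc0.1.1 (hnm0)
      have hbU3 := chain_step hbU2 hwc2.1.2 hwc2.2.1 (hnm3)
      have hbU4 := chain_step hbU3 hwc3.1.2 hwc3.2.1 (hnm4)
      have hbV2 := chain_base (by linarith [M.hab (Cv (s+2))]) hanc2 (hpm2)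
      have hbV1 := chain_step hbV2 hwc1.2.2 hwc1.1.1 (hpm1)
      have hbV0 := chain_step hbV1 hwc0.2.2 hwc0.1.1 (hpm0)
      have hbV3 := chain_step hbV2 hwc2.1.2 hwc2.2.1 (hpm3)
      have hbV4 := chain_step hbV3 hwc3.1.2 hwc3.2.1 (hpm4)
      exact ⟨⟨hbU0, hbU4⟩, ⟨hbV0, hbV4⟩⟩
    · have hbU3 := chain_base (by linarith [M.hab (Cv (s+3))]) hanc1 (hnm3)
      have hbU2 := chain_step hbU3 hwc2.2.2 hwc2.1.1 (hnm2)
      have hbU1 := chain_step hbU2 hwc1.2.2 hwc1.1.1 (hnm1)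
      have hbU0 := chain_step hbU1 hwc0.2.2 hwc0.1.1 (hnm0)
      have hbU4 := chain_step hbU3 hwc3.1.2 hwc3.2.1 (hnm4)
      have hbV3 := chain_base (by linarith [M.hab (Cv (s+3))]) hanc2 (hpm3)
      have hbV2 := chain_step hbV3 hwc2.2.2 hwc2.1.1 (hpm2)
      have hbV1 := chain_step hbV2 hwc1.2.2 hwc1.1.1 (hpm1)
      have hbV0 := chain_step hbV1 hwc0.2.2 hwc0.1.1 (hpm0)
      have hbV4 := chain_step hbV3 hwc3.1.2 hwc3.2.1 (hpm4)
      exact ⟨⟨hbU0, hbU4⟩, ⟨hbV0, hbV4⟩⟩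
    · have hbU4 := chain_base (by linarith [M.hab (Cv (s+4))]) hanc1 (hnm4)
      have hbU3 := chain_step hbU4 hwc3.2.2 hwc3.1.1 (hnm3)
      have hbU2 := chain_step hbU3 hwc2.2.2 hwc2.1.1 (hnm2)
      have hbU1 := chain_step hbU2 hwc1.2.2 hwc1.1.1 (hnm1)
      have hbU0 := chain_step hbU1 hwc0.2.2 hwc0.1.1 (hnm0)
      have hbV4 := chain_base (by linarith [M.hab (Cv (s+4))]) hanc2 (hpm4)
      have hbV3 := chain_step hbV4 hwc3.2.2 hwc3.1.1 (hpm3)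
      have hbV2 := chain_step hbV3 hwc2.2.2 hwc2.1.1 (hpm2)
      have hbV1 := chain_step hbV2 hwc1.2.2 hwc1.1.1 (hpm1)
      have hbV0 := chain_step hbV1 hwc0.2.2 hwc0.1.1 (hpm0)
      exact ⟨⟨hbU0, hbU4⟩, ⟨hbV0, hbV4⟩⟩
  have c1 : M.h (Cv (s+6)) ≤ M.h (Cv s) :=
    cross_heads M (fun h => E60 s h.symm) hPL.2 hPL.1 (R60 s).symm (by linarith [M.hab (Cv s), key.1.1])
  have c2 : M.h (Cv s) < M.h (Cv (s+5)) :=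
    align_lt M (fun h => EE50 s h.symm) hPL.2 hPR.2 (adjSymmN (NN50 s)) (by linarith [M.hab (Cv s), key.2.1])
  have c3 : M.h (Cv (s+5)) ≤ M.h (Cv (s+4)) :=
    cross_heads M (Radj4 s).ne hPR.1 hPR.2 (Radj4 s) (by linarith [M.hab (Cv (s+4)), key.2.2])
  have c4 : M.h (Cv (s+4)) < M.h (Cv (s+6)) :=
    align_lt M (fun h => EE64 s h.symm) hPR.1 hPL.1 (adjSymmN (NN64 s)) (by linarith [M.hab (Cv (s+4)), key.1.2])
  linarith

/-! ### Mirror model -/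

def mir (M : AModel) : AModel where
  P := M.P
  a := fun v => -M.b v
  b := fun v => -M.a v
  h := fun v => -M.h v
  hab := fun v => neg_le_neg (M.hab v)
  hpt := fun v hv => by show -M.b v = -M.a v; rw [M.hpt v hv]
  hadj := by
    intro u v hne
    rw [M.hadj u v hne]
    constructor
    · rintro (ho | ⟨hu, hv, hp⟩)
      · exact Or.inl ⟨neg_le_neg ho.2, neg_le_neg ho.1⟩
      · refine Or.inr ⟨hu, hv, ?_⟩
        show (-M.b u - -M.b v) * (-M.h u - -M.h v) ≤ 0
        have e1 := M.hpt u hu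
        have e2 := M.hpt v hv
        have heq : (-M.b u - -M.b v) * (-M.h u - -M.h v) = (M.a u - M.a v) * (M.h u - M.h v) := by
          rw [← e1, ← e2]; ring
        linarith [hp]
    · rintro (ho | ⟨hu, hv, hp⟩)
      · exact Or.inl ⟨le_of_neg_le_neg ho.2, le_of_neg_le_neg ho.1⟩
      · refine Or.inr ⟨hu, hv, ?_⟩
        have hp' : (-M.b u - -M.b v) * (-M.h u - -M.h v) ≤ 0 := hp
        have e1 := M.hpt u hu
        have e2 := M.hpt v hv
        have heq : (-M.b u - -M.b v) * (-M.h u - -M.h v) = (M.a u - M.a v) * (M.h u - M.h v) := by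
          rw [← e1, ← e2]; ring
        linarith [hp']

lemma mir_ovl {u v : V7} : ovl (mir M) u v ↔ ovl M u v :=
  ⟨fun h => ⟨le_of_neg_le_neg h.2, le_of_neg_le_neg h.1⟩,
   fun h => ⟨neg_le_neg h.2, neg_le_neg h.1⟩⟩

lemma cover7 : ∀ i s : ZMod 7,
    i = s ∨ i = s+1 ∨ i = s+2 ∨ i = s+3 ∨ i = s+4 ∨ i = s+5 ∨ i = s+6 := by decide

lemma NN50' : ∀ s : ZMod 7, ¬ (GGraph 7).Adj (Cv (s+5)) (Cv s) := by decide

/-! ### Run of length 6: leads to a mirrored singleton -/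

lemma runMirror6 (s j : ZMod 7)
    (hcL : ¬ ovl M (Cv (s+6)) (Cv s))
    (hcR : ¬ ovl M (Cv (s+5)) (Cv (s+6)))
    (hf0 : ovl M (Cv s) (Cv (s+1)))
    (hf1 : ovl M (Cv (s+1)) (Cv (s+2)))
    (hf2 : ovl M (Cv (s+2)) (Cv (s+3)))
    (hf3 : ovl M (Cv (s+3)) (Cv (s+4)))
    (hf4 : ovl M (Cv (s+4)) (Cv (s+5)))
    (hj : j = 0 ∨ j = 1 ∨ j = 2 ∨ j = 3 ∨ j = 4 ∨ j = 5)
    (hPj : M.P (Cv (s+j)))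
    (hmin : ∀ i : ZMod 7, M.P (Cv i) → M.a (Cv (s+j)) ≤ M.a (Cv i)) : False := by
  have hPL := cross_perm M (R60 s).ne (R60 s) hcL
  have hPR := cross_perm M (Radj5 s).ne (Radj5 s) hcR
  have hbX : M.a (Cv (s+6)) = M.b (Cv (s+6)) := M.hpt _ hPL.1
  have hwc0 := mem_of_ovl M hf0
  have hwc1 := mem_of_ovl M hf1
  have hwc2 := mem_of_ovl M hf2
  have hwc3 := mem_of_ovl M hf3
  have hwc4 := mem_of_ovl M hf4
  have hnm0 : ¬ (M.a (Cv s) ≤ M.a (Cv (s+6)) ∧ M.a (Cv (s+6)) ≤ M.b (Cv s)) :=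
    pt_not_mem M hbX hcL
  have hnm5 : ¬ (M.a (Cv (s+5)) ≤ M.a (Cv (s+6)) ∧ M.a (Cv (s+6)) ≤ M.b (Cv (s+5))) :=
    pt_not_mem M hbX (novl_symm M hcR)
  have hnm1 : ¬ (M.a (Cv (s+1)) ≤ M.a (Cv (s+6)) ∧ M.a (Cv (s+6)) ≤ M.b (Cv (s+1))) :=
    pt_not_mem M hbX (novl_of_nonadj M (EE61 s) (NN61 s))
  have hnm2 : ¬ (M.a (Cv (s+2)) ≤ M.a (Cv (s+6)) ∧ M.a (Cv (s+6)) ≤ M.b (Cv (s+2))) :=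
    pt_not_mem M hbX (novl_of_nonadj M (EE62 s) (NN62 s))
  have hnm3 : ¬ (M.a (Cv (s+3)) ≤ M.a (Cv (s+6)) ∧ M.a (Cv (s+6)) ≤ M.b (Cv (s+3))) :=
    pt_not_mem M hbX (novl_of_nonadj M (EE63 s) (NN63 s))
  have hnm4 : ¬ (M.a (Cv (s+4)) ≤ M.a (Cv (s+6)) ∧ M.a (Cv (s+6)) ≤ M.b (Cv (s+4))) :=
    pt_not_mem M hbX (novl_of_nonadj M (EE64 s) (NN64 s))
  have hanc : M.a (Cv (s+j)) ≤ M.a (Cv (s+6)) := hmin _ hPL.1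
  have key : M.b (Cv s) < M.a (Cv (s+6)) ∧ M.b (Cv (s+1)) < M.a (Cv (s+6)) ∧
      M.b (Cv (s+2)) < M.a (Cv (s+6)) ∧ M.b (Cv (s+3)) < M.a (Cv (s+6)) ∧
      M.b (Cv (s+4)) < M.a (Cv (s+6)) ∧ M.b (Cv (s+5)) < M.a (Cv (s+6)) := by
    rcases hj with hj|hj|hj|hj|hj|hj <;> subst hj
    · rw [add_zero] at hanc
      have hb0 := chain_base (le_refl _) hanc hnm0
      have hb1 := chain_step hb0 hwc0.1.2 hwc0.2.1 hnm1
      have hb2 := chain_step hb1 hwc1.1.2 hwc1.2.1 hnm2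
      have hb3 := chain_step hb2 hwc2.1.2 hwc2.2.1 hnm3
      have hb4 := chain_step hb3 hwc3.1.2 hwc3.2.1 hnm4
      have hb5 := chain_step hb4 hwc4.1.2 hwc4.2.1 hnm5
      exact ⟨hb0, hb1, hb2, hb3, hb4, hb5⟩
    · have hb1 := chain_base (le_refl _) hanc hnm1
      have hb0 := chain_step hb1 hwc0.2.2 hwc0.1.1 hnm0
      have hb2 := chain_step hb1 hwc1.1.2 hwc1.2.1 hnm2
      have hb3 := chain_step hb2 hwc2.1.2 hwc2.2.1 hnm3
      have hb4 := chain_step hb3 hwc3.1.2 hwc3.2.1 hnm4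
      have hb5 := chain_step hb4 hwc4.1.2 hwc4.2.1 hnm5
      exact ⟨hb0, hb1, hb2, hb3, hb4, hb5⟩
    · have hb2 := chain_base (le_refl _) hanc hnm2
      have hb1 := chain_step hb2 hwc1.2.2 hwc1.1.1 hnm1
      have hb0 := chain_step hb1 hwc0.2.2 hwc0.1.1 hnm0
      have hb3 := chain_step hb2 hwc2.1.2 hwc2.2.1 hnm3
      have hb4 := chain_step hb3 hwc3.1.2 hwc3.2.1 hnm4
      have hb5 := chain_step hb4 hwc4.1.2 hwc4.2.1 hnm5
      exact ⟨hb0, hb1, hb2, hb3, hb4, hb5⟩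
    · have hb3 := chain_base (le_refl _) hanc hnm3
      have hb2 := chain_step hb3 hwc2.2.2 hwc2.1.1 hnm2
      have hb1 := chain_step hb2 hwc1.2.2 hwc1.1.1 hnm1
      have hb0 := chain_step hb1 hwc0.2.2 hwc0.1.1 hnm0
      have hb4 := chain_step hb3 hwc3.1.2 hwc3.2.1 hnm4
      have hb5 := chain_step hb4 hwc4.1.2 hwc4.2.1 hnm5
      exact ⟨hb0, hb1, hb2, hb3, hb4, hb5⟩
    · have hb4 := chain_base (le_refl _) hanc hnm4
      have hb3 := chain_step hb4 hwc3.2.2 hwc3.1.1 hnm3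
      have hb2 := chain_step hb3 hwc2.2.2 hwc2.1.1 hnm2
      have hb1 := chain_step hb2 hwc1.2.2 hwc1.1.1 hnm1
      have hb0 := chain_step hb1 hwc0.2.2 hwc0.1.1 hnm0
      have hb5 := chain_step hb4 hwc4.1.2 hwc4.2.1 hnm5
      exact ⟨hb0, hb1, hb2, hb3, hb4, hb5⟩
    · have hb5 := chain_base (le_refl _) hanc hnm5
      have hb4 := chain_step hb5 hwc4.2.2 hwc4.1.1 hnm4
      have hb3 := chain_step hb4 hwc3.2.2 hwc3.1.1 hnm3
      have hb2 := chain_step hb3 hwc2.2.2 hwc2.1.1 hnm2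
      have hb1 := chain_step hb2 hwc1.2.2 hwc1.1.1 hnm1
      have hb0 := chain_step hb1 hwc0.2.2 hwc0.1.1 hnm0
      exact ⟨hb0, hb1, hb2, hb3, hb4, hb5⟩
  -- index arithmetic
  have h7 : (7 : ZMod 7) = 0 := by decide
  have e1 : s + 6 + 1 = s := by linear_combination h7
  have e2 : s + 6 + 6 * 1 = s + 5 := by linear_combination h7
  have e3 : s + 6 + -1 = s + 5 := by ring
  have e4 : s + 6 + 6 * -1 = s := by ring
  -- min property in the mirror model
  have hmin' : ∀ i : ZMod 7, (mir M).P (Cv i) → (mir M).a (Cv (s+6)) ≤ (mir M).a (Cv i) := by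
    intro i hPi
    show -M.b (Cv (s+6)) ≤ -M.b (Cv i)
    have hbi : M.a (Cv i) = M.b (Cv i) := M.hpt _ hPi
    rcases cover7 i s with hi|hi|hi|hi|hi|hi|hi <;> subst hi
    · linarith [key.1]
    · linarith [key.2.1]
    · linarith [key.2.2.1]
    · linarith [key.2.2.2.1]
    · linarith [key.2.2.2.2.1]
    · linarith [key.2.2.2.2.2]
    · exact le_refl _
  -- feet of the two cross partners of (s+6) are distinct
  have hne15 : M.a (Cv (s+5)) ≠ M.a (Cv s) := align_ne M (EE50 s) hPR.1 hPL.2 (NN50' s)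
  rcases lt_or_gt_of_ne hne15 with hlt | hlt
  · -- a(s+5) < a(s) : use d = 1
    have hA1 : ¬ ovl (mir M) (Cv (s+6)) (Cv (s+6+1)) := by
      rw [e1]; exact fun h => hcL ((mir_ovl M).1 h)
    have hA2 : ¬ ovl (mir M) (Cv (s+6)) (Cv (s+6+6*1)) := by
      rw [e2]; exact fun h => (novl_symm M hcR) ((mir_ovl M).1 h)
    have hor : (mir M).a (Cv (s+6+1)) < (mir M).a (Cv (s+6+6*1)) := by
      rw [e1, e2]
      show -M.b (Cv s) < -M.b (Cv (s+5))
      have b1 := M.hpt _ hPL.2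
      have b2 := M.hpt _ hPR.1
      linarith
    exact singleton (mir M) (s+6) 1 (Or.inl rfl) hA1 hA2 hmin' hor
  · -- a(s) < a(s+5) : use d = -1
    have hA1 : ¬ ovl (mir M) (Cv (s+6)) (Cv (s+6+-1)) := by
      rw [e3]; exact fun h => (novl_symm M hcR) ((mir_ovl M).1 h)
    have hA2 : ¬ ovl (mir M) (Cv (s+6)) (Cv (s+6+6*-1)) := by
      rw [e4]; exact fun h => hcL ((mir_ovl M).1 h)
    have hor : (mir M).a (Cv (s+6+-1)) < (mir M).a (Cv (s+6+6*-1)) := by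
      rw [e3, e4]
      show -M.b (Cv (s+5)) < -M.b (Cv s)
      have b1 := M.hpt _ hPL.2
      have b2 := M.hpt _ hPR.1
      linarith
    exact singleton (mir M) (s+6) (-1) (Or.inr rfl) hA1 hA2 hmin' hor

lemma ovl_symm' {u v : V7} (h : ovl M u v) : ovl M v u := ⟨h.2, h.1⟩

lemma cross_ne {u v : V7} (h : ¬ ovl M u v) : M.a u ≠ M.a v :=
  fun he => h ⟨by rw [he]; exact M.hab v, by rw [← he]; exact M.hab u⟩

/-! ### Orientation-free wrappers -/

lemma singletonFull (i₀ : ZMod 7)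
    (hc1 : ¬ ovl M (Cv i₀) (Cv (i₀+1)))
    (hc2 : ¬ ovl M (Cv i₀) (Cv (i₀+6)))
    (hmin : ∀ i : ZMod 7, M.P (Cv i) → M.a (Cv i₀) ≤ M.a (Cv i)) : False := by
  have h7 : (7 : ZMod 7) = 0 := by decide
  have e6 : i₀ + 6*1 = i₀ + 6 := by ring
  have em1 : i₀ + -1 = i₀ + 6 := by linear_combination -h7
  have em6 : i₀ + 6*-1 = i₀ + 1 := by linear_combination -h7
  have hAdj6 : (GGraph 7).Adj (Cv i₀) (Cv (i₀+6)) := (R60 i₀).symm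
  have hP1 := cross_perm M (Radj0 i₀).ne (Radj0 i₀) hc1
  have hP6 := cross_perm M hAdj6.ne hAdj6 hc2
  have hne : M.a (Cv (i₀+1)) ≠ M.a (Cv (i₀+6)) :=
    align_ne M (fun h => EE61 i₀ h.symm) hP1.2 hP6.2 (adjSymmN (NN61 i₀))
  rcases lt_or_gt_of_ne hne with ho | ho
  · exact singleton M i₀ 1 (Or.inl rfl) hc1 (by rw [e6]; exact hc2) hmin
      (by rw [e6]; exact ho)
  · exact singleton M i₀ (-1) (Or.inr rfl) (by rw [em1]; exact hc2) (by rw [em6]; exact hc1)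
      hmin (by rw [em1, em6]; exact ho)

lemma kOneFull (s : ZMod 7)
    (hcross : ¬ ovl M (Cv (s+6)) (Cv s))
    (hf0 : ovl M (Cv s) (Cv (s+1)))
    (hf1 : ovl M (Cv (s+1)) (Cv (s+2)))
    (hf2 : ovl M (Cv (s+2)) (Cv (s+3)))
    (hf3 : ovl M (Cv (s+3)) (Cv (s+4)))
    (hf4 : ovl M (Cv (s+4)) (Cv (s+5)))
    (hf5 : ovl M (Cv (s+5)) (Cv (s+6))) : False := by
  have hne : M.a (Cv (s+6)) ≠ M.a (Cv s) := cross_ne M hcross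
  rcases lt_or_gt_of_ne hne with ho | ho
  · -- a(s+6) < a(s) : kOne (s+6, -1)
    refine kOne M (s+6) (-1) (Or.inr rfl) ?_ ?_ ?_ ?_ ?_ ?_ ?_ ?_
    · rw [show s+6+6*(-1 : ZMod 7) = s by ring]; exact hcross
    · rw [show s+6+(-1 : ZMod 7) = s+5 by ring]; exact ovl_symm' M hf5
    · rw [show s+6+(-1 : ZMod 7) = s+5 by ring, show s+6+2*(-1 : ZMod 7) = s+4 by ring]
      exact ovl_symm' M hf4
    · rw [show s+6+2*(-1 : ZMod 7) = s+4 by ring, show s+6+3*(-1 : ZMod 7) = s+3 by ring]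
      exact ovl_symm' M hf3
    · rw [show s+6+3*(-1 : ZMod 7) = s+3 by ring, show s+6+4*(-1 : ZMod 7) = s+2 by ring]
      exact ovl_symm' M hf2
    · rw [show s+6+4*(-1 : ZMod 7) = s+2 by ring, show s+6+5*(-1 : ZMod 7) = s+1 by ring]
      exact ovl_symm' M hf1
    · rw [show s+6+5*(-1 : ZMod 7) = s+1 by ring, show s+6+6*(-1 : ZMod 7) = s by ring]
      exact ovl_symm' M hf0
    · rw [show s+6+6*(-1 : ZMod 7) = s by ring]; exact ho
  · -- a(s) < a(s+6) : kOne (s, 1)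
    refine kOne M s 1 (Or.inl rfl) ?_ ?_ ?_ ?_ ?_ ?_ ?_ ?_
    · rw [show s+6*(1 : ZMod 7) = s+6 by ring]; exact novl_symm M hcross
    · exact hf0
    · rw [show s+2*(1 : ZMod 7) = s+2 by ring]; exact hf1
    · rw [show s+2*(1 : ZMod 7) = s+2 by ring, show s+3*(1 : ZMod 7) = s+3 by ring]; exact hf2
    · rw [show s+3*(1 : ZMod 7) = s+3 by ring, show s+4*(1 : ZMod 7) = s+4 by ring]; exact hf3
    · rw [show s+4*(1 : ZMod 7) = s+4 by ring, show s+5*(1 : ZMod 7) = s+5 by ring]; exact hf4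
    · rw [show s+5*(1 : ZMod 7) = s+5 by ring, show s+6*(1 : ZMod 7) = s+6 by ring]; exact hf5
    · rw [show s+6*(1 : ZMod 7) = s+6 by ring]; exact ho


/-! ### Transport lemmas along index equalities -/

lemma ovl_congr {x x' y y' : ZMod 7} (hx : x = x') (hy : y = y')
    (h : ovl M (Cv x) (Cv y)) : ovl M (Cv x') (Cv y') := by subst hx; subst hy; exact h

lemma novl_congr {x x' y y' : ZMod 7} (hx : x = x') (hy : y = y')
    (h : ¬ ovl M (Cv x) (Cv y)) : ¬ ovl M (Cv x') (Cv y') := by subst hx; subst hy; exact h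

lemma aP_congr {x x' : ZMod 7} (hx : x = x') (h : M.P (Cv x)) : M.P (Cv x') := by
  subst hx; exact h

lemma amin_congr {x x' : ZMod 7} (hx : x = x')
    (h : ∀ i : ZMod 7, M.P (Cv i) → M.a (Cv x) ≤ M.a (Cv i)) :
    ∀ i : ZMod 7, M.P (Cv i) → M.a (Cv x') ≤ M.a (Cv i) := by subst hx; exact h

/-! ### The main driver -/
set_option maxHeartbeats 2000000 in

lemma core (M : AModel) : False := by
  classical
  have h7 : (7 : ZMod 7) = 0 := by decide
  by_cases hall : ∀ i : ZMod 7, ovl M (Cv i) (Cv (i+1))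
  · exact allflat M hall
  push_neg at hall
  obtain ⟨ic, hic⟩ := hall
  have hPic := cross_perm M (Radj0 ic).ne (Radj0 ic) hic
  have hnonempty : (Finset.univ.filter fun i : ZMod 7 => M.P (Cv i)).Nonempty :=
    ⟨ic, Finset.mem_filter.2 ⟨Finset.mem_univ _, hPic.1⟩⟩
  obtain ⟨i₀, hi₀mem, hminf⟩ := Finset.exists_min_image
    (Finset.univ.filter fun i : ZMod 7 => M.P (Cv i)) (fun i => M.a (Cv i)) hnonempty
  have hPe : M.P (Cv i₀) := (Finset.mem_filter.1 hi₀mem).2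
  have hmin : ∀ i : ZMod 7, M.P (Cv i) → M.a (Cv i₀) ≤ M.a (Cv i) :=
    fun i hi => hminf i (Finset.mem_filter.2 ⟨Finset.mem_univ _, hi⟩)
  by_cases fL1 : ovl M (Cv (i₀-1)) (Cv (i₀-1+1))
  case pos =>
    by_cases fL2 : ovl M (Cv (i₀-2)) (Cv (i₀-2+1))
    case pos =>
      by_cases fL3 : ovl M (Cv (i₀-3)) (Cv (i₀-3+1))
      case pos =>
        by_cases fL4 : ovl M (Cv (i₀-4)) (Cv (i₀-4+1))
        case pos =>
          by_cases fL5 : ovl M (Cv (i₀-5)) (Cv (i₀-5+1))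
          case pos =>
            by_cases fL6 : ovl M (Cv (i₀-6)) (Cv (i₀-6+1))
            case pos =>
              by_cases fR0 : ovl M (Cv i₀) (Cv (i₀+1))
              case pos =>
                rcases cover7 ic i₀ with h|h|h|h|h|h|h <;> subst h
                · exact hic fR0
                · exact hic (ovl_congr M (show (i₀-6 : ZMod 7) = (i₀+1) from by linear_combination (-1 : ZMod 7) * h7) (show (i₀-6+1 : ZMod 7) = (i₀+1+1) from by linear_combination (-1 : ZMod 7) * h7) fL6)
                · exact hic (ovl_congr M (show (i₀-5 : ZMod 7) = (i₀+2) from by linear_combination (-1 : ZMod 7) * h7) (show (i₀-5+1 : ZMod 7) = (i₀+2+1) from by linear_combination (-1 : ZMod 7) * h7) fL5)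
                · exact hic (ovl_congr M (show (i₀-4 : ZMod 7) = (i₀+3) from by linear_combination (-1 : ZMod 7) * h7) (show (i₀-4+1 : ZMod 7) = (i₀+3+1) from by linear_combination (-1 : ZMod 7) * h7) fL4)
                · exact hic (ovl_congr M (show (i₀-3 : ZMod 7) = (i₀+4) from by linear_combination (-1 : ZMod 7) * h7) (show (i₀-3+1 : ZMod 7) = (i₀+4+1) from by linear_combination (-1 : ZMod 7) * h7) fL3)
                · exact hic (ovl_congr M (show (i₀-2 : ZMod 7) = (i₀+5) from by linear_combination (-1 : ZMod 7) * h7) (show (i₀-2+1 : ZMod 7) = (i₀+5+1) from by linear_combination (-1 : ZMod 7) * h7) fL2)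
                · exact hic (ovl_congr M (show (i₀-1 : ZMod 7) = (i₀+6) from by linear_combination (-1 : ZMod 7) * h7) (show (i₀-1+1 : ZMod 7) = (i₀+6+1) from by linear_combination (-1 : ZMod 7) * h7) fL1)
              case neg =>
                have cR := fR0
                have hcross' := novl_congr M (show (i₀ : ZMod 7) = (i₀+1+6) from by linear_combination (-1 : ZMod 7) * h7) (show (i₀+1 : ZMod 7) = (i₀+1) from by ring) cR
                have hf0' := ovl_congr M (show (i₀-6 : ZMod 7) = (i₀+1) from by linear_combination (-1 : ZMod 7) * h7) (show (i₀-6+1 : ZMod 7) = (i₀+1+1) from by linear_combination (-1 : ZMod 7) * h7) fL6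
                have hf1' := ovl_congr M (show (i₀-5 : ZMod 7) = (i₀+1+1) from by linear_combination (-1 : ZMod 7) * h7) (show (i₀-5+1 : ZMod 7) = (i₀+1+2) from by linear_combination (-1 : ZMod 7) * h7) fL5
                have hf2' := ovl_congr M (show (i₀-4 : ZMod 7) = (i₀+1+2) from by linear_combination (-1 : ZMod 7) * h7) (show (i₀-4+1 : ZMod 7) = (i₀+1+3) from by linear_combination (-1 : ZMod 7) * h7) fL4
                have hf3' := ovl_congr M (show (i₀-3 : ZMod 7) = (i₀+1+3) from by linear_combination (-1 : ZMod 7) * h7) (show (i₀-3+1 : ZMod 7) = (i₀+1+4) from by linear_combination (-1 : ZMod 7) * h7) fL3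
                have hf4' := ovl_congr M (show (i₀-2 : ZMod 7) = (i₀+1+4) from by linear_combination (-1 : ZMod 7) * h7) (show (i₀-2+1 : ZMod 7) = (i₀+1+5) from by linear_combination (-1 : ZMod 7) * h7) fL2
                have hf5' := ovl_congr M (show (i₀-1 : ZMod 7) = (i₀+1+5) from by linear_combination (-1 : ZMod 7) * h7) (show (i₀-1+1 : ZMod 7) = (i₀+1+6) from by linear_combination (-1 : ZMod 7) * h7) fL1
                exact kOneFull M (i₀+1) hcross' hf0' hf1' hf2' hf3' hf4' hf5'
            case neg =>
              have cL := fL6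
              by_cases fR0 : ovl M (Cv i₀) (Cv (i₀+1))
              case neg =>
                have cR := fR0
                have hcL' := novl_congr M (show (i₀-6 : ZMod 7) = (i₀-5+6) from by linear_combination (-1 : ZMod 7) * h7) (show (i₀-6+1 : ZMod 7) = (i₀-5) from by ring) cL
                have hcR' := novl_congr M (show (i₀ : ZMod 7) = (i₀-5+5) from by ring) (show (i₀+1 : ZMod 7) = (i₀-5+6) from by ring) cR
                have hf0' := ovl_congr M (show (i₀-5 : ZMod 7) = (i₀-5) from by ring) (show (i₀-5+1 : ZMod 7) = (i₀-5+1) from by ring) fL5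
                have hf1' := ovl_congr M (show (i₀-4 : ZMod 7) = (i₀-5+1) from by ring) (show (i₀-4+1 : ZMod 7) = (i₀-5+2) from by ring) fL4
                have hf2' := ovl_congr M (show (i₀-3 : ZMod 7) = (i₀-5+2) from by ring) (show (i₀-3+1 : ZMod 7) = (i₀-5+3) from by ring) fL3
                have hf3' := ovl_congr M (show (i₀-2 : ZMod 7) = (i₀-5+3) from by ring) (show (i₀-2+1 : ZMod 7) = (i₀-5+4) from by ring) fL2
                have hf4' := ovl_congr M (show (i₀-1 : ZMod 7) = (i₀-5+4) from by ring) (show (i₀-1+1 : ZMod 7) = (i₀-5+5) from by ring) fL1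
                have hPj' := aP_congr M (show (i₀ : ZMod 7) = (i₀-5+5) from by ring) hPe
                have hmin' := amin_congr M (show (i₀ : ZMod 7) = (i₀-5+5) from by ring) hmin
                exact runMirror6 M (i₀-5) 5 hcL' hcR' hf0' hf1' hf2' hf3' hf4' (by decide) hPj' hmin'
              case pos =>
              have hcross' := novl_congr M (show (i₀-6 : ZMod 7) = (i₀-5+6) from by linear_combination (-1 : ZMod 7) * h7) (show (i₀-6+1 : ZMod 7) = (i₀-5) from by ring) cL
              have hf0' := ovl_congr M (show (i₀-5 : ZMod 7) = (i₀-5) from by ring) (show (i₀-5+1 : ZMod 7) = (i₀-5+1) from by ring) fL5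
              have hf1' := ovl_congr M (show (i₀-4 : ZMod 7) = (i₀-5+1) from by ring) (show (i₀-4+1 : ZMod 7) = (i₀-5+2) from by ring) fL4
              have hf2' := ovl_congr M (show (i₀-3 : ZMod 7) = (i₀-5+2) from by ring) (show (i₀-3+1 : ZMod 7) = (i₀-5+3) from by ring) fL3
              have hf3' := ovl_congr M (show (i₀-2 : ZMod 7) = (i₀-5+3) from by ring) (show (i₀-2+1 : ZMod 7) = (i₀-5+4) from by ring) fL2
              have hf4' := ovl_congr M (show (i₀-1 : ZMod 7) = (i₀-5+4) from by ring) (show (i₀-1+1 : ZMod 7) = (i₀-5+5) from by ring) fL1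
              have hf5' := ovl_congr M (show (i₀ : ZMod 7) = (i₀-5+5) from by ring) (show (i₀+1 : ZMod 7) = (i₀-5+6) from by ring) fR0
              exact kOneFull M (i₀-5) hcross' hf0' hf1' hf2' hf3' hf4' hf5'
          case neg =>
            have cL := fL5
            by_cases fR0 : ovl M (Cv i₀) (Cv (i₀+1))
            case neg =>
              have cR := fR0
              have hcL' := novl_congr M (show (i₀-5 : ZMod 7) = (i₀-4+6) from by linear_combination (-1 : ZMod 7) * h7) (show (i₀-5+1 : ZMod 7) = (i₀-4) from by ring) cL
              have hcR' := novl_congr M (show (i₀ : ZMod 7) = (i₀-4+4) from by ring) (show (i₀+1 : ZMod 7) = (i₀-4+5) from by ring) cR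
              have hf0' := ovl_congr M (show (i₀-4 : ZMod 7) = (i₀-4) from by ring) (show (i₀-4+1 : ZMod 7) = (i₀-4+1) from by ring) fL4
              have hf1' := ovl_congr M (show (i₀-3 : ZMod 7) = (i₀-4+1) from by ring) (show (i₀-3+1 : ZMod 7) = (i₀-4+2) from by ring) fL3
              have hf2' := ovl_congr M (show (i₀-2 : ZMod 7) = (i₀-4+2) from by ring) (show (i₀-2+1 : ZMod 7) = (i₀-4+3) from by ring) fL2
              have hf3' := ovl_congr M (show (i₀-1 : ZMod 7) = (i₀-4+3) from by ring) (show (i₀-1+1 : ZMod 7) = (i₀-4+4) from by ring) fL1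
              have hPj' := aP_congr M (show (i₀ : ZMod 7) = (i₀-4+4) from by ring) hPe
              have hmin' := amin_congr M (show (i₀ : ZMod 7) = (i₀-4+4) from by ring) hmin
              exact runT5_5 M (i₀-4) 4 hcL' hcR' hf0' hf1' hf2' hf3' (by decide) hPj' hmin'
            case pos =>
            by_cases fR1 : ovl M (Cv (i₀+1)) (Cv (i₀+1+1))
            case neg =>
              have cR := fR1
              have hcL' := novl_congr M (show (i₀-5 : ZMod 7) = (i₀-4+6) from by linear_combination (-1 : ZMod 7) * h7) (show (i₀-5+1 : ZMod 7) = (i₀-4) from by ring) cL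
              have hcR' := novl_congr M (show (i₀+1 : ZMod 7) = (i₀-4+5) from by ring) (show (i₀+1+1 : ZMod 7) = (i₀-4+6) from by ring) cR
              have hf0' := ovl_congr M (show (i₀-4 : ZMod 7) = (i₀-4) from by ring) (show (i₀-4+1 : ZMod 7) = (i₀-4+1) from by ring) fL4
              have hf1' := ovl_congr M (show (i₀-3 : ZMod 7) = (i₀-4+1) from by ring) (show (i₀-3+1 : ZMod 7) = (i₀-4+2) from by ring) fL3
              have hf2' := ovl_congr M (show (i₀-2 : ZMod 7) = (i₀-4+2) from by ring) (show (i₀-2+1 : ZMod 7) = (i₀-4+3) from by ring) fL2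
              have hf3' := ovl_congr M (show (i₀-1 : ZMod 7) = (i₀-4+3) from by ring) (show (i₀-1+1 : ZMod 7) = (i₀-4+4) from by ring) fL1
              have hf4' := ovl_congr M (show (i₀ : ZMod 7) = (i₀-4+4) from by ring) (show (i₀+1 : ZMod 7) = (i₀-4+5) from by ring) fR0
              have hPj' := aP_congr M (show (i₀ : ZMod 7) = (i₀-4+4) from by ring) hPe
              have hmin' := amin_congr M (show (i₀ : ZMod 7) = (i₀-4+4) from by ring) hmin
              exact runMirror6 M (i₀-4) 4 hcL' hcR' hf0' hf1' hf2' hf3' hf4' (by decide) hPj' hmin'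
            case pos =>
            have hcross' := novl_congr M (show (i₀-5 : ZMod 7) = (i₀-4+6) from by linear_combination (-1 : ZMod 7) * h7) (show (i₀-5+1 : ZMod 7) = (i₀-4) from by ring) cL
            have hf0' := ovl_congr M (show (i₀-4 : ZMod 7) = (i₀-4) from by ring) (show (i₀-4+1 : ZMod 7) = (i₀-4+1) from by ring) fL4
            have hf1' := ovl_congr M (show (i₀-3 : ZMod 7) = (i₀-4+1) from by ring) (show (i₀-3+1 : ZMod 7) = (i₀-4+2) from by ring) fL3
            have hf2' := ovl_congr M (show (i₀-2 : ZMod 7) = (i₀-4+2) from by ring) (show (i₀-2+1 : ZMod 7) = (i₀-4+3) from by ring) fL2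
            have hf3' := ovl_congr M (show (i₀-1 : ZMod 7) = (i₀-4+3) from by ring) (show (i₀-1+1 : ZMod 7) = (i₀-4+4) from by ring) fL1
            have hf4' := ovl_congr M (show (i₀ : ZMod 7) = (i₀-4+4) from by ring) (show (i₀+1 : ZMod 7) = (i₀-4+5) from by ring) fR0
            have hf5' := ovl_congr M (show (i₀+1 : ZMod 7) = (i₀-4+5) from by ring) (show (i₀+1+1 : ZMod 7) = (i₀-4+6) from by ring) fR1
            exact kOneFull M (i₀-4) hcross' hf0' hf1' hf2' hf3' hf4' hf5'
        case neg =>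
          have cL := fL4
          by_cases fR0 : ovl M (Cv i₀) (Cv (i₀+1))
          case neg =>
            have cR := fR0
            have hcL' := novl_congr M (show (i₀-4 : ZMod 7) = (i₀-3+6) from by linear_combination (-1 : ZMod 7) * h7) (show (i₀-4+1 : ZMod 7) = (i₀-3) from by ring) cL
            have hcR' := novl_congr M (show (i₀ : ZMod 7) = (i₀-3+3) from by ring) (show (i₀+1 : ZMod 7) = (i₀-3+4) from by ring) cR
            have hf0' := ovl_congr M (show (i₀-3 : ZMod 7) = (i₀-3) from by ring) (show (i₀-3+1 : ZMod 7) = (i₀-3+1) from by ring) fL3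
            have hf1' := ovl_congr M (show (i₀-2 : ZMod 7) = (i₀-3+1) from by ring) (show (i₀-2+1 : ZMod 7) = (i₀-3+2) from by ring) fL2
            have hf2' := ovl_congr M (show (i₀-1 : ZMod 7) = (i₀-3+2) from by ring) (show (i₀-1+1 : ZMod 7) = (i₀-3+3) from by ring) fL1
            have hPj' := aP_congr M (show (i₀ : ZMod 7) = (i₀-3+3) from by ring) hPe
            have hmin' := amin_congr M (show (i₀ : ZMod 7) = (i₀-3+3) from by ring) hmin
            exact runT5_4 M (i₀-3) 3 hcL' hcR' hf0' hf1' hf2' (by decide) hPj' hmin'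
          case pos =>
          by_cases fR1 : ovl M (Cv (i₀+1)) (Cv (i₀+1+1))
          case neg =>
            have cR := fR1
            have hcL' := novl_congr M (show (i₀-4 : ZMod 7) = (i₀-3+6) from by linear_combination (-1 : ZMod 7) * h7) (show (i₀-4+1 : ZMod 7) = (i₀-3) from by ring) cL
            have hcR' := novl_congr M (show (i₀+1 : ZMod 7) = (i₀-3+4) from by ring) (show (i₀+1+1 : ZMod 7) = (i₀-3+5) from by ring) cR
            have hf0' := ovl_congr M (show (i₀-3 : ZMod 7) = (i₀-3) from by ring) (show (i₀-3+1 : ZMod 7) = (i₀-3+1) from by ring) fL3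
            have hf1' := ovl_congr M (show (i₀-2 : ZMod 7) = (i₀-3+1) from by ring) (show (i₀-2+1 : ZMod 7) = (i₀-3+2) from by ring) fL2
            have hf2' := ovl_congr M (show (i₀-1 : ZMod 7) = (i₀-3+2) from by ring) (show (i₀-1+1 : ZMod 7) = (i₀-3+3) from by ring) fL1
            have hf3' := ovl_congr M (show (i₀ : ZMod 7) = (i₀-3+3) from by ring) (show (i₀+1 : ZMod 7) = (i₀-3+4) from by ring) fR0
            have hPj' := aP_congr M (show (i₀ : ZMod 7) = (i₀-3+3) from by ring) hPe
            have hmin' := amin_congr M (show (i₀ : ZMod 7) = (i₀-3+3) from by ring) hmin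
            exact runT5_5 M (i₀-3) 3 hcL' hcR' hf0' hf1' hf2' hf3' (by decide) hPj' hmin'
          case pos =>
          by_cases fR2 : ovl M (Cv (i₀+2)) (Cv (i₀+2+1))
          case neg =>
            have cR := fR2
            have hcL' := novl_congr M (show (i₀-4 : ZMod 7) = (i₀-3+6) from by linear_combination (-1 : ZMod 7) * h7) (show (i₀-4+1 : ZMod 7) = (i₀-3) from by ring) cL
            have hcR' := novl_congr M (show (i₀+2 : ZMod 7) = (i₀-3+5) from by ring) (show (i₀+2+1 : ZMod 7) = (i₀-3+6) from by ring) cR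
            have hf0' := ovl_congr M (show (i₀-3 : ZMod 7) = (i₀-3) from by ring) (show (i₀-3+1 : ZMod 7) = (i₀-3+1) from by ring) fL3
            have hf1' := ovl_congr M (show (i₀-2 : ZMod 7) = (i₀-3+1) from by ring) (show (i₀-2+1 : ZMod 7) = (i₀-3+2) from by ring) fL2
            have hf2' := ovl_congr M (show (i₀-1 : ZMod 7) = (i₀-3+2) from by ring) (show (i₀-1+1 : ZMod 7) = (i₀-3+3) from by ring) fL1
            have hf3' := ovl_congr M (show (i₀ : ZMod 7) = (i₀-3+3) from by ring) (show (i₀+1 : ZMod 7) = (i₀-3+4) from by ring) fR0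
            have hf4' := ovl_congr M (show (i₀+1 : ZMod 7) = (i₀-3+4) from by ring) (show (i₀+1+1 : ZMod 7) = (i₀-3+5) from by ring) fR1
            have hPj' := aP_congr M (show (i₀ : ZMod 7) = (i₀-3+3) from by ring) hPe
            have hmin' := amin_congr M (show (i₀ : ZMod 7) = (i₀-3+3) from by ring) hmin
            exact runMirror6 M (i₀-3) 3 hcL' hcR' hf0' hf1' hf2' hf3' hf4' (by decide) hPj' hmin'
          case pos =>
          have hcross' := novl_congr M (show (i₀-4 : ZMod 7) = (i₀-3+6) from by linear_combination (-1 : ZMod 7) * h7) (show (i₀-4+1 : ZMod 7) = (i₀-3) from by ring) cL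
          have hf0' := ovl_congr M (show (i₀-3 : ZMod 7) = (i₀-3) from by ring) (show (i₀-3+1 : ZMod 7) = (i₀-3+1) from by ring) fL3
          have hf1' := ovl_congr M (show (i₀-2 : ZMod 7) = (i₀-3+1) from by ring) (show (i₀-2+1 : ZMod 7) = (i₀-3+2) from by ring) fL2
          have hf2' := ovl_congr M (show (i₀-1 : ZMod 7) = (i₀-3+2) from by ring) (show (i₀-1+1 : ZMod 7) = (i₀-3+3) from by ring) fL1
          have hf3' := ovl_congr M (show (i₀ : ZMod 7) = (i₀-3+3) from by ring) (show (i₀+1 : ZMod 7) = (i₀-3+4) from by ring) fR0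
          have hf4' := ovl_congr M (show (i₀+1 : ZMod 7) = (i₀-3+4) from by ring) (show (i₀+1+1 : ZMod 7) = (i₀-3+5) from by ring) fR1
          have hf5' := ovl_congr M (show (i₀+2 : ZMod 7) = (i₀-3+5) from by ring) (show (i₀+2+1 : ZMod 7) = (i₀-3+6) from by ring) fR2
          exact kOneFull M (i₀-3) hcross' hf0' hf1' hf2' hf3' hf4' hf5'
      case neg =>
        have cL := fL3
        by_cases fR0 : ovl M (Cv i₀) (Cv (i₀+1))
        case neg =>
          have cR := fR0
          have hcL' := novl_congr M (show (i₀-3 : ZMod 7) = (i₀-2+6) from by linear_combination (-1 : ZMod 7) * h7) (show (i₀-3+1 : ZMod 7) = (i₀-2) from by ring) cL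
          have hcR' := novl_congr M (show (i₀ : ZMod 7) = (i₀-2+2) from by ring) (show (i₀+1 : ZMod 7) = (i₀-2+3) from by ring) cR
          have hf0' := ovl_congr M (show (i₀-2 : ZMod 7) = (i₀-2) from by ring) (show (i₀-2+1 : ZMod 7) = (i₀-2+1) from by ring) fL2
          have hf1' := ovl_congr M (show (i₀-1 : ZMod 7) = (i₀-2+1) from by ring) (show (i₀-1+1 : ZMod 7) = (i₀-2+2) from by ring) fL1
          have hPj' := aP_congr M (show (i₀ : ZMod 7) = (i₀-2+2) from by ring) hPe
          have hmin' := amin_congr M (show (i₀ : ZMod 7) = (i₀-2+2) from by ring) hmin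
          exact runT5_3 M (i₀-2) 2 hcL' hcR' hf0' hf1' (by decide) hPj' hmin'
        case pos =>
        by_cases fR1 : ovl M (Cv (i₀+1)) (Cv (i₀+1+1))
        case neg =>
          have cR := fR1
          have hcL' := novl_congr M (show (i₀-3 : ZMod 7) = (i₀-2+6) from by linear_combination (-1 : ZMod 7) * h7) (show (i₀-3+1 : ZMod 7) = (i₀-2) from by ring) cL
          have hcR' := novl_congr M (show (i₀+1 : ZMod 7) = (i₀-2+3) from by ring) (show (i₀+1+1 : ZMod 7) = (i₀-2+4) from by ring) cR
          have hf0' := ovl_congr M (show (i₀-2 : ZMod 7) = (i₀-2) from by ring) (show (i₀-2+1 : ZMod 7) = (i₀-2+1) from by ring) fL2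
          have hf1' := ovl_congr M (show (i₀-1 : ZMod 7) = (i₀-2+1) from by ring) (show (i₀-1+1 : ZMod 7) = (i₀-2+2) from by ring) fL1
          have hf2' := ovl_congr M (show (i₀ : ZMod 7) = (i₀-2+2) from by ring) (show (i₀+1 : ZMod 7) = (i₀-2+3) from by ring) fR0
          have hPj' := aP_congr M (show (i₀ : ZMod 7) = (i₀-2+2) from by ring) hPe
          have hmin' := amin_congr M (show (i₀ : ZMod 7) = (i₀-2+2) from by ring) hmin
          exact runT5_4 M (i₀-2) 2 hcL' hcR' hf0' hf1' hf2' (by decide) hPj' hmin'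
        case pos =>
        by_cases fR2 : ovl M (Cv (i₀+2)) (Cv (i₀+2+1))
        case neg =>
          have cR := fR2
          have hcL' := novl_congr M (show (i₀-3 : ZMod 7) = (i₀-2+6) from by linear_combination (-1 : ZMod 7) * h7) (show (i₀-3+1 : ZMod 7) = (i₀-2) from by ring) cL
          have hcR' := novl_congr M (show (i₀+2 : ZMod 7) = (i₀-2+4) from by ring) (show (i₀+2+1 : ZMod 7) = (i₀-2+5) from by ring) cR
          have hf0' := ovl_congr M (show (i₀-2 : ZMod 7) = (i₀-2) from by ring) (show (i₀-2+1 : ZMod 7) = (i₀-2+1) from by ring) fL2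
          have hf1' := ovl_congr M (show (i₀-1 : ZMod 7) = (i₀-2+1) from by ring) (show (i₀-1+1 : ZMod 7) = (i₀-2+2) from by ring) fL1
          have hf2' := ovl_congr M (show (i₀ : ZMod 7) = (i₀-2+2) from by ring) (show (i₀+1 : ZMod 7) = (i₀-2+3) from by ring) fR0
          have hf3' := ovl_congr M (show (i₀+1 : ZMod 7) = (i₀-2+3) from by ring) (show (i₀+1+1 : ZMod 7) = (i₀-2+4) from by ring) fR1
          have hPj' := aP_congr M (show (i₀ : ZMod 7) = (i₀-2+2) from by ring) hPe
          have hmin' := amin_congr M (show (i₀ : ZMod 7) = (i₀-2+2) from by ring) hmin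
          exact runT5_5 M (i₀-2) 2 hcL' hcR' hf0' hf1' hf2' hf3' (by decide) hPj' hmin'
        case pos =>
        by_cases fR3 : ovl M (Cv (i₀+3)) (Cv (i₀+3+1))
        case neg =>
          have cR := fR3
          have hcL' := novl_congr M (show (i₀-3 : ZMod 7) = (i₀-2+6) from by linear_combination (-1 : ZMod 7) * h7) (show (i₀-3+1 : ZMod 7) = (i₀-2) from by ring) cL
          have hcR' := novl_congr M (show (i₀+3 : ZMod 7) = (i₀-2+5) from by ring) (show (i₀+3+1 : ZMod 7) = (i₀-2+6) from by ring) cR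
          have hf0' := ovl_congr M (show (i₀-2 : ZMod 7) = (i₀-2) from by ring) (show (i₀-2+1 : ZMod 7) = (i₀-2+1) from by ring) fL2
          have hf1' := ovl_congr M (show (i₀-1 : ZMod 7) = (i₀-2+1) from by ring) (show (i₀-1+1 : ZMod 7) = (i₀-2+2) from by ring) fL1
          have hf2' := ovl_congr M (show (i₀ : ZMod 7) = (i₀-2+2) from by ring) (show (i₀+1 : ZMod 7) = (i₀-2+3) from by ring) fR0
          have hf3' := ovl_congr M (show (i₀+1 : ZMod 7) = (i₀-2+3) from by ring) (show (i₀+1+1 : ZMod 7) = (i₀-2+4) from by ring) fR1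
          have hf4' := ovl_congr M (show (i₀+2 : ZMod 7) = (i₀-2+4) from by ring) (show (i₀+2+1 : ZMod 7) = (i₀-2+5) from by ring) fR2
          have hPj' := aP_congr M (show (i₀ : ZMod 7) = (i₀-2+2) from by ring) hPe
          have hmin' := amin_congr M (show (i₀ : ZMod 7) = (i₀-2+2) from by ring) hmin
          exact runMirror6 M (i₀-2) 2 hcL' hcR' hf0' hf1' hf2' hf3' hf4' (by decide) hPj' hmin'
        case pos =>
        have hcross' := novl_congr M (show (i₀-3 : ZMod 7) = (i₀-2+6) from by linear_combination (-1 : ZMod 7) * h7) (show (i₀-3+1 : ZMod 7) = (i₀-2) from by ring) cL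
        have hf0' := ovl_congr M (show (i₀-2 : ZMod 7) = (i₀-2) from by ring) (show (i₀-2+1 : ZMod 7) = (i₀-2+1) from by ring) fL2
        have hf1' := ovl_congr M (show (i₀-1 : ZMod 7) = (i₀-2+1) from by ring) (show (i₀-1+1 : ZMod 7) = (i₀-2+2) from by ring) fL1
        have hf2' := ovl_congr M (show (i₀ : ZMod 7) = (i₀-2+2) from by ring) (show (i₀+1 : ZMod 7) = (i₀-2+3) from by ring) fR0
        have hf3' := ovl_congr M (show (i₀+1 : ZMod 7) = (i₀-2+3) from by ring) (show (i₀+1+1 : ZMod 7) = (i₀-2+4) from by ring) fR1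
        have hf4' := ovl_congr M (show (i₀+2 : ZMod 7) = (i₀-2+4) from by ring) (show (i₀+2+1 : ZMod 7) = (i₀-2+5) from by ring) fR2
        have hf5' := ovl_congr M (show (i₀+3 : ZMod 7) = (i₀-2+5) from by ring) (show (i₀+3+1 : ZMod 7) = (i₀-2+6) from by ring) fR3
        exact kOneFull M (i₀-2) hcross' hf0' hf1' hf2' hf3' hf4' hf5'
    case neg =>
      have cL := fL2
      by_cases fR0 : ovl M (Cv i₀) (Cv (i₀+1))
      case neg =>
        have cR := fR0
        have hcL' := novl_congr M (show (i₀-2 : ZMod 7) = (i₀-1+6) from by linear_combination (-1 : ZMod 7) * h7) (show (i₀-2+1 : ZMod 7) = (i₀-1) from by ring) cL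
        have hcR' := novl_congr M (show (i₀ : ZMod 7) = (i₀-1+1) from by ring) (show (i₀+1 : ZMod 7) = (i₀-1+2) from by ring) cR
        have hf0' := ovl_congr M (show (i₀-1 : ZMod 7) = (i₀-1) from by ring) (show (i₀-1+1 : ZMod 7) = (i₀-1+1) from by ring) fL1
        have hPj' := aP_congr M (show (i₀ : ZMod 7) = (i₀-1+1) from by ring) hPe
        have hmin' := amin_congr M (show (i₀ : ZMod 7) = (i₀-1+1) from by ring) hmin
        exact runT5_2 M (i₀-1) 1 hcL' hcR' hf0' (by decide) hPj' hmin'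
      case pos =>
      by_cases fR1 : ovl M (Cv (i₀+1)) (Cv (i₀+1+1))
      case neg =>
        have cR := fR1
        have hcL' := novl_congr M (show (i₀-2 : ZMod 7) = (i₀-1+6) from by linear_combination (-1 : ZMod 7) * h7) (show (i₀-2+1 : ZMod 7) = (i₀-1) from by ring) cL
        have hcR' := novl_congr M (show (i₀+1 : ZMod 7) = (i₀-1+2) from by ring) (show (i₀+1+1 : ZMod 7) = (i₀-1+3) from by ring) cR
        have hf0' := ovl_congr M (show (i₀-1 : ZMod 7) = (i₀-1) from by ring) (show (i₀-1+1 : ZMod 7) = (i₀-1+1) from by ring) fL1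
        have hf1' := ovl_congr M (show (i₀ : ZMod 7) = (i₀-1+1) from by ring) (show (i₀+1 : ZMod 7) = (i₀-1+2) from by ring) fR0
        have hPj' := aP_congr M (show (i₀ : ZMod 7) = (i₀-1+1) from by ring) hPe
        have hmin' := amin_congr M (show (i₀ : ZMod 7) = (i₀-1+1) from by ring) hmin
        exact runT5_3 M (i₀-1) 1 hcL' hcR' hf0' hf1' (by decide) hPj' hmin'
      case pos =>
      by_cases fR2 : ovl M (Cv (i₀+2)) (Cv (i₀+2+1))
      case neg =>
        have cR := fR2
        have hcL' := novl_congr M (show (i₀-2 : ZMod 7) = (i₀-1+6) from by linear_combination (-1 : ZMod 7) * h7) (show (i₀-2+1 : ZMod 7) = (i₀-1) from by ring) cL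
        have hcR' := novl_congr M (show (i₀+2 : ZMod 7) = (i₀-1+3) from by ring) (show (i₀+2+1 : ZMod 7) = (i₀-1+4) from by ring) cR
        have hf0' := ovl_congr M (show (i₀-1 : ZMod 7) = (i₀-1) from by ring) (show (i₀-1+1 : ZMod 7) = (i₀-1+1) from by ring) fL1
        have hf1' := ovl_congr M (show (i₀ : ZMod 7) = (i₀-1+1) from by ring) (show (i₀+1 : ZMod 7) = (i₀-1+2) from by ring) fR0
        have hf2' := ovl_congr M (show (i₀+1 : ZMod 7) = (i₀-1+2) from by ring) (show (i₀+1+1 : ZMod 7) = (i₀-1+3) from by ring) fR1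
        have hPj' := aP_congr M (show (i₀ : ZMod 7) = (i₀-1+1) from by ring) hPe
        have hmin' := amin_congr M (show (i₀ : ZMod 7) = (i₀-1+1) from by ring) hmin
        exact runT5_4 M (i₀-1) 1 hcL' hcR' hf0' hf1' hf2' (by decide) hPj' hmin'
      case pos =>
      by_cases fR3 : ovl M (Cv (i₀+3)) (Cv (i₀+3+1))
      case neg =>
        have cR := fR3
        have hcL' := novl_congr M (show (i₀-2 : ZMod 7) = (i₀-1+6) from by linear_combination (-1 : ZMod 7) * h7) (show (i₀-2+1 : ZMod 7) = (i₀-1) from by ring) cL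
        have hcR' := novl_congr M (show (i₀+3 : ZMod 7) = (i₀-1+4) from by ring) (show (i₀+3+1 : ZMod 7) = (i₀-1+5) from by ring) cR
        have hf0' := ovl_congr M (show (i₀-1 : ZMod 7) = (i₀-1) from by ring) (show (i₀-1+1 : ZMod 7) = (i₀-1+1) from by ring) fL1
        have hf1' := ovl_congr M (show (i₀ : ZMod 7) = (i₀-1+1) from by ring) (show (i₀+1 : ZMod 7) = (i₀-1+2) from by ring) fR0
        have hf2' := ovl_congr M (show (i₀+1 : ZMod 7) = (i₀-1+2) from by ring) (show (i₀+1+1 : ZMod 7) = (i₀-1+3) from by ring) fR1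
        have hf3' := ovl_congr M (show (i₀+2 : ZMod 7) = (i₀-1+3) from by ring) (show (i₀+2+1 : ZMod 7) = (i₀-1+4) from by ring) fR2
        have hPj' := aP_congr M (show (i₀ : ZMod 7) = (i₀-1+1) from by ring) hPe
        have hmin' := amin_congr M (show (i₀ : ZMod 7) = (i₀-1+1) from by ring) hmin
        exact runT5_5 M (i₀-1) 1 hcL' hcR' hf0' hf1' hf2' hf3' (by decide) hPj' hmin'
      case pos =>
      by_cases fR4 : ovl M (Cv (i₀+4)) (Cv (i₀+4+1))
      case neg =>
        have cR := fR4
        have hcL' := novl_congr M (show (i₀-2 : ZMod 7) = (i₀-1+6) from by linear_combination (-1 : ZMod 7) * h7) (show (i₀-2+1 : ZMod 7) = (i₀-1) from by ring) cL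
        have hcR' := novl_congr M (show (i₀+4 : ZMod 7) = (i₀-1+5) from by ring) (show (i₀+4+1 : ZMod 7) = (i₀-1+6) from by ring) cR
        have hf0' := ovl_congr M (show (i₀-1 : ZMod 7) = (i₀-1) from by ring) (show (i₀-1+1 : ZMod 7) = (i₀-1+1) from by ring) fL1
        have hf1' := ovl_congr M (show (i₀ : ZMod 7) = (i₀-1+1) from by ring) (show (i₀+1 : ZMod 7) = (i₀-1+2) from by ring) fR0
        have hf2' := ovl_congr M (show (i₀+1 : ZMod 7) = (i₀-1+2) from by ring) (show (i₀+1+1 : ZMod 7) = (i₀-1+3) from by ring) fR1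
        have hf3' := ovl_congr M (show (i₀+2 : ZMod 7) = (i₀-1+3) from by ring) (show (i₀+2+1 : ZMod 7) = (i₀-1+4) from by ring) fR2
        have hf4' := ovl_congr M (show (i₀+3 : ZMod 7) = (i₀-1+4) from by ring) (show (i₀+3+1 : ZMod 7) = (i₀-1+5) from by ring) fR3
        have hPj' := aP_congr M (show (i₀ : ZMod 7) = (i₀-1+1) from by ring) hPe
        have hmin' := amin_congr M (show (i₀ : ZMod 7) = (i₀-1+1) from by ring) hmin
        exact runMirror6 M (i₀-1) 1 hcL' hcR' hf0' hf1' hf2' hf3' hf4' (by decide) hPj' hmin'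
      case pos =>
      have hcross' := novl_congr M (show (i₀-2 : ZMod 7) = (i₀-1+6) from by linear_combination (-1 : ZMod 7) * h7) (show (i₀-2+1 : ZMod 7) = (i₀-1) from by ring) cL
      have hf0' := ovl_congr M (show (i₀-1 : ZMod 7) = (i₀-1) from by ring) (show (i₀-1+1 : ZMod 7) = (i₀-1+1) from by ring) fL1
      have hf1' := ovl_congr M (show (i₀ : ZMod 7) = (i₀-1+1) from by ring) (show (i₀+1 : ZMod 7) = (i₀-1+2) from by ring) fR0
      have hf2' := ovl_congr M (show (i₀+1 : ZMod 7) = (i₀-1+2) from by ring) (show (i₀+1+1 : ZMod 7) = (i₀-1+3) from by ring) fR1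
      have hf3' := ovl_congr M (show (i₀+2 : ZMod 7) = (i₀-1+3) from by ring) (show (i₀+2+1 : ZMod 7) = (i₀-1+4) from by ring) fR2
      have hf4' := ovl_congr M (show (i₀+3 : ZMod 7) = (i₀-1+4) from by ring) (show (i₀+3+1 : ZMod 7) = (i₀-1+5) from by ring) fR3
      have hf5' := ovl_congr M (show (i₀+4 : ZMod 7) = (i₀-1+5) from by ring) (show (i₀+4+1 : ZMod 7) = (i₀-1+6) from by ring) fR4
      exact kOneFull M (i₀-1) hcross' hf0' hf1' hf2' hf3' hf4' hf5'
  case neg =>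
    have cL := fL1
    by_cases fR0 : ovl M (Cv i₀) (Cv (i₀+1))
    case neg =>
      have cR := fR0
      have hc2' := novl_congr M (show (i₀-1+1 : ZMod 7) = (i₀) from by ring) (show (i₀-1 : ZMod 7) = (i₀+6) from by linear_combination (-1 : ZMod 7) * h7) (novl_symm M cL)
      exact singletonFull M i₀ cR hc2' hmin
    case pos =>
    by_cases fR1 : ovl M (Cv (i₀+1)) (Cv (i₀+1+1))
    case neg =>
      have cR := fR1
      have hcL' := novl_congr M (show (i₀-1 : ZMod 7) = (i₀+6) from by linear_combination (-1 : ZMod 7) * h7) (show (i₀-1+1 : ZMod 7) = (i₀) from by ring) cL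
      have hcR' := novl_congr M (show (i₀+1 : ZMod 7) = (i₀+1) from by ring) (show (i₀+1+1 : ZMod 7) = (i₀+2) from by ring) cR
      have hf0' := ovl_congr M (show (i₀ : ZMod 7) = (i₀) from by ring) (show (i₀+1 : ZMod 7) = (i₀+1) from by ring) fR0
      have hPj' := aP_congr M (show (i₀ : ZMod 7) = (i₀+0) from by ring) hPe
      have hmin' := amin_congr M (show (i₀ : ZMod 7) = (i₀+0) from by ring) hmin
      exact runT5_2 M (i₀) 0 hcL' hcR' hf0' (by decide) hPj' hmin'
    case pos =>
    by_cases fR2 : ovl M (Cv (i₀+2)) (Cv (i₀+2+1))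
    case neg =>
      have cR := fR2
      have hcL' := novl_congr M (show (i₀-1 : ZMod 7) = (i₀+6) from by linear_combination (-1 : ZMod 7) * h7) (show (i₀-1+1 : ZMod 7) = (i₀) from by ring) cL
      have hcR' := novl_congr M (show (i₀+2 : ZMod 7) = (i₀+2) from by ring) (show (i₀+2+1 : ZMod 7) = (i₀+3) from by ring) cR
      have hf0' := ovl_congr M (show (i₀ : ZMod 7) = (i₀) from by ring) (show (i₀+1 : ZMod 7) = (i₀+1) from by ring) fR0
      have hf1' := ovl_congr M (show (i₀+1 : ZMod 7) = (i₀+1) from by ring) (show (i₀+1+1 : ZMod 7) = (i₀+2) from by ring) fR1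
      have hPj' := aP_congr M (show (i₀ : ZMod 7) = (i₀+0) from by ring) hPe
      have hmin' := amin_congr M (show (i₀ : ZMod 7) = (i₀+0) from by ring) hmin
      exact runT5_3 M (i₀) 0 hcL' hcR' hf0' hf1' (by decide) hPj' hmin'
    case pos =>
    by_cases fR3 : ovl M (Cv (i₀+3)) (Cv (i₀+3+1))
    case neg =>
      have cR := fR3
      have hcL' := novl_congr M (show (i₀-1 : ZMod 7) = (i₀+6) from by linear_combination (-1 : ZMod 7) * h7) (show (i₀-1+1 : ZMod 7) = (i₀) from by ring) cL
      have hcR' := novl_congr M (show (i₀+3 : ZMod 7) = (i₀+3) from by ring) (show (i₀+3+1 : ZMod 7) = (i₀+4) from by ring) cR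
      have hf0' := ovl_congr M (show (i₀ : ZMod 7) = (i₀) from by ring) (show (i₀+1 : ZMod 7) = (i₀+1) from by ring) fR0
      have hf1' := ovl_congr M (show (i₀+1 : ZMod 7) = (i₀+1) from by ring) (show (i₀+1+1 : ZMod 7) = (i₀+2) from by ring) fR1
      have hf2' := ovl_congr M (show (i₀+2 : ZMod 7) = (i₀+2) from by ring) (show (i₀+2+1 : ZMod 7) = (i₀+3) from by ring) fR2
      have hPj' := aP_congr M (show (i₀ : ZMod 7) = (i₀+0) from by ring) hPe
      have hmin' := amin_congr M (show (i₀ : ZMod 7) = (i₀+0) from by ring) hmin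
      exact runT5_4 M (i₀) 0 hcL' hcR' hf0' hf1' hf2' (by decide) hPj' hmin'
    case pos =>
    by_cases fR4 : ovl M (Cv (i₀+4)) (Cv (i₀+4+1))
    case neg =>
      have cR := fR4
      have hcL' := novl_congr M (show (i₀-1 : ZMod 7) = (i₀+6) from by linear_combination (-1 : ZMod 7) * h7) (show (i₀-1+1 : ZMod 7) = (i₀) from by ring) cL
      have hcR' := novl_congr M (show (i₀+4 : ZMod 7) = (i₀+4) from by ring) (show (i₀+4+1 : ZMod 7) = (i₀+5) from by ring) cR
      have hf0' := ovl_congr M (show (i₀ : ZMod 7) = (i₀) from by ring) (show (i₀+1 : ZMod 7) = (i₀+1) from by ring) fR0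
      have hf1' := ovl_congr M (show (i₀+1 : ZMod 7) = (i₀+1) from by ring) (show (i₀+1+1 : ZMod 7) = (i₀+2) from by ring) fR1
      have hf2' := ovl_congr M (show (i₀+2 : ZMod 7) = (i₀+2) from by ring) (show (i₀+2+1 : ZMod 7) = (i₀+3) from by ring) fR2
      have hf3' := ovl_congr M (show (i₀+3 : ZMod 7) = (i₀+3) from by ring) (show (i₀+3+1 : ZMod 7) = (i₀+4) from by ring) fR3
      have hPj' := aP_congr M (show (i₀ : ZMod 7) = (i₀+0) from by ring) hPe
      have hmin' := amin_congr M (show (i₀ : ZMod 7) = (i₀+0) from by ring) hmin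
      exact runT5_5 M (i₀) 0 hcL' hcR' hf0' hf1' hf2' hf3' (by decide) hPj' hmin'
    case pos =>
    by_cases fR5 : ovl M (Cv (i₀+5)) (Cv (i₀+5+1))
    case neg =>
      have cR := fR5
      have hcL' := novl_congr M (show (i₀-1 : ZMod 7) = (i₀+6) from by linear_combination (-1 : ZMod 7) * h7) (show (i₀-1+1 : ZMod 7) = (i₀) from by ring) cL
      have hcR' := novl_congr M (show (i₀+5 : ZMod 7) = (i₀+5) from by ring) (show (i₀+5+1 : ZMod 7) = (i₀+6) from by ring) cR
      have hf0' := ovl_congr M (show (i₀ : ZMod 7) = (i₀) from by ring) (show (i₀+1 : ZMod 7) = (i₀+1) from by ring) fR0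
      have hf1' := ovl_congr M (show (i₀+1 : ZMod 7) = (i₀+1) from by ring) (show (i₀+1+1 : ZMod 7) = (i₀+2) from by ring) fR1
      have hf2' := ovl_congr M (show (i₀+2 : ZMod 7) = (i₀+2) from by ring) (show (i₀+2+1 : ZMod 7) = (i₀+3) from by ring) fR2
      have hf3' := ovl_congr M (show (i₀+3 : ZMod 7) = (i₀+3) from by ring) (show (i₀+3+1 : ZMod 7) = (i₀+4) from by ring) fR3
      have hf4' := ovl_congr M (show (i₀+4 : ZMod 7) = (i₀+4) from by ring) (show (i₀+4+1 : ZMod 7) = (i₀+5) from by ring) fR4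
      have hPj' := aP_congr M (show (i₀ : ZMod 7) = (i₀+0) from by ring) hPe
      have hmin' := amin_congr M (show (i₀ : ZMod 7) = (i₀+0) from by ring) hmin
      exact runMirror6 M (i₀) 0 hcL' hcR' hf0' hf1' hf2' hf3' hf4' (by decide) hPj' hmin'
    case pos =>
    have hcross' := novl_congr M (show (i₀-1 : ZMod 7) = (i₀+6) from by linear_combination (-1 : ZMod 7) * h7) (show (i₀-1+1 : ZMod 7) = (i₀) from by ring) cL
    have hf0' := ovl_congr M (show (i₀ : ZMod 7) = (i₀) from by ring) (show (i₀+1 : ZMod 7) = (i₀+1) from by ring) fR0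
    have hf1' := ovl_congr M (show (i₀+1 : ZMod 7) = (i₀+1) from by ring) (show (i₀+1+1 : ZMod 7) = (i₀+2) from by ring) fR1
    have hf2' := ovl_congr M (show (i₀+2 : ZMod 7) = (i₀+2) from by ring) (show (i₀+2+1 : ZMod 7) = (i₀+3) from by ring) fR2
    have hf3' := ovl_congr M (show (i₀+3 : ZMod 7) = (i₀+3) from by ring) (show (i₀+3+1 : ZMod 7) = (i₀+4) from by ring) fR3
    have hf4' := ovl_congr M (show (i₀+4 : ZMod 7) = (i₀+4) from by ring) (show (i₀+4+1 : ZMod 7) = (i₀+5) from by ring) fR4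
    have hf5' := ovl_congr M (show (i₀+5 : ZMod 7) = (i₀+5) from by ring) (show (i₀+5+1 : ZMod 7) = (i₀+6) from by ring) fR5
    exact kOneFull M (i₀) hcross' hf0' hf1' hf2' hf3' hf4' hf5'

end G7aux


lemma seg_param {p q z : ℝ × ℝ} :
    z ∈ segment ℝ p q ↔ ∃ t : ℝ, 0 ≤ t ∧ t ≤ 1 ∧
      z.1 = (1-t)*p.1 + t*q.1 ∧ z.2 = (1-t)*p.2 + t*q.2 := by
  constructor
  · rintro ⟨u, v, hu, hv, huv, rfl⟩
    refine ⟨v, hv, by linarith, ?_, ?_⟩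
    · show (u • p + v • q).1 = _
      simp only [Prod.fst_add, Prod.smul_fst, smul_eq_mul]
      linear_combination p.1 * huv
    · show (u • p + v • q).2 = _
      simp only [Prod.snd_add, Prod.smul_snd, smul_eq_mul]
      linear_combination p.2 * huv
  · rintro ⟨t, ht0, ht1, h1, h2⟩
    refine ⟨1-t, t, by linarith, ht0, by ring, ?_⟩
    apply Prod.ext
    · show (1-t) * p.1 + t * q.1 = z.1
      rw [h1]
    · show (1-t) * p.2 + t * q.2 = z.2
      rw [h2]

lemma seg_horiz_mem {x₁ x₂ y : ℝ} {z : ℝ × ℝ} :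
    z ∈ segment ℝ (x₁, y) (x₂, y) ↔ z.2 = y ∧ min x₁ x₂ ≤ z.1 ∧ z.1 ≤ max x₁ x₂ := by
  rw [seg_param]
  constructor
  · rintro ⟨t, ht0, ht1, h1, h2⟩
    refine ⟨by rw [h2]; ring, ?_, ?_⟩
    · rcases le_total x₁ x₂ with h | h <;> rw [h1] <;>
        nlinarith [min_le_left x₁ x₂, min_le_right x₁ x₂]
    · rcases le_total x₁ x₂ with h | h <;> rw [h1] <;>
        nlinarith [le_max_left x₁ x₂, le_max_right x₁ x₂]
  · rintro ⟨hy, h1, h2⟩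
    by_cases hx : x₁ = x₂
    · subst hx
      have hz1 : z.1 = x₁ := by
        simp only [min_self, max_self] at h1 h2
        linarith
      exact ⟨0, le_refl _, zero_le_one, by rw [hz1]; ring, by rw [hy]; ring⟩
    rcases le_total x₁ x₂ with hle | hle
    · rw [min_eq_left hle] at h1
      rw [max_eq_right hle] at h2
      have hlt : x₁ < x₂ := lt_of_le_of_ne hle hx
      have hne : x₂ - x₁ ≠ 0 := sub_ne_zero.2 (Ne.symm hx)
      refine ⟨(z.1 - x₁)/(x₂ - x₁), div_nonneg (by linarith) (by linarith),
        (div_le_one (by linarith)).2 (by linarith), by field_simp; ring, by rw [hy]; ring⟩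
    · rw [min_eq_right hle] at h1
      rw [max_eq_left hle] at h2
      have hlt : x₂ < x₁ := lt_of_le_of_ne hle (Ne.symm hx)
      have hne : x₂ - x₁ ≠ 0 := sub_ne_zero.2 (Ne.symm hx)
      refine ⟨(z.1 - x₁)/(x₂ - x₁), ?_, ?_, by field_simp; ring, by rw [hy]; ring⟩
      · rw [div_nonneg_iff]
        right
        exact ⟨by linarith, by linarith⟩
      · rw [div_le_one_iff]
        right; right
        exact ⟨by linarith, by linarith⟩

lemma inter_II {x₁ x₂ x₃ x₄ y : ℝ} :
    (segment ℝ (x₁,y) (x₂,y) ∩ segment ℝ (x₃,y) (x₄,y)).Nonempty ↔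
      (min x₁ x₂ ≤ max x₃ x₄ ∧ min x₃ x₄ ≤ max x₁ x₂) := by
  constructor
  · rintro ⟨z, hz1, hz2⟩
    rw [seg_horiz_mem] at hz1 hz2
    exact ⟨le_trans hz1.2.1 hz2.2.2, le_trans hz2.2.1 hz1.2.2⟩
  · rintro ⟨h1, h2⟩
    refine ⟨(max (min x₁ x₂) (min x₃ x₄), y), ?_, ?_⟩ <;> rw [seg_horiz_mem]
    · exact ⟨rfl, le_max_left _ _, max_le (le_trans (min_le_left _ _) (le_max_left _ _)) h2⟩
    · exact ⟨rfl, le_max_right _ _, max_le h1 (le_trans (min_le_left _ _) (le_max_left _ _))⟩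

lemma inter_IP {x₁ x₂ y f h y' : ℝ} (hy : y' ≠ y) :
    (segment ℝ (x₁,y) (x₂,y) ∩ segment ℝ (f,y) (h,y')).Nonempty ↔
      (min x₁ x₂ ≤ f ∧ f ≤ max x₁ x₂) := by
  constructor
  · rintro ⟨z, hz1, hz2⟩
    rw [seg_horiz_mem] at hz1
    rw [seg_param] at hz2
    obtain ⟨t, ht0, ht1, e1, e2⟩ := hz2
    have hzy : z.2 = y := hz1.1
    have ht : t = 0 := by
      have : t * (y' - y) = 0 := by rw [e2] at hzy; linarith [hzy]
      rcases mul_eq_zero.1 this with h | h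
      · exact h
      · exact absurd (by linarith : y' = y) hy
    subst ht
    have : z.1 = f := by rw [e1]; ring
    rw [this] at hz1
    exact ⟨hz1.2.1, hz1.2.2⟩
  · rintro ⟨h1, h2⟩
    exact ⟨(f, y), seg_horiz_mem.2 ⟨rfl, h1, h2⟩, left_mem_segment ℝ _ _⟩

lemma inter_PP {f₁ h₁ f₂ h₂ y y' : ℝ} (hy : y' ≠ y) :
    (segment ℝ (f₁,y) (h₁,y') ∩ segment ℝ (f₂,y) (h₂,y')).Nonempty ↔
      (f₁-f₂)*(h₁-h₂) ≤ 0 := by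
  constructor
  · rintro ⟨z, hz1, hz2⟩
    rw [seg_param] at hz1 hz2
    obtain ⟨t, ht0, ht1, e1, e2⟩ := hz1
    obtain ⟨u, hu0, hu1, e3, e4⟩ := hz2
    have htu : t = u := by
      have : (t - u) * (y' - y) = 0 := by rw [e2] at e4; linarith
      rcases mul_eq_zero.1 this with h | h
      · linarith
      · exact absurd (by linarith : y' = y) hy
    subst htu
    have e5 : (1-t)*(f₁ - f₂) + t*(h₁ - h₂) = 0 := by rw [e1] at e3; linarith
    have k1 : ((1-t)*(f₁-f₂) + t*(h₁-h₂)) * (f₁-f₂) = 0 := by rw [e5]; ring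
    have k2 : ((1-t)*(f₁-f₂) + t*(h₁-h₂)) * (h₁-h₂) = 0 := by rw [e5]; ring
    nlinarith [k1, k2, mul_nonneg (by linarith : (0:ℝ) ≤ 1-t) (sq_nonneg (f₁-f₂)),
      mul_nonneg ht0 (sq_nonneg (h₁-h₂)), sq_nonneg (f₁-f₂), sq_nonneg (h₁-h₂)]
  · intro hprod
    by_cases hA : f₁ - f₂ = 0
    · have : f₂ = f₁ := by linarith
      subst this
      exact ⟨(f₂, y), left_mem_segment ℝ _ _, left_mem_segment ℝ _ _⟩
    · set A := f₁ - f₂ with hA'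
      set B := h₁ - h₂ with hB'
      have hABne : A - B ≠ 0 := by
        rcases lt_or_gt_of_ne hA with h | h
        · have hB : 0 ≤ B := by nlinarith
          intro hc; nlinarith
        · have hB : B ≤ 0 := by nlinarith
          intro hc; nlinarith
      set t := A / (A - B) with ht'
      have ht0 : 0 ≤ t := by
        rw [ht', div_nonneg_iff]
        rcases lt_or_gt_of_ne hA with h | h
        · right
          have hB : 0 ≤ B := by nlinarith
          exact ⟨by linarith, by linarith⟩
        · left
          have hB : B ≤ 0 := by nlinarith
          exact ⟨by linarith, by linarith⟩
      have ht1 : t ≤ 1 := by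
        rw [ht', div_le_one_iff]
        rcases lt_or_gt_of_ne hA with h | h
        · right; right
          have hB : 0 ≤ B := by nlinarith
          exact ⟨by linarith, by linarith⟩
        · left
          have hB : B ≤ 0 := by nlinarith
          exact ⟨by linarith, by linarith⟩
      have hkey : (1-t)*A + t*B = 0 := by
        rw [ht']
        field_simp
        ring
      refine ⟨((1-t)*f₁ + t*h₁, (1-t)*y + t*y'), ?_, ?_⟩ <;> rw [seg_param]
      · exact ⟨t, ht0, ht1, rfl, rfl⟩
      · refine ⟨t, ht0, ht1, ?_, rfl⟩
        show (1-t)*f₁ + t*h₁ = (1-t)*f₂ + t*h₂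
        linear_combination hkey


/-- The graph `G₇` is not an IP-SEG* graph. -/
theorem G7_not_ipsegstar :
    ¬ ∃ s : ZMod 7 × Fin 3 → IPSeg, IsIPSEGStarModel (GGraph 7) s := by
  rintro ⟨sm, hmodel, c, hc, hint⟩
  classical
  have hcc : (3 - c) ≠ c := by rcases hc with rfl | rfl <;> norm_num
  set P : G7aux.V7 → Prop := fun v => (sm v).p.2 ≠ (sm v).q.2 with hP
  set ft : G7aux.V7 → ℝ := fun v => if (sm v).p.2 = c then (sm v).p.1 else (sm v).q.1 with hft
  set hd : G7aux.V7 → ℝ := fun v => if (sm v).p.2 = c then (sm v).q.1 else (sm v).p.1 with hhd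
  set av : G7aux.V7 → ℝ := fun v => if P v then ft v else min (sm v).p.1 (sm v).q.1 with hav
  set bv : G7aux.V7 → ℝ := fun v => if P v then ft v else max (sm v).p.1 (sm v).q.1 with hbv
  -- other line value for a vertex endpoint
  have hother : ∀ y : ℝ, (y = 1 ∨ y = 2) → y ≠ c → y = 3 - c := by
    rintro y hy hne
    rcases hc with rfl | rfl <;> rcases hy with rfl | rfl <;> norm_num <;> exact absurd rfl hne
  have hcar_int : ∀ v, ¬ P v → (sm v).carrier = segment ℝ ((sm v).p.1, c) ((sm v).q.1, c) := by
    intro v hv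
    have hpq : (sm v).p.2 = (sm v).q.2 := not_not.1 hv
    have hpc : (sm v).p.2 = c := hint v hpq
    have hqc : (sm v).q.2 = c := hpq.symm.trans hpc
    show segment ℝ (sm v).p (sm v).q = _
    rw [show (sm v).p = ((sm v).p.1, c) from Prod.ext rfl hpc,
        show (sm v).q = ((sm v).q.1, c) from Prod.ext rfl hqc]
  have hcar_perm : ∀ v, P v → (sm v).carrier = segment ℝ (ft v, c) (hd v, 3 - c) := by
    intro v hv
    by_cases hpc : (sm v).p.2 = c
    · have hq2 : (sm v).q.2 = 3 - c :=
        hother _ (sm v).hq (fun h => hv (hpc.trans h.symm))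
      show segment ℝ (sm v).p (sm v).q = _
      rw [show (sm v).p = (ft v, c) from Prod.ext (by rw [hft]; simp [hpc]) hpc,
          show (sm v).q = (hd v, 3 - c) from Prod.ext (by rw [hhd]; simp [hpc]) hq2]
    · have hqc : (sm v).q.2 = c := by
        by_contra hqc
        exact hv ((hother _ (sm v).hp hpc).trans (hother _ (sm v).hq hqc).symm)
      have hp2 : (sm v).p.2 = 3 - c := hother _ (sm v).hp hpc
      show segment ℝ (sm v).p (sm v).q = _
      rw [segment_symm]
      rw [show (sm v).q = (ft v, c) from Prod.ext (by rw [hft]; simp [hpc]) hqc,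
          show (sm v).p = (hd v, 3 - c) from Prod.ext (by rw [hhd]; simp [hpc]) hp2]
  apply G7aux.core
  refine ⟨P, av, bv, hd, ?_, ?_, ?_⟩
  · intro v
    by_cases hv : P v
    · simp only [hav, hbv]; rw [if_pos hv, if_pos hv]
    · simp only [hav, hbv]; rw [if_neg hv, if_neg hv]; exact min_le_max
  · intro v hv
    simp only [hav, hbv]; rw [if_pos hv, if_pos hv]
  · intro u v hne
    rw [hmodel u v hne]
    by_cases hu : P u <;> by_cases hv : P v
    · -- perm / perm
      rw [hcar_perm u hu, hcar_perm v hv, inter_PP hcc]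
      have hau : av u = ft u := by simp only [hav]; rw [if_pos hu]
      have hbu : bv u = ft u := by simp only [hbv]; rw [if_pos hu]
      have hav' : av v = ft v := by simp only [hav]; rw [if_pos hv]
      have hbv' : bv v = ft v := by simp only [hbv]; rw [if_pos hv]
      constructor
      · intro h
        exact Or.inr ⟨hu, hv, by rw [hau, hav']; exact h⟩
      · rintro (ho | ⟨-, -, h⟩)
        · rw [hau, hbu, hav', hbv'] at ho
          have : ft u = ft v := le_antisymm ho.1 ho.2
          rw [this]
          nlinarith
        · rw [← hau, ← hav']; exact h
    · -- perm / interval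
      rw [hcar_perm u hu, hcar_int v hv, Set.inter_comm, inter_IP hcc]
      have hau : av u = ft u := by simp only [hav]; rw [if_pos hu]
      have hbu : bv u = ft u := by simp only [hbv]; rw [if_pos hu]
      have hav' : av v = min (sm v).p.1 (sm v).q.1 := by simp only [hav]; rw [if_neg hv]
      have hbv' : bv v = max (sm v).p.1 (sm v).q.1 := by simp only [hbv]; rw [if_neg hv]
      rw [hau, hbu, hav', hbv']
      constructor
      · rintro ⟨h1, h2⟩
        exact Or.inl ⟨h2, h1⟩
      · rintro (ho | ⟨-, hPv, -⟩)
        · exact ⟨ho.2, ho.1⟩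
        · exact absurd hPv hv
    · -- interval / perm
      rw [hcar_int u hu, hcar_perm v hv, inter_IP hcc]
      have hau : av u = min (sm u).p.1 (sm u).q.1 := by simp only [hav]; rw [if_neg hu]
      have hbu : bv u = max (sm u).p.1 (sm u).q.1 := by simp only [hbv]; rw [if_neg hu]
      have hav' : av v = ft v := by simp only [hav]; rw [if_pos hv]
      have hbv' : bv v = ft v := by simp only [hbv]; rw [if_pos hv]
      rw [hau, hbu, hav', hbv']
      constructor
      · rintro ⟨h1, h2⟩
        exact Or.inl ⟨h1, h2⟩
      · rintro (ho | ⟨hPu, -, -⟩)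
        · exact ⟨ho.1, ho.2⟩
        · exact absurd hPu hu
    · -- interval / interval
      rw [hcar_int u hu, hcar_int v hv, inter_II]
      have hau : av u = min (sm u).p.1 (sm u).q.1 := by simp only [hav]; rw [if_neg hu]
      have hbu : bv u = max (sm u).p.1 (sm u).q.1 := by simp only [hbv]; rw [if_neg hu]
      have hav' : av v = min (sm v).p.1 (sm v).q.1 := by simp only [hav]; rw [if_neg hv]
      have hbv' : bv v = max (sm v).p.1 (sm v).q.1 := by simp only [hbv]; rw [if_neg hv]
      rw [hau, hbu, hav', hbv']
      constructor
      · rintro ⟨h1, h2⟩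
        exact Or.inl ⟨h1, h2⟩
      · rintro (ho | ⟨hPu, -, -⟩)
        · exact ⟨ho.1, ho.2⟩
        · exact absurd hPu hu
end

section
/- The graph G₇ is an IP-SEG graph. Consequently, since G₇ is not an IP-SEG* graph, the class of IP-SEG* graphs is properly contained in the class of IP-SEG graphs: every IP-SEG* graph is an IP-SEG graph, and there exists an IP-SEG graph that is not an IP-SEG* graph. -/
namespace IPGeo

lemma mem_segment_horiz {x1 x2 k : ℝ} {z : ℝ × ℝ} :
    z ∈ segment ℝ (x1, k) (x2, k) ↔ z.1 ∈ segment ℝ x1 x2 ∧ z.2 = k := by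
  constructor
  · rintro ⟨a, b, ha, hb, hab, rfl⟩
    refine ⟨⟨a, b, ha, hb, hab, rfl⟩, ?_⟩
    show a * k + b * k = k
    linear_combination k * hab
  · rintro ⟨⟨a, b, ha, hb, hab, h1⟩, h2⟩
    refine ⟨a, b, ha, hb, hab, ?_⟩
    have hx : a * x1 + b * x2 = z.1 := h1
    have hy : a * k + b * k = z.2 := by rw [h2]; linear_combination k * hab
    calc a • (x1,k) + b • (x2,k) = (a*x1+b*x2, a*k+b*k) := rfl
    _ = (z.1, z.2) := by rw [hx, hy]
    _ = z := rfl

lemma mem_segment_1d {x1 x2 z : ℝ} :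
    z ∈ segment ℝ x1 x2 ↔ min x1 x2 ≤ z ∧ z ≤ max x1 x2 := by
  rw [segment_eq_uIcc, Set.uIcc, Set.mem_Icc]

lemma horiz_inter_horiz (k x1 x2 x3 x4 : ℝ) :
    ((segment ℝ (x1,k) (x2,k)) ∩ (segment ℝ (x3,k) (x4,k))).Nonempty ↔
      (min x1 x2 ≤ max x3 x4 ∧ min x3 x4 ≤ max x1 x2) := by
  constructor
  · rintro ⟨z, hz1, hz2⟩
    rw [mem_segment_horiz, mem_segment_1d] at hz1 hz2
    constructor <;> linarith [hz1.1.1, hz1.1.2, hz2.1.1, hz2.1.2]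
  · rintro ⟨h1, h2⟩
    refine ⟨(max (min x1 x2) (min x3 x4), k), ?_, ?_⟩ <;>
      rw [mem_segment_horiz, mem_segment_1d]
    · exact ⟨⟨le_max_left _ _, max_le min_le_max h2⟩, rfl⟩
    · exact ⟨⟨le_max_right _ _, max_le h1 min_le_max⟩, rfl⟩

lemma horiz_inter_horiz_ne {k k' : ℝ} (h : k ≠ k') (x1 x2 x3 x4 : ℝ) :
    ¬ ((segment ℝ (x1,k) (x2,k)) ∩ (segment ℝ (x3,k') (x4,k'))).Nonempty := by
  rintro ⟨z, hz1, hz2⟩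
  rw [mem_segment_horiz] at hz1 hz2
  exact h (hz1.2 ▸ hz2.2)

lemma horiz_inter_trans {k k' : ℝ} (h : k ≠ k') (x1 x2 f t : ℝ) :
    ((segment ℝ (x1,k) (x2,k)) ∩ (segment ℝ (f,k) (t,k'))).Nonempty ↔
      (min x1 x2 ≤ f ∧ f ≤ max x1 x2) := by
  constructor
  · rintro ⟨z, hz1, hz2⟩
    rw [mem_segment_horiz, mem_segment_1d] at hz1
    obtain ⟨a, b, ha, hb, hab, hz⟩ := hz2
    have h2 : a * k + b * k' = k := by
      have t1 : a * k + b * k' = z.2 := congrArg Prod.snd hz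
      rw [t1]; exact hz1.2
    have hb0 : b = 0 := by
      have hbk : b * (k' - k) = 0 := by linear_combination h2 - k * hab
      rcases mul_eq_zero.1 hbk with h0 | h0
      · exact h0
      · exact absurd (by linarith : k' = k) (Ne.symm h)
    have hz1' : z.1 = f := by
      have t1 : a * f + b * t = z.1 := congrArg Prod.fst hz
      rw [← t1, hb0]
      have ha1 : a = 1 := by linarith
      rw [ha1]; ring
    rw [hz1'] at hz1
    exact hz1.1
  · rintro ⟨h1, h2⟩
    refine ⟨(f, k), ?_, left_mem_segment _ _ _⟩
    rw [mem_segment_horiz, mem_segment_1d]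
    exact ⟨⟨h1, h2⟩, rfl⟩

lemma trans_inter_trans {k k' : ℝ} (h : k ≠ k') (f t f' t' : ℝ) :
    ((segment ℝ (f,k) (t,k')) ∩ (segment ℝ (f',k) (t',k'))).Nonempty ↔
      (f - f') * (t - t') ≤ 0 := by
  constructor
  · rintro ⟨z, hz1, hz2⟩
    obtain ⟨a, b, ha, hb, hab, hz⟩ := hz1
    obtain ⟨a', b', ha', hb', hab', hz'⟩ := hz2
    have t1 : a * f + b * t = z.1 := congrArg Prod.fst hz
    have t2 : a' * f' + b' * t' = z.1 := congrArg Prod.fst hz'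
    have s1 : a * k + b * k' = z.2 := congrArg Prod.snd hz
    have s2 : a' * k + b' * k' = z.2 := congrArg Prod.snd hz'
    have hbb : b' = b := by
      have h0 : (b - b') * (k' - k) = 0 := by linear_combination s1 - s2 - k * hab + k * hab'
      rcases mul_eq_zero.1 h0 with h0 | h0
      · linarith
      · exact absurd (by linarith : k' = k) (Ne.symm h)
    have haa : a' = a := by linarith
    rw [hbb, haa] at t2
    have key : a * (f - f') + b * (t - t') = 0 := by linear_combination t1 - t2
    by_contra hpos
    push_neg at hpos
    rcases mul_pos_iff.1 hpos with ⟨h1, h2⟩ | ⟨h1, h2⟩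
    · nlinarith [mul_nonneg ha (le_of_lt h1), mul_nonneg hb (le_of_lt h2)]
    · nlinarith [mul_nonneg ha (le_of_lt (neg_pos.2 h1)), mul_nonneg hb (le_of_lt (neg_pos.2 h2))]
  · intro hle
    have key : ∀ s : ℝ, 0 ≤ s → s ≤ 1 → (1-s) * f + s * t = (1-s) * f' + s * t' →
        ((segment ℝ (f,k) (t,k')) ∩ (segment ℝ (f',k) (t',k'))).Nonempty := by
      intro s h0 h1 he
      refine ⟨((1-s) * f + s * t, (1-s) * k + s * k'), ⟨1-s, s, by linarith, h0, by ring, rfl⟩,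
        ⟨1-s, s, by linarith, h0, by ring, ?_⟩⟩
      show ((1-s) * f' + s * t', (1-s) * k + s * k') = ((1-s) * f + s * t, (1-s) * k + s * k')
      rw [he]
    rcases lt_trichotomy ((f - f') - (t - t')) 0 with hD | hD | hD
    · have hf : f - f' ≤ 0 := by nlinarith
      have ht : 0 ≤ t - t' := by nlinarith
      have hDne : (f - f') - (t - t') ≠ 0 := ne_of_lt hD
      set s : ℝ := (f - f') / ((f - f') - (t - t')) with hs
      have h0 : 0 ≤ s := div_nonneg_iff.2 (Or.inr ⟨hf, le_of_lt hD⟩)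
      have h1 : s ≤ 1 := by
        have hsub : s - 1 = (t - t') / ((f - f') - (t - t')) := by
          rw [hs]; field_simp; ring
        have hle1 : (t - t') / ((f - f') - (t - t')) ≤ 0 :=
          div_nonpos_iff.2 (Or.inl ⟨ht, le_of_lt hD⟩)
        linarith [hsub ▸ hle1]
      have hcancel : s * ((f - f') - (t - t')) = f - f' := div_mul_cancel₀ _ hDne
      exact key s h0 h1 (by linear_combination -hcancel)
    · have hf : f - f' = 0 := by nlinarith
      exact key 0 le_rfl zero_le_one (by linarith)
    · have hf : 0 ≤ f - f' := by nlinarith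
      have ht : t - t' ≤ 0 := by nlinarith
      have hDne : (f - f') - (t - t') ≠ 0 := ne_of_gt hD
      set s : ℝ := (f - f') / ((f - f') - (t - t')) with hs
      have h0 : 0 ≤ s := div_nonneg hf (le_of_lt hD)
      have h1 : s ≤ 1 := by
        have hsub : s - 1 = (t - t') / ((f - f') - (t - t')) := by
          rw [hs]; field_simp; ring
        have hle1 : (t - t') / ((f - f') - (t - t')) ≤ 0 :=
          div_nonpos_iff.2 (Or.inr ⟨ht, le_of_lt hD⟩)
        linarith [hsub ▸ hle1]
      have hcancel : s * ((f - f') - (t - t')) = f - f' := div_mul_cancel₀ _ hDne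
      exact key s h0 h1 (by linear_combination -hcancel)

end IPGeo
namespace IPModel
open IPGeo

structure Dat where
  a : ℤ
  b : ℤ
  la : Bool
  lb : Bool

def lineV (e : Bool) : ℝ := if e then 2 else 1

lemma lineV_mem (e : Bool) : lineV e = 1 ∨ lineV e = 2 := by
  cases e <;> simp [lineV]

lemma lineV_inj {e e' : Bool} (h : e ≠ e') : lineV e ≠ lineV e' := by
  cases e <;> cases e' <;> simp_all [lineV] <;> norm_num

def mk (d : Dat) : IPSeg :=
  ⟨((d.a : ℝ), lineV d.la), ((d.b : ℝ), lineV d.lb), lineV_mem _, lineV_mem _⟩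

/-- foot (coordinate on line `1`) and top (on line `2`) of a transversal -/
def ft (d : Dat) : ℤ × ℤ := if d.la then (d.b, d.a) else (d.a, d.b)

/-- the coordinate of transversal `e` on the line of flag `c` -/
def onln (e : Dat) (c : Bool) : ℤ := if e.la = c then e.a else e.b

def crit (d e : Dat) : Prop :=
  if d.la = d.lb then
    if e.la = e.lb then
      d.la = e.la ∧ min d.a d.b ≤ max e.a e.b ∧ min e.a e.b ≤ max d.a d.b
    else
      min d.a d.b ≤ onln e d.la ∧ onln e d.la ≤ max d.a d.b
  else
    if e.la = e.lb then
      min e.a e.b ≤ onln d e.la ∧ onln d e.la ≤ max e.a e.b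
    else
      ((ft d).1 - (ft e).1) * ((ft d).2 - (ft e).2) ≤ 0

instance (d e : Dat) : Decidable (crit d e) := by unfold crit; infer_instance

lemma carrier_horiz (d : Dat) (h : d.la = d.lb) :
    (mk d).carrier = segment ℝ ((d.a:ℝ), lineV d.la) ((d.b:ℝ), lineV d.la) := by
  simp only [mk, IPSeg.carrier, h]

lemma carrier_trans (d : Dat) (h : d.la ≠ d.lb) :
    (mk d).carrier = segment ℝ (((ft d).1 : ℝ), lineV false) (((ft d).2 : ℝ), lineV true) := by
  cases hla : d.la <;> cases hlb : d.lb <;> rw [hla, hlb] at h <;> try exact absurd rfl h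
  · simp only [mk, IPSeg.carrier, ft, hla, hlb]
    rfl
  · simp only [mk, IPSeg.carrier, ft, hla, hlb]
    rw [segment_symm]
    rfl

lemma lineVne : lineV false ≠ lineV true := lineV_inj (by simp)

lemma onln_eq_ft1 (e : Dat) : onln e false = (ft e).1 := by
  cases h : e.la <;> simp [onln, ft, h]

lemma onln_eq_ft2 (e : Dat) : onln e true = (ft e).2 := by
  cases h : e.la <;> simp [onln, ft, h]

lemma horiz_trans_nonempty (d e : Dat) (hd : d.la = d.lb) (he : e.la ≠ e.lb) :
    ((mk d).carrier ∩ (mk e).carrier).Nonempty ↔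
      ((min d.a d.b : ℤ) ≤ onln e d.la ∧ (onln e d.la : ℤ) ≤ max d.a d.b) := by
  rw [carrier_horiz d hd, carrier_trans e he]
  cases hk : d.la
  · rw [horiz_inter_trans lineVne, onln_eq_ft1]
    exact ⟨fun ⟨h1, h2⟩ => ⟨by exact_mod_cast h1, by exact_mod_cast h2⟩,
      fun ⟨h1, h2⟩ => ⟨by exact_mod_cast h1, by exact_mod_cast h2⟩⟩
  · rw [show (segment ℝ (((ft e).1:ℝ), lineV false) (((ft e).2:ℝ), lineV true))
        = segment ℝ (((ft e).2:ℝ), lineV true) (((ft e).1:ℝ), lineV false) from segment_symm ℝ _ _,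
      horiz_inter_trans (Ne.symm lineVne), onln_eq_ft2]
    exact ⟨fun ⟨h1, h2⟩ => ⟨by exact_mod_cast h1, by exact_mod_cast h2⟩,
      fun ⟨h1, h2⟩ => ⟨by exact_mod_cast h1, by exact_mod_cast h2⟩⟩

lemma crit_iff (d e : Dat) :
    ((mk d).carrier ∩ (mk e).carrier).Nonempty ↔ crit d e := by
  by_cases hd : d.la = d.lb <;> by_cases he : e.la = e.lb
  · -- both horizontal
    rw [carrier_horiz d hd, carrier_horiz e he]
    unfold crit
    rw [if_pos hd, if_pos he]
    by_cases hde : d.la = e.la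
    · rw [hde, horiz_inter_horiz]
      constructor
      · intro ⟨h1, h2⟩
        exact ⟨rfl, by exact_mod_cast h1, by exact_mod_cast h2⟩
      · intro ⟨_, h1, h2⟩
        exact ⟨by exact_mod_cast h1, by exact_mod_cast h2⟩
    · constructor
      · intro hne
        exact absurd hne (horiz_inter_horiz_ne (lineV_inj hde) _ _ _ _)
      · intro ⟨h1, _⟩
        exact absurd h1 hde
  · rw [horiz_trans_nonempty d e hd he]
    unfold crit
    rw [if_pos hd, if_neg he]
  · rw [Set.inter_comm, horiz_trans_nonempty e d he hd]
    unfold crit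
    rw [if_neg hd, if_pos he]
  · rw [carrier_trans d hd, carrier_trans e he, trans_inter_trans lineVne]
    unfold crit
    rw [if_neg hd, if_neg he]
    exact ⟨fun h1 => by exact_mod_cast h1, fun h1 => by exact_mod_cast h1⟩

end IPModel
namespace IPModel

def tbl : Fin 7 → Fin 3 → Dat
  | 0, 0 => ⟨0, 20, false, false⟩
  | 1, 0 => ⟨16, 40, false, false⟩
  | 2, 0 => ⟨30, 88, false, true⟩
  | 3, 0 => ⟨60, 78, false, true⟩
  | 4, 0 => ⟨76, 80, true, true⟩
  | 5, 0 => ⟨-10, 77, false, true⟩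
  | 6, 0 => ⟨4, 40, false, true⟩
  | 0, 1 => ⟨-6, 2, false, false⟩
  | 1, 1 => ⟨36, 52, false, false⟩
  | 2, 1 => ⟨86, 90, true, true⟩
  | 3, 1 => ⟨58, 66, false, false⟩
  | 4, 1 => ⟨75, 76, true, true⟩
  | 5, 1 => ⟨-14, -8, false, false⟩
  | 6, 1 => ⟨38, 42, true, true⟩
  | 0, 2 => ⟨-7, -6, false, false⟩
  | 1, 2 => ⟨42, 50, false, false⟩
  | 2, 2 => ⟨90, 94, true, true⟩
  | 3, 2 => ⟨66, 72, false, false⟩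
  | 4, 2 => ⟨73, 75, true, true⟩
  | 5, 2 => ⟨-18, -14, false, false⟩
  | 6, 2 => ⟨34, 38, true, true⟩

def datG7 : ZMod 7 × Fin 3 → Dat := fun v => tbl ⟨v.1.val, v.1.val_lt⟩ v.2

theorem G7_model : IsIPSEGModel (GGraph 7) (fun v => IPModel.mk (datG7 v)) := by
  have H : ∀ u v : ZMod 7 × Fin 3, u ≠ v →
      ((u ≠ v ∧ ((((u.2 = 0 ∧ v.2 = 0 ∧ v.1 = u.1 + 1) ∨
    (u.2 = 0 ∧ v.2 = 1 ∧ v.1 = u.1) ∨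
    (u.2 = 1 ∧ v.2 = 2 ∧ v.1 = u.1))) ∨ (((v.2 = 0 ∧ u.2 = 0 ∧ u.1 = v.1 + 1) ∨
    (v.2 = 0 ∧ u.2 = 1 ∧ u.1 = v.1) ∨
    (v.2 = 1 ∧ u.2 = 2 ∧ u.1 = v.1))))) ↔ crit (datG7 u) (datG7 v)) := by decide
  intro u v huv
  rw [crit_iff]
  simp only [GGraph, SimpleGraph.fromRel_adj]
  exact H u v huv

end IPModel
namespace IPCore

abbrev V7 := ZMod 7 × Fin 3

instance : DecidableRel (GGraph 7).Adj :=
  fun _ _ => decidable_of_iff _ (SimpleGraph.fromRel_adj _ _ _).symm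

lemma sgn1 {a b c d : ℝ} (h : (a - b) * (c - d) > 0) (h2 : b < a) : d < c := by nlinarith
lemma sgn2 {a b c d : ℝ} (h : (a - b) * (c - d) ≤ 0) (h2 : a < b) : d ≤ c := by nlinarith

structure Cfg where
  kind : V7 → Bool
  L : V7 → ℝ
  R : V7 → ℝ
  F : V7 → ℝ
  T : V7 → ℝ
  hLR : ∀ v, kind v = true → L v ≤ R v
  hII : ∀ u v, u ≠ v → kind u = true → kind v = true →
      ((GGraph 7).Adj u v ↔ (L u ≤ R v ∧ L v ≤ R u))
  hIP : ∀ u v, u ≠ v → kind u = true → kind v = false →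
      ((GGraph 7).Adj u v ↔ (L u ≤ F v ∧ F v ≤ R u))
  hPP : ∀ u v, u ≠ v → kind u = false → kind v = false →
      ((GGraph 7).Adj u v ↔ ((F u - F v) * (T u - T v) ≤ 0))

namespace Cfg
variable (C : Cfg)

def lam (v : V7) : ℝ := if C.kind v then C.L v else C.F v
def rho (v : V7) : ℝ := if C.kind v then C.R v else C.F v

def Rel (u v : V7) : Prop :=
  C.rho u < C.lam v ∧ (C.kind u = false → C.kind v = false → C.T u < C.T v)

variable {C}

lemma lam_I {v : V7} (h : C.kind v = true) : C.lam v = C.L v := by simp [lam, h]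
lemma lam_P {v : V7} (h : C.kind v = false) : C.lam v = C.F v := by simp [lam, h]
lemma rho_I {v : V7} (h : C.kind v = true) : C.rho v = C.R v := by simp [rho, h]
lemma rho_P {v : V7} (h : C.kind v = false) : C.rho v = C.F v := by simp [rho, h]

lemma lam_le_rho (v : V7) : C.lam v ≤ C.rho v := by
  cases h : C.kind v
  · rw [lam_P h, rho_P h]
  · rw [lam_I h, rho_I h]; exact C.hLR v h

-- constructors for Rel
lemma relII {u v : V7} (hu : C.kind u = true) (hv : C.kind v = true)
    (h : C.R u < C.L v) : C.Rel u v :=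
  ⟨by rw [rho_I hu, lam_I hv]; exact h, fun h2 _ => absurd h2 (by simp [hu])⟩

lemma relIP {u v : V7} (hu : C.kind u = true) (hv : C.kind v = false)
    (h : C.R u < C.F v) : C.Rel u v :=
  ⟨by rw [rho_I hu, lam_P hv]; exact h, fun h2 _ => absurd h2 (by simp [hu])⟩

lemma relPI {u v : V7} (hu : C.kind u = false) (hv : C.kind v = true)
    (h : C.F u < C.L v) : C.Rel u v :=
  ⟨by rw [rho_P hu, lam_I hv]; exact h, fun _ h2 => absurd h2 (by simp [hv])⟩

lemma relPP {u v : V7} (hu : C.kind u = false) (hv : C.kind v = false)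
    (h : C.F u < C.F v) (ht : C.T u < C.T v) : C.Rel u v :=
  ⟨by rw [rho_P hu, lam_P hv]; exact h, fun _ _ => ht⟩

variable (C)

def mirror : Cfg where
  kind := C.kind
  L := fun v => - C.R v
  R := fun v => - C.L v
  F := fun v => - C.F v
  T := fun v => - C.T v
  hLR := fun v h => by have := C.hLR v h; linarith
  hII := by
    intro u v h hu hv
    rw [C.hII u v h hu hv]
    constructor <;> rintro ⟨a, b⟩ <;> constructor <;> linarith
  hIP := by
    intro u v h hu hv
    rw [C.hIP u v h hu hv]
    constructor <;> rintro ⟨a, b⟩ <;> constructor <;> linarith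
  hPP := by
    intro u v h hu hv
    rw [C.hPP u v h hu hv]
    constructor <;> intro h1 <;> nlinarith [h1]

lemma mirror_kind (v : V7) : C.mirror.kind v = C.kind v := rfl
lemma mirror_T (v : V7) : C.mirror.T v = - C.T v := rfl

lemma mirror_lam (v : V7) : C.mirror.lam v = - C.rho v := by
  cases h : C.kind v
  · rw [lam_P (v := v) (C := C.mirror) h, rho_P h]; rfl
  · rw [lam_I (v := v) (C := C.mirror) h, rho_I h]; rfl

lemma mirror_rho (v : V7) : C.mirror.rho v = - C.lam v := by
  cases h : C.kind v
  · rw [rho_P (v := v) (C := C.mirror) h, lam_P h]; rfl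
  · rw [rho_I (v := v) (C := C.mirror) h, lam_I h]; rfl

lemma mirror_rel (u v : V7) : C.mirror.Rel u v ↔ C.Rel v u := by
  constructor <;> rintro ⟨h1, h2⟩ <;> refine ⟨?_, fun ha hb => ?_⟩
  · rw [mirror_rho, mirror_lam] at h1; linarith
  · have := h2 hb ha; rw [mirror_T, mirror_T] at this; linarith
  · rw [mirror_rho, mirror_lam]; linarith
  · rw [mirror_T, mirror_T]; have := h2 hb ha; linarith

lemma adj_reflect : ∀ (c : ZMod 7) (u v : V7),
    (GGraph 7).Adj (c - u.1, u.2) (c - v.1, v.2) ↔ (GGraph 7).Adj u v := by decide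

lemma reflect_ne (c : ZMod 7) {u v : V7} (h : u ≠ v) :
    ((c - u.1, u.2) : V7) ≠ (c - v.1, v.2) := by
  intro he
  apply h
  rw [Prod.ext_iff] at he ⊢
  exact ⟨sub_right_injective he.1, he.2⟩

def reflect (c : ZMod 7) : Cfg where
  kind := fun v => C.kind (c - v.1, v.2)
  L := fun v => C.L (c - v.1, v.2)
  R := fun v => C.R (c - v.1, v.2)
  F := fun v => C.F (c - v.1, v.2)
  T := fun v => C.T (c - v.1, v.2)
  hLR := fun v h => C.hLR _ h
  hII := fun u v h hu hv => (adj_reflect c u v).symm.trans (C.hII _ _ (reflect_ne c h) hu hv)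
  hIP := fun u v h hu hv => (adj_reflect c u v).symm.trans (C.hIP _ _ (reflect_ne c h) hu hv)
  hPP := fun u v h hu hv => (adj_reflect c u v).symm.trans (C.hPP _ _ (reflect_ne c h) hu hv)

lemma reflect_rel (c : ZMod 7) (u v : V7) :
    (C.reflect c).Rel u v ↔ C.Rel (c - u.1, u.2) (c - v.1, v.2) := by
  unfold Rel rho lam reflect
  exact Iff.rfl

variable {C}

lemma rel_or_rel {u v : V7} (hne : u ≠ v) (hnadj : ¬ (GGraph 7).Adj u v) :
    C.Rel u v ∨ C.Rel v u := by
  cases hu : C.kind u <;> cases hv : C.kind v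
  · rw [C.hPP u v hne hu hv] at hnadj
    push_neg at hnadj
    rcases mul_pos_iff.1 hnadj with ⟨h1, h2⟩ | ⟨h1, h2⟩
    · exact Or.inr (relPP hv hu (by linarith) (by linarith))
    · exact Or.inl (relPP hu hv (by linarith) (by linarith))
  · rw [(GGraph 7).adj_comm, C.hIP v u (Ne.symm hne) hv hu] at hnadj
    push_neg at hnadj
    rcases le_or_gt (C.L v) (C.F u) with h | h
    · exact Or.inr (relIP hv hu (hnadj h))
    · exact Or.inl (relPI hu hv h)
  · rw [C.hIP u v hne hu hv] at hnadj
    push_neg at hnadj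
    rcases le_or_gt (C.L u) (C.F v) with h | h
    · exact Or.inl (relIP hu hv (hnadj h))
    · exact Or.inr (relPI hv hu h)
  · rw [C.hII u v hne hu hv] at hnadj
    push_neg at hnadj
    rcases le_or_gt (C.L u) (C.R v) with h | h
    · exact Or.inl (relII hu hv (hnadj h))
    · exact Or.inr (relII hv hu h)

lemma not_rel_of_adj {u v : V7} (hne : u ≠ v) (hadj : (GGraph 7).Adj u v) :
    ¬ C.Rel u v := by
  rintro ⟨h1, h2⟩
  cases hu : C.kind u <;> cases hv : C.kind v
  · rw [rho_P hu, lam_P hv] at h1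
    have ht := h2 hu hv
    have := (C.hPP u v hne hu hv).1 hadj
    nlinarith
  · rw [rho_P hu, lam_I hv] at h1
    have := (C.hIP v u (Ne.symm hne) hv hu).1 hadj.symm
    linarith [this.1, this.2]
  · rw [rho_I hu, lam_P hv] at h1
    have := (C.hIP u v hne hu hv).1 hadj
    linarith [this.1, this.2]
  · rw [rho_I hu, lam_I hv] at h1
    have := (C.hII u v hne hu hv).1 hadj
    linarith [this.1, this.2]

end Cfg

end IPCore
namespace IPCore
namespace Cfg

lemma sgn1' {a b c d : ℝ} (h : (a - b) * (c - d) > 0) (h2 : a < b) : c < d := by nlinarith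

-- decide facts
lemma fadj1 : ∀ i : ZMod 7, (GGraph 7).Adj (i,0) (i+1,0) := by decide
lemma fadj34 : ∀ i : ZMod 7, (GGraph 7).Adj (i+3,0) (i+4,0) := by decide
lemma fadj45 : ∀ i : ZMod 7, (GGraph 7).Adj (i+4,0) (i+5,0) := by decide
lemma fnadj40 : ∀ i : ZMod 7, ¬ (GGraph 7).Adj (i+4,0) (i,0) := by decide
lemma fnadj41 : ∀ i : ZMod 7, ¬ (GGraph 7).Adj (i+4,0) (i+1,0) := by decide
lemma fnadj50 : ∀ i : ZMod 7, ¬ (GGraph 7).Adj (i+5,0) (i,0) := by decide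
lemma fnadj51 : ∀ i : ZMod 7, ¬ (GGraph 7).Adj (i+5,0) (i+1,0) := by decide
lemma fnadj02 : ∀ i : ZMod 7, ¬ (GGraph 7).Adj (i,0) (i+2,0) := by decide
lemma fnadj03 : ∀ i : ZMod 7, ¬ (GGraph 7).Adj (i,0) (i+3,0) := by decide
lemma fadjW : ∀ i : ZMod 7, (GGraph 7).Adj (i,0) (i,1) := by decide
lemma fadjWZ : ∀ i : ZMod 7, (GGraph 7).Adj (i,1) (i,2) := by decide
lemma fnadjW : ∀ i j : ZMod 7, i ≠ j → ¬ (GGraph 7).Adj (i,1) (j,0) := by decide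
lemma fnadjZ0 : ∀ i j : ZMod 7, ¬ (GGraph 7).Adj (i,0) (j,2) := by decide
lemma fneD : ∀ i j : ZMod 7, i ≠ j → ((i,0) : V7) ≠ (j,0) := by decide
lemma fne01 : ∀ i j : ZMod 7, ((i,0) : V7) ≠ (j,1) := by decide
lemma fne02 : ∀ i j : ZMod 7, ((i,0) : V7) ≠ (j,2) := by decide
lemma fne12 : ∀ i j : ZMod 7, ((i,1) : V7) ≠ (j,2) := by decide
lemma fne10 : ∀ i j : ZMod 7, ((i,1) : V7) ≠ (j,0) := by decide
lemma zne1 : ∀ i : ZMod 7, i ≠ i + 1 := by decide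
lemma zne2 : ∀ i : ZMod 7, i ≠ i + 2 := by decide
lemma zne3 : ∀ i : ZMod 7, i ≠ i + 3 := by decide
lemma zne1' : ∀ i : ZMod 7, i ≠ i - 1 := by decide
lemma zne2' : ∀ i : ZMod 7, i ≠ i - 2 := by decide
lemma zne12' : ∀ i : ZMod 7, i - 1 ≠ i - 2 := by decide
lemma zne12 : ∀ i : ZMod 7, i + 1 ≠ i + 2 := by decide
lemma fnadjD2 : ∀ i : ZMod 7, ¬ (GGraph 7).Adj (i-1,0) (i+1,0) := by decide
lemma fneD2 : ∀ i : ZMod 7, ((i-1,0) : V7) ≠ (i+1,0) := by decide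
lemma fadjN1A1 : ∀ i : ZMod 7, (GGraph 7).Adj (i-1,0) (i-2,0) := by decide
lemma fadjN2A2 : ∀ i : ZMod 7, (GGraph 7).Adj (i+1,0) (i+2,0) := by decide
lemma fnadjMA1 : ∀ i : ZMod 7, ¬ (GGraph 7).Adj (i,0) (i-2,0) := by decide
lemma fadjML : ∀ i : ZMod 7, (GGraph 7).Adj (i,0) (i-1,0) := by decide

variable {C : Cfg}

lemma trap {p q x : V7}
    (hp : C.kind p = false) (hq : C.kind q = false) (hx : C.kind x = false)
    (hpq : p ≠ q) (hadj : (GGraph 7).Adj p q)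
    (hxp : x ≠ p) (hxq : x ≠ q)
    (nxp : ¬ (GGraph 7).Adj x p) (nxq : ¬ (GGraph 7).Adj x q)
    (h1 : C.F p < C.F x) (h2 : C.F x < C.F q) : False := by
  have cross := (C.hPP p q hpq hp hq).1 hadj
  have e1 : ¬ ((C.F x - C.F p) * (C.T x - C.T p) ≤ 0) := by
    rw [← C.hPP x p hxp hx hp]; exact nxp
  have e2 : ¬ ((C.F x - C.F q) * (C.T x - C.T q) ≤ 0) := by
    rw [← C.hPP x q hxq hx hq]; exact nxq
  push_neg at e1 e2
  have t1 : C.T p < C.T x := sgn1 e1 h1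
  have t2 : C.T x < C.T q := sgn1' e2 h2
  have t3 : C.T q ≤ C.T p := sgn2 cross (lt_trans h1 h2)
  linarith

lemma lemmaM_aux (p q M N1 N2 A1 A2 w z : V7)
    (hp : C.kind p = false) (hq : C.kind q = false)
    (hM : C.kind M = true) (hN1 : C.kind N1 = true) (hN2 : C.kind N2 = true)
    (hpq : p ≠ q) (hadjpq : (GGraph 7).Adj p q)
    (hMN1 : M ≠ N1) (aMN1 : (GGraph 7).Adj M N1)
    (hMN2 : M ≠ N2) (aMN2 : (GGraph 7).Adj M N2)
    (hN1A1 : N1 ≠ A1) (aN1A1 : (GGraph 7).Adj N1 A1)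
    (hMA1 : M ≠ A1) (nMA1 : ¬ (GGraph 7).Adj M A1)
    (hN2A2 : N2 ≠ A2) (aN2A2 : (GGraph 7).Adj N2 A2)
    (hMA2 : M ≠ A2) (nMA2 : ¬ (GGraph 7).Adj M A2)
    (hMw : M ≠ w) (aMw : (GGraph 7).Adj M w)
    (hwz : w ≠ z) (awz : (GGraph 7).Adj w z)
    (hwN1 : w ≠ N1) (nwN1 : ¬ (GGraph 7).Adj w N1)
    (hwN2 : w ≠ N2) (nwN2 : ¬ (GGraph 7).Adj w N2)
    (hwp : w ≠ p) (hwq : w ≠ q)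
    (nwp : ¬ (GGraph 7).Adj w p) (nwq : ¬ (GGraph 7).Adj w q)
    (hMz : M ≠ z) (nMz : ¬ (GGraph 7).Adj M z)
    (horder : C.R N1 < C.L N2)
    (htrap1 : C.F p < C.L M) (htrap2 : C.R M < C.F q) : False := by
  have oMN1 := (C.hII M N1 hMN1 hM hN1).1 aMN1
  have oMN2 := (C.hII M N2 hMN2 hM hN2).1 aMN2
  cases hw : C.kind w
  · -- w is a permutation segment: its foot lies in M, trapped
    have hf := (C.hIP M w hMw hM hw).1 aMw
    exact trap hp hq hw hpq hadjpq hwp hwq nwp nwq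
      (by linarith [hf.1]) (by linarith [hf.2])
  · -- w is an interval
    by_cases hstick1 : C.L M < C.L N1
    · -- N1 ⊆ M : anchor A1 would be adjacent to M
      have hsub : C.R N1 ≤ C.R M := by linarith [oMN2.2]
      cases ha : C.kind A1
      · have hf := (C.hIP N1 A1 hN1A1 hN1 ha).1 aN1A1
        exact nMA1 ((C.hIP M A1 hMA1 hM ha).2
          ⟨by linarith [hf.1], by linarith [hf.2]⟩)
      · have hov := (C.hII N1 A1 hN1A1 hN1 ha).1 aN1A1
        rcases not_and_or.1 ((C.hII M A1 hMA1 hM ha).not.1 nMA1) with h' | h'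
        · push_neg at h'; linarith [hov.1]
        · push_neg at h'; linarith [hov.2]
    · by_cases hstick2 : C.R N2 < C.R M
      · -- N2 ⊆ M : anchor A2
        have hsub : C.L M ≤ C.L N2 := by linarith [oMN1.1]
        cases ha : C.kind A2
        · have hf := (C.hIP N2 A2 hN2A2 hN2 ha).1 aN2A2
          exact nMA2 ((C.hIP M A2 hMA2 hM ha).2
            ⟨by linarith [hf.1], by linarith [hf.2]⟩)
        · have hov := (C.hII N2 A2 hN2A2 hN2 ha).1 aN2A2
          rcases not_and_or.1 ((C.hII M A2 hMA2 hM ha).not.1 nMA2) with h' | h'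
          · push_neg at h'; linarith [hov.1]
          · push_neg at h'; linarith [hov.2]
      · -- M is confined between its neighbours
        push_neg at hstick1 hstick2
        have owM := (C.hII M w hMw hM hw).1 aMw
        have hw1 : C.R N1 < C.L w := by
          rcases not_and_or.1 ((C.hII w N1 hwN1 hw hN1).not.1 nwN1) with h' | h'
          · push_neg at h'; exact h'
          · push_neg at h'; exfalso; linarith [owM.1]
        have hw2 : C.R w < C.L N2 := by
          rcases not_and_or.1 ((C.hII w N2 hwN2 hw hN2).not.1 nwN2) with h' | h'
          · push_neg at h'; exfalso; linarith [owM.2]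
          · push_neg at h'; exact h'
        cases hz : C.kind z
        · have hf := (C.hIP w z hwz hw hz).1 awz
          exact nMz ((C.hIP M z hMz hM hz).2
            ⟨by linarith [oMN1.1, hf.1], by linarith [oMN2.2, hf.2]⟩)
        · have ozw := (C.hII w z hwz hw hz).1 awz
          rcases not_and_or.1 ((C.hII M z hMz hM hz).not.1 nMz) with h' | h'
          · push_neg at h'; linarith [ozw.1, oMN1.1]
          · push_neg at h'; linarith [ozw.2, oMN2.2]

lemma lemmaM (pi qi m : ZMod 7)
    (hp : C.kind (pi,0) = false) (hq : C.kind (qi,0) = false)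
    (hM : C.kind (m,0) = true)
    (hNl : C.kind (m-1,0) = true) (hNr : C.kind (m+1,0) = true)
    (hpq : pi ≠ qi) (hadjpq : (GGraph 7).Adj (pi,0) (qi,0))
    (hmp : m ≠ pi) (hmq : m ≠ qi)
    (htrap1 : C.F (pi,0) < C.L (m,0)) (htrap2 : C.R (m,0) < C.F (qi,0)) : False := by
  have hdisj := not_and_or.1 ((C.hII (m-1,0) (m+1,0) (fneD2 m) hNl hNr).not.1 (fnadjD2 m))
  have e1 : m + 1 + 1 = m + 2 := by ring
  have e2 : m - 1 - 1 = m - 2 := by ring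
  rcases hdisj with h' | h'
  · -- ¬ (L N1 ≤ R N2): so R N2 < L N1, i.e. (m+1) is left of (m-1)
    push_neg at h'
    refine lemmaM_aux (pi,0) (qi,0) (m,0) (m+1,0) (m-1,0) (m+2,0) (m-2,0) (m,1) (m,2)
      hp hq hM hNr hNl (fneD pi qi hpq) hadjpq
      (fneD m (m+1) (zne1 m)) (fadj1 m)
      (fneD m (m-1) (zne1' m)) (fadjML m)
      (fneD (m+1) (m+2) (zne12 m)) (by rw [← e1]; exact fadj1 (m+1))
      (fneD m (m+2) (zne2 m)) (fnadj02 m)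
      (fneD (m-1) (m-2) (zne12' m)) (by rw [← e2]; exact fadjML (m-1))
      (fneD m (m-2) (zne2' m)) (fnadjMA1 m)
      (fne01 m m) (fadjW m)
      (fne12 m m) (fadjWZ m)
      (fne10 m (m+1)) (fnadjW m (m+1) (zne1 m))
      (fne10 m (m-1)) (fnadjW m (m-1) (zne1' m))
      (fne10 m pi) (fne10 m qi)
      (fnadjW m pi hmp) (fnadjW m qi hmq)
      (fne02 m m) (fnadjZ0 m m)
      h' htrap1 htrap2
  · -- R N1 < L N2 : standard orientation
    push_neg at h'
    refine lemmaM_aux (pi,0) (qi,0) (m,0) (m-1,0) (m+1,0) (m-2,0) (m+2,0) (m,1) (m,2)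
      hp hq hM hNl hNr (fneD pi qi hpq) hadjpq
      (fneD m (m-1) (zne1' m)) (fadjML m)
      (fneD m (m+1) (zne1 m)) (fadj1 m)
      (fneD (m-1) (m-2) (zne12' m)) (by rw [← e2]; exact fadjML (m-1))
      (fneD m (m-2) (zne2' m)) (fnadjMA1 m)
      (fneD (m+1) (m+2) (zne12 m)) (by rw [← e1]; exact fadj1 (m+1))
      (fneD m (m+2) (zne2 m)) (fnadj02 m)
      (fne01 m m) (fadjW m)
      (fne12 m m) (fadjWZ m)
      (fne10 m (m-1)) (fnadjW m (m-1) (zne1' m))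
      (fne10 m (m+1)) (fnadjW m (m+1) (zne1 m))
      (fne10 m pi) (fne10 m qi)
      (fnadjW m pi hmp) (fnadjW m qi hmq)
      (fne02 m m) (fnadjZ0 m m)
      h' htrap1 htrap2

end Cfg
end IPCore
namespace IPCore
namespace Cfg

variable {C : Cfg}

lemma zc30 : ∀ i : ZMod 7, i + 3 ≠ i := by decide
lemma zc31 : ∀ i : ZMod 7, i + 3 ≠ i + 1 := by decide
lemma zc40 : ∀ i : ZMod 7, i + 4 ≠ i := by decide
lemma zc41 : ∀ i : ZMod 7, i + 4 ≠ i + 1 := by decide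
lemma zc50 : ∀ i : ZMod 7, i + 5 ≠ i := by decide
lemma zc51 : ∀ i : ZMod 7, i + 5 ≠ i + 1 := by decide

/-- The key "stuck configuration": perms at i, i+1 crossing, interval at i+3
trapped between their feet is always contradictory (pendant paths). -/
lemma E1 (i : ZMod 7)
    (hki : C.kind (i,0) = false) (hki1 : C.kind (i+1,0) = false)
    (hki3 : C.kind (i+3,0) = true)
    (h1 : C.Rel (i,0) (i+3,0)) (h2 : C.Rel (i+3,0) (i+1,0)) : False := by
  have htrap1 : C.F (i,0) < C.L (i+3,0) := by
    have := h1.1; rwa [rho_P hki, lam_I hki3] at this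
  have htrap2 : C.R (i+3,0) < C.F (i+1,0) := by
    have := h2.1; rwa [rho_I hki3, lam_P hki1] at this
  have hadjpq := fadj1 i
  have hpqne : i ≠ i + 1 := zne1 i
  have e43 : i + 3 + 1 = i + 4 := by ring
  have e42 : i + 3 - 1 = i + 2 := by ring
  have e54 : i + 4 + 1 = i + 5 := by ring
  have e44 : i + 4 - 1 = i + 3 := by ring
  have hne34 : ((i+3,0) : V7) ≠ (i+4,0) := by
    rw [← e43]; exact fneD _ _ (zne1 (i+3))
  cases hk4 : C.kind (i+4,0)
  · -- perm at i+4: its foot lies in the trapped interval (i+3)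
    have hf := (C.hIP (i+3,0) (i+4,0) hne34 hki3 hk4).1 (fadj34 i)
    exact trap hki hki1 hk4 (fneD i (i+1) hpqne) hadjpq
      (fneD (i+4) i (zc40 i)) (fneD (i+4) (i+1) (zc41 i))
      (fnadj40 i) (fnadj41 i) (by linarith [hf.1]) (by linarith [hf.2])
  · -- interval at i+4: it is trapped as well
    have o34 := (C.hII (i+3,0) (i+4,0) hne34 hki3 hk4).1 (fadj34 i)
    have hL4 : C.F (i,0) < C.L (i+4,0) := by
      rcases not_and_or.1 ((C.hIP (i+4,0) (i,0) (fneD _ _ (zc40 i)) hk4 hki).not.1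
        (fnadj40 i)) with h' | h'
      · push_neg at h'; exact h'
      · push_neg at h'; exfalso; linarith [o34.1]
    have hR4 : C.R (i+4,0) < C.F (i+1,0) := by
      rcases not_and_or.1 ((C.hIP (i+4,0) (i+1,0) (fneD _ _ (zc41 i)) hk4 hki1).not.1
        (fnadj41 i)) with h' | h'
      · push_neg at h'; exfalso; linarith [o34.2]
      · push_neg at h'; exact h'
    cases hk2 : C.kind (i+2,0)
    · -- perm at i+2 : look further right
      cases hk5 : C.kind (i+5,0)
      · -- perm at i+5: its foot lies in the trapped interval (i+4)
        have hne45 : ((i+4,0) : V7) ≠ (i+5,0) := by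
          rw [← e54]; exact fneD _ _ (zne1 (i+4))
        have hf := (C.hIP (i+4,0) (i+5,0) hne45 hk4 hk5).1 (fadj45 i)
        exact trap hki hki1 hk5 (fneD i (i+1) hpqne) hadjpq
          (fneD (i+5) i (zc50 i)) (fneD (i+5) (i+1) (zc51 i))
          (fnadj50 i) (fnadj51 i) (by linarith [hf.1]) (by linarith [hf.2])
      · -- intervals at i+3, i+4, i+5 : middle-interval lemma at m = i+4
        refine lemmaM i (i+1) (i+4) hki hki1 hk4 ?_ ?_ hpqne hadjpq
          (zc40 i) (zc41 i) hL4 hR4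
        · rw [e44]; exact hki3
        · rw [e54]; exact hk5
    · -- intervals at i+2, i+3, i+4 : middle-interval lemma at m = i+3
      refine lemmaM i (i+1) (i+3) hki hki1 hki3 ?_ ?_ hpqne hadjpq
        (zc30 i) (zc31 i) htrap1 htrap2
      · rw [e42]; exact hk2
      · rw [e43]; exact hk4

lemma chain1 (i : ZMod 7)
    (h1 : C.Rel (i,0) (i+3,0)) (h2 : C.Rel (i+3,0) (i+1,0)) : False := by
  by_cases hc : C.kind (i+3,0) = true ∧ C.kind (i,0) = false ∧ C.kind (i+1,0) = false
  · exact E1 i hc.2.1 hc.2.2 hc.1 h1 h2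
  · have hR : C.Rel (i,0) (i+1,0) := by
      refine ⟨lt_trans (lt_of_lt_of_le h1.1 (lam_le_rho (i+3,0))) h2.1, ?_⟩
      intro hu hw
      have hk3 : C.kind (i+3,0) = false := by
        cases h3 : C.kind (i+3,0)
        · rfl
        · exact absurd ⟨h3, hu, hw⟩ hc
      exact lt_trans (h1.2 hu hk3) (h2.2 hk3 hw)
    exact not_rel_of_adj (fneD i (i+1) (zne1 i)) (fadj1 i) hR

lemma chain2 (i : ZMod 7)
    (h1 : C.Rel (i+3,0) (i,0)) (h2 : C.Rel (i,0) (i+2,0)) : False := by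
  apply chain1 (C := C.reflect (i+3)) 0
  · rw [reflect_rel]
    have e1 : i + 3 - (0 : ZMod 7) = i + 3 := by ring
    have e2 : i + 3 - ((0 : ZMod 7) + 3) = i := by ring
    rw [e1, e2]; exact h1
  · rw [reflect_rel]
    have e2 : i + 3 - ((0 : ZMod 7) + 3) = i := by ring
    have e3 : i + 3 - ((0 : ZMod 7) + 1) = i + 2 := by ring
    rw [e2, e3]; exact h2

lemma chain3 (i : ZMod 7)
    (h1 : C.Rel (i+2,0) (i,0)) (h2 : C.Rel (i,0) (i+3,0)) : False :=
  chain2 (C := C.mirror) i ((C.mirror_rel _ _).2 h2) ((C.mirror_rel _ _).2 h1)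

lemma chain4 (i : ZMod 7)
    (h1 : C.Rel (i+1,0) (i+3,0)) (h2 : C.Rel (i+3,0) (i,0)) : False :=
  chain1 (C := C.mirror) i ((C.mirror_rel _ _).2 h2) ((C.mirror_rel _ _).2 h1)

lemma step_fwd (i : ZMod 7) (hx : C.Rel (i,0) (i+2,0)) : C.Rel (i+1,0) (i+3,0) := by
  have e : i + 1 + 2 = i + 3 := by ring
  rcases rel_or_rel (C := C) (u := ((i+1,0) : V7)) (v := ((i+3,0) : V7))
      (by rw [← e]; exact fneD _ _ (zne2 (i+1))) (by rw [← e]; exact fnadj02 (i+1)) with h | h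
  · exact h
  · exfalso
    rcases rel_or_rel (C := C) (u := ((i,0) : V7)) (v := ((i+3,0) : V7))
        (fneD _ _ (zne3 i)) (fnadj03 i) with h' | h'
    · exact chain1 i h' h
    · exact chain2 i h' hx

lemma step_bwd (i : ZMod 7) (hx : C.Rel (i+1,0) (i+3,0)) : C.Rel (i,0) (i+2,0) := by
  rcases rel_or_rel (C := C) (u := ((i,0) : V7)) (v := ((i+2,0) : V7))
      (fneD _ _ (zne2 i)) (fnadj02 i) with h | h
  · exact h
  · exfalso
    rcases rel_or_rel (C := C) (u := ((i,0) : V7)) (v := ((i+3,0) : V7))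
        (fneD _ _ (zne3 i)) (fnadj03 i) with h' | h'
    · exact chain3 i h h'
    · exact chain4 i hx h'

lemma noX (h0 : C.Rel (0,0) (2,0)) : False := by
  have s : ∀ i : ZMod 7, C.Rel (i,0) (i+2,0) → C.Rel (i+1,0) (i+3,0) := fun i => step_fwd i
  have c0 : C.Rel (0,0) ((0:ZMod 7)+2,0) := by
    rw [show ((0:ZMod 7)+2) = 2 from by decide]; exact h0
  have c1 := s 0 c0
  have c1' : C.Rel (1,0) ((1:ZMod 7)+2,0) := by
    rw [show ((1:ZMod 7)+2) = (0:ZMod 7)+3 from by decide,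
        show (1:ZMod 7) = (0:ZMod 7)+1 from by decide]
    exact c1
  have c2 := s 1 c1'
  have c2' : C.Rel (2,0) ((2:ZMod 7)+2,0) := by
    rw [show ((2:ZMod 7)+2) = (1:ZMod 7)+3 from by decide,
        show (2:ZMod 7) = (1:ZMod 7)+1 from by decide]
    exact c2
  have c3 := s 2 c2'
  have c3' : C.Rel (3,0) ((3:ZMod 7)+2,0) := by
    rw [show ((3:ZMod 7)+2) = (2:ZMod 7)+3 from by decide,
        show (3:ZMod 7) = (2:ZMod 7)+1 from by decide]
    exact c3
  have c4 := s 3 c3'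
  have c4' : C.Rel (4,0) ((4:ZMod 7)+2,0) := by
    rw [show ((4:ZMod 7)+2) = (3:ZMod 7)+3 from by decide,
        show (4:ZMod 7) = (3:ZMod 7)+1 from by decide]
    exact c4
  have c5 := s 4 c4'
  have c5' : C.Rel (5,0) ((5:ZMod 7)+2,0) := by
    rw [show ((5:ZMod 7)+2) = (4:ZMod 7)+3 from by decide,
        show (5:ZMod 7) = (4:ZMod 7)+1 from by decide]
    exact c5
  have c6 := s 5 c5'
  have mono : ∀ u v : V7, C.Rel u v → C.rho u < C.rho v :=
    fun u v h => lt_of_lt_of_le h.1 (lam_le_rho v)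
  have m0 := mono _ _ c0
  have m1 := mono _ _ c1
  have m2 := mono _ _ c2
  have m3 := mono _ _ c3
  have m4 := mono _ _ c4
  have m5 := mono _ _ c5
  have m6 := mono _ _ c6
  rw [show ((0:ZMod 7)+2) = 2 from by decide] at m0
  rw [show ((0:ZMod 7)+1) = 1 from by decide, show ((0:ZMod 7)+3) = 3 from by decide] at m1
  rw [show ((1:ZMod 7)+1) = 2 from by decide, show ((1:ZMod 7)+3) = 4 from by decide] at m2
  rw [show ((2:ZMod 7)+1) = 3 from by decide, show ((2:ZMod 7)+3) = 5 from by decide] at m3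
  rw [show ((3:ZMod 7)+1) = 4 from by decide, show ((3:ZMod 7)+3) = 6 from by decide] at m4
  rw [show ((4:ZMod 7)+1) = 5 from by decide, show ((4:ZMod 7)+3) = 0 from by decide] at m5
  rw [show ((5:ZMod 7)+1) = 6 from by decide, show ((5:ZMod 7)+3) = 1 from by decide] at m6
  linarith

theorem elim' (C : Cfg) : False := by
  rcases rel_or_rel (C := C) (u := ((0,0) : V7)) (v := ((2,0) : V7))
      (by decide) (by decide) with h | h
  · exact noX h
  · exact noX (C := C.mirror) ((C.mirror_rel _ _).2 h)

end Cfg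
end IPCore
namespace IPCore
open IPGeo

theorem no_star (s : V7 → IPSeg) (hstar : IsIPSEGStarModel (GGraph 7) s) : False := by
  classical
  obtain ⟨hmodel, c, hc, hline⟩ := hstar
  set c' : ℝ := if c = 1 then 2 else 1 with hc'def
  have hcc' : c ≠ c' := by
    rcases hc with h | h <;> rw [hc'def, h] <;> norm_num
  have other : ∀ x : ℝ, (x = 1 ∨ x = 2) → x ≠ c → x = c' := by
    intro x hx hxc
    rcases hc with h | h
    · rcases hx with h2 | h2
      · exact absurd (h2.trans h.symm) hxc
      · rw [h2, hc'def, h]; norm_num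
    · rcases hx with h2 | h2
      · rw [h2, hc'def, h]; norm_num
      · exact absurd (h2.trans h.symm) hxc
  have hIcar : ∀ v : V7, (s v).IsInterval →
      (s v).carrier = segment ℝ ((s v).p.1, c) ((s v).q.1, c) := by
    intro v hv
    have hp : (s v).p.2 = c := hline v hv
    have hq : (s v).q.2 = c := by rw [← hv]; exact hp
    unfold IPSeg.carrier
    rw [show (s v).p = ((s v).p.1, c) from by rw [← hp],
        show (s v).q = ((s v).q.1, c) from by rw [← hq]]
  set Fv : V7 → ℝ := fun v => if (s v).p.2 = c then (s v).p.1 else (s v).q.1 with hFdef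
  set Tv : V7 → ℝ := fun v => if (s v).p.2 = c then (s v).q.1 else (s v).p.1 with hTdef
  have hPcar : ∀ v : V7, ¬ (s v).IsInterval →
      (s v).carrier = segment ℝ (Fv v, c) (Tv v, c') := by
    intro v hv
    unfold IPSeg.carrier
    by_cases hp : (s v).p.2 = c
    · have hq2 : (s v).q.2 ≠ c := fun hq => hv (hp.trans hq.symm)
      have hq : (s v).q.2 = c' := other _ (s v).hq hq2
      rw [hFdef, hTdef]
      simp only [if_pos hp]
      rw [show (s v).p = ((s v).p.1, c) from by rw [← hp],
          show (s v).q = ((s v).q.1, c') from by rw [← hq]]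
    · have hp2 : (s v).p.2 = c' := other _ (s v).hp hp
      have hq : (s v).q.2 = c := by
        by_contra hq
        exact hv (hp2.trans (other _ (s v).hq hq).symm)
      rw [hFdef, hTdef]
      simp only [if_neg hp]
      rw [show (s v).p = ((s v).p.1, c') from by rw [← hp2],
          show (s v).q = ((s v).q.1, c) from by rw [← hq]]
      exact segment_symm ℝ _ _
  refine Cfg.elim' ⟨fun v => decide ((s v).IsInterval),
      fun v => min (s v).p.1 (s v).q.1,
      fun v => max (s v).p.1 (s v).q.1,
      Fv, Tv, fun v _ => min_le_max, ?_, ?_, ?_⟩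
  · intro u v hne hu hv
    rw [hmodel u v hne, hIcar u (of_decide_eq_true hu), hIcar v (of_decide_eq_true hv),
      horiz_inter_horiz]
  · intro u v hne hu hv
    rw [hmodel u v hne, hIcar u (of_decide_eq_true hu),
      hPcar v (of_decide_eq_false hv), horiz_inter_trans hcc']
  · intro u v hne hu hv
    rw [hmodel u v hne, hPcar u (of_decide_eq_false hu),
      hPcar v (of_decide_eq_false hv), trans_inter_trans hcc']

end IPCore

/-- The graph `G₇` is an IP-SEG graph. Consequently the class of IP-SEG* graphs is
properly contained in the class of IP-SEG graphs: every IP-SEG* graph is IP-SEG, and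
some (finite) IP-SEG graph is not an IP-SEG* graph. -/
theorem G7_ipseg_and_proper_containment :
    (∃ s : ZMod 7 × Fin 3 → IPSeg, IsIPSEGModel (GGraph 7) s) ∧
    (∀ (V : Type) (G : SimpleGraph V),
      (∃ s : V → IPSeg, IsIPSEGStarModel G s) → ∃ s : V → IPSeg, IsIPSEGModel G s) ∧
    (∃ (V : Type) (_ : Fintype V) (G : SimpleGraph V),
      (∃ s : V → IPSeg, IsIPSEGModel G s) ∧ ¬ ∃ s : V → IPSeg, IsIPSEGStarModel G s) := by
  refine ⟨⟨fun v => IPModel.mk (IPModel.datG7 v), IPModel.G7_model⟩, ?_, ?_⟩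
  · rintro V G ⟨s, hs, -⟩
    exact ⟨s, hs⟩
  · refine ⟨ZMod 7 × Fin 3, inferInstance, GGraph 7,
      ⟨fun v => IPModel.mk (IPModel.datG7 v), IPModel.G7_model⟩, ?_⟩
    rintro ⟨s, hstar⟩
    exact IPCore.no_star s hstar
end
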